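/- arXiv:2302.14414 — 15 statements merged into one kernel-verified Lean document; each statement's English description precedes it below -/
import Mathlib

section
/- Let X be a real Banach space, κ an infinite cardinal. If X is κ-almost square (for every set A ⊂ S_X of cardinality < κ and every ε > 0 there is y ∈ S_X with ‖x ± y‖ ≤ 1 + ε for all x ∈ A), then X has the κ-SSD2P: for every set A ⊂ S_{X*} of cardinality < κ and ε > 0 there exist B ⊂ B_X which (1−ε)-norms A and y ∈ B_X with B ± y ⊂ B_X and ‖y‖ ≥ 1 − ε. -/
open Cardinal Metric Filter Topology NormedSpace
open scoped ENNReal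
universe u
noncomputable section

/-- A Banach space `X` has the `κ`-SSD2P if for every set `A` of norm-one functionals of
cardinality `< κ` and every `ε > 0` there are `B ⊆ B_X` which `(1-ε)`-norms `A` and
`y ∈ B_X` with `B ± y ⊆ B_X` and `‖y‖ ≥ 1 - ε`. -/
def SSD2P (κ : Cardinal.{u}) (X : Type u) [NormedAddCommGroup X] [NormedSpace ℝ X] : Prop :=
  ∀ A : Set (StrongDual ℝ X), (∀ f ∈ A, ‖f‖ = 1) → #A < κ → ∀ ε : ℝ, 0 < ε →
    ∃ (B : Set X) (y : X), B ⊆ closedBall 0 1 ∧ y ∈ closedBall (0 : X) 1 ∧ 1 - ε ≤ ‖y‖ ∧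
      (∀ x ∈ B, x + y ∈ closedBall (0 : X) 1 ∧ x - y ∈ closedBall (0 : X) 1) ∧
      (∀ f ∈ A, ∃ x ∈ B, 1 - ε ≤ f x)

/-- Every norm-one functional nearly attains its norm on the unit sphere. -/
lemma exists_sphere_apply {X : Type u} [NormedAddCommGroup X] [NormedSpace ℝ X]
    (f : StrongDual ℝ X) (hf : ‖f‖ = 1) {δ : ℝ} (hδ0 : 0 < δ) (hδ1 : δ ≤ 1 / 2) :
    ∃ x, ‖x‖ = 1 ∧ 1 - δ ≤ f x := by
  have h1 : (1 : ℝ) - δ < ‖f‖ := by rw [hf]; linarith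
  obtain ⟨x, hx1, hx2⟩ := f.exists_lt_apply_of_lt_opNorm h1
  set z : X := if 0 ≤ f x then x else -x with hz
  have hfz : f z = ‖f x‖ := by
    rw [hz]
    split_ifs with h
    · rw [Real.norm_eq_abs, abs_of_nonneg h]
    · rw [map_neg, Real.norm_eq_abs, abs_of_neg (lt_of_not_ge h)]
  have hzn : ‖z‖ = ‖x‖ := by rw [hz]; split_ifs <;> simp
  have hfz' : 1 - δ < f z := by rw [hfz]; exact hx2
  have hfz0 : 0 < f z := by linarith
  have hz0 : z ≠ 0 := by intro h; rw [h, map_zero] at hfz0; exact lt_irrefl 0 hfz0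
  have hzn0 : 0 < ‖z‖ := norm_pos_iff.mpr hz0
  have hzlt : ‖z‖ < 1 := by rw [hzn]; exact hx1
  refine ⟨‖z‖⁻¹ • z, ?_, ?_⟩
  · rw [norm_smul, norm_inv, norm_norm, inv_mul_cancel₀ hzn0.ne']
  · have heq : f (‖z‖⁻¹ • z) = ‖z‖⁻¹ * f z := by rw [map_smul, smul_eq_mul]
    rw [heq]
    have hmul : ‖z‖ * ‖z‖⁻¹ = 1 := mul_inv_cancel₀ hzn0.ne'
    have hip : (0:ℝ) < ‖z‖⁻¹ := inv_pos.mpr hzn0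
    nlinarith

set_option maxHeartbeats 1000000 in
/-- Every `κ`-almost square Banach space has the `κ`-SSD2P. -/
theorem SSD2P_of_ASQ {X : Type u} [NormedAddCommGroup X] [NormedSpace ℝ X] [CompleteSpace X]
    (κ : Cardinal.{u}) (hκ : ℵ₀ ≤ κ)
    (hasq : ∀ A : Set X, A ⊆ sphere (0 : X) 1 → #A < κ → ∀ ε : ℝ, 0 < ε →
      ∃ y ∈ sphere (0 : X) 1, ∀ x ∈ A, ‖x + y‖ ≤ 1 + ε ∧ ‖x - y‖ ≤ 1 + ε) :
    SSD2P κ X := by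
  intro A hA hAcard ε hε
  set δ : ℝ := min (ε / 2) (1 / 2) with hδdef
  have hδ0 : 0 < δ := lt_min (by linarith) (by norm_num)
  have hδε : δ ≤ ε / 2 := min_le_left _ _
  have hδh : δ ≤ 1 / 2 := min_le_right _ _
  -- choose nearly norming points
  have hchoice : ∀ f : A, ∃ x, ‖x‖ = 1 ∧ 1 - δ ≤ (f : StrongDual ℝ X) x :=
    fun f => exists_sphere_apply (f := (f : StrongDual ℝ X)) (hA f f.2) hδ0 hδh
  choose g hg1 hg2 using hchoice
  have hrange : Set.range g ⊆ sphere (0 : X) 1 := by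
    rintro _ ⟨f, rfl⟩
    simpa [mem_sphere_iff_norm] using hg1 f
  have hrcard : #(Set.range g) < κ := lt_of_le_of_lt Cardinal.mk_range_le hAcard
  obtain ⟨y, hy, hyall⟩ := hasq (Set.range g) hrange hrcard δ hδ0
  have hyn : ‖y‖ = 1 := by simpa [mem_sphere_iff_norm] using hy
  have h1δ : (0 : ℝ) < 1 + δ := by linarith
  have hinv_pos : (0 : ℝ) < (1 + δ)⁻¹ := inv_pos.mpr h1δ
  have hinv_le : (1 + δ)⁻¹ ≤ 1 := by
    rw [inv_le_one_iff₀]; right; linarith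
  refine ⟨(fun x => (1 + δ)⁻¹ • x) '' Set.range g, (1 + δ)⁻¹ • y, ?_, ?_, ?_, ?_, ?_⟩
  · rintro _ ⟨x, hx, rfl⟩
    have hxn : ‖x‖ = 1 := by simpa [mem_sphere_iff_norm] using hrange hx
    rw [mem_closedBall_zero_iff, norm_smul, hxn, norm_inv, Real.norm_eq_abs,
      abs_of_pos h1δ, mul_one]
    exact hinv_le
  · rw [mem_closedBall_zero_iff, norm_smul, hyn, norm_inv, Real.norm_eq_abs,
      abs_of_pos h1δ, mul_one]
    exact hinv_le
  · rw [norm_smul, hyn, norm_inv, Real.norm_eq_abs, abs_of_pos h1δ, mul_one]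
    have hmul : (1 + δ) * (1 + δ)⁻¹ = 1 := mul_inv_cancel₀ h1δ.ne'
    nlinarith
  · rintro _ ⟨x, hx, rfl⟩
    obtain ⟨h1, h2⟩ := hyall x hx
    constructor
    · rw [mem_closedBall_zero_iff, ← smul_add, norm_smul, norm_inv, Real.norm_eq_abs,
        abs_of_pos h1δ]
      rw [inv_mul_le_iff₀ h1δ, mul_one]
      exact h1
    · rw [mem_closedBall_zero_iff, ← smul_sub, norm_smul, norm_inv, Real.norm_eq_abs,
        abs_of_pos h1δ]
      rw [inv_mul_le_iff₀ h1δ, mul_one]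
      exact h2
  · intro f hf
    refine ⟨(1 + δ)⁻¹ • g ⟨f, hf⟩, ⟨g ⟨f, hf⟩, Set.mem_range_self _, rfl⟩, ?_⟩
    have : f ((1 + δ)⁻¹ • g ⟨f, hf⟩) = (1 + δ)⁻¹ * f (g ⟨f, hf⟩) := by
      rw [map_smul, smul_eq_mul]
    rw [this]
    have h2 := hg2 ⟨f, hf⟩
    have hmul : (1 + δ) * (1 + δ)⁻¹ = 1 := mul_inv_cancel₀ h1δ.ne'
    have hstep := mul_le_mul_of_nonneg_left h2 hinv_pos.le
    nlinarith
end
end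

section
/- Let (Xₙ) be a sequence of real Banach spaces and κ > ℵ₀ a cardinal. Suppose that for every r ∈ [0,1) there is n ∈ ℕ such that for every set A ⊂ S_{Xₙ*} of cardinality < κ there exist B ⊂ B_{Xₙ} and y ∈ B_{Xₙ} with ‖y‖ ≥ r, B r-norms A, and B ± y ⊂ B_{Xₙ}. Then the c₀-sum c₀(ℕ, Xₙ) has the κ-SSD2P. -/
open Cardinal Metric Filter Topology NormedSpace
open scoped ENNReal
universe u
noncomputable section

/-- The `c₀`-sum of a sequence of normed spaces, as a submodule of `lp X ∞`. -/
def c0Set (X : ℕ → Type u) [∀ n, NormedAddCommGroup (X n)] [∀ n, NormedSpace ℝ (X n)] :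
    Submodule ℝ (lp X ∞) where
  carrier := {x | Tendsto (fun n => ‖x n‖) atTop (𝓝 0)}
  zero_mem' := by simp [tendsto_const_nhds]
  add_mem' := by
    intro x y hx hy
    have h := hx.add hy
    simp only [add_zero] at h
    refine squeeze_zero (fun n => norm_nonneg _) (fun n => ?_) h
    simp [norm_add_le]
  smul_mem' := by
    intro c x hx
    have h := hx.const_mul (‖c‖)
    simp only [mul_zero] at h
    refine squeeze_zero (fun n => norm_nonneg _) (fun n => ?_) h
    simp [norm_smul, mul_comm]

/-- The `c₀`-sum `c₀(ℕ, Xₙ)` with the supremum norm. -/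
abbrev c0Sum (X : ℕ → Type u) [∀ n, NormedAddCommGroup (X n)] [∀ n, NormedSpace ℝ (X n)] :
    Type u :=
  (c0Set X : Submodule ℝ (lp X ∞))

variable {X : ℕ → Type u} [∀ n, NormedAddCommGroup (X n)] [∀ n, NormedSpace ℝ (X n)]

theorem lp_single_add (n : ℕ) (a b : X n) :
    lp.single ∞ n (a + b) = lp.single ∞ n a + lp.single ∞ n b := by
  apply lp.ext
  rw [lp.coeFn_add]
  funext k
  by_cases hk : k = n
  · subst hk; simp [lp.single_apply_self]
  · simp [lp.single_apply_ne _ _ _ hk]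

theorem lp_norm_single (n : ℕ) (a : X n) : ‖lp.single ∞ n a‖ = ‖a‖ := by
  refine le_antisymm (lp.norm_le_of_forall_le (norm_nonneg a) fun k => ?_) ?_
  · by_cases hk : k = n
    · subst hk; simp [lp.single_apply_self]
    · simp [lp.single_apply_ne _ _ _ hk, Pi.single_eq_of_ne hk]
  · have := lp.norm_apply_le_norm ENNReal.top_ne_zero (lp.single ∞ n a) n
    rwa [lp.single_apply_self] at this

theorem single_mem_c0Set (n : ℕ) (a : X n) : lp.single ∞ n a ∈ c0Set X := by
  have : ∀ᶠ k in atTop, ‖(lp.single ∞ n a : ∀ i, X i) k‖ = 0 := by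
    filter_upwards [Filter.eventually_gt_atTop n] with k hk
    simp [lp.single_apply_ne _ _ _ (Nat.ne_of_gt hk), Pi.single_eq_of_ne (Nat.ne_of_gt hk)]
  exact Tendsto.congr' (by filter_upwards [this] with k hk; exact hk.symm) tendsto_const_nhds

/-- Coordinate embedding `X n → c0Sum X`. -/
def c0single (X : ℕ → Type u) [∀ n, NormedAddCommGroup (X n)] [∀ n, NormedSpace ℝ (X n)]
    (n : ℕ) : X n →L[ℝ] c0Sum X :=
  LinearMap.mkContinuous
    { toFun := fun a => ⟨lp.single ∞ n a, single_mem_c0Set n a⟩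
      map_add' := fun a b => by
        apply Subtype.ext
        exact lp_single_add n a b
      map_smul' := fun c a => by
        apply Subtype.ext
        exact (lp.single_smul ∞ n c a) } 1
    (fun a => by simpa [lp_norm_single] using le_rfl)

theorem norm_c0single (n : ℕ) (a : X n) : ‖c0single X n a‖ = ‖a‖ := lp_norm_single n a

theorem norm_c0single_le (n : ℕ) : ‖c0single X n‖ ≤ 1 :=
  LinearMap.mkContinuous_norm_le _ zero_le_one _

theorem coord_bound {x : lp X ∞} (hx : ‖x‖ ≤ 1) {n : ℕ} {b : X n} (hb : ‖b‖ ≤ 1) :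
    ‖x - lp.single ∞ n (x n) + lp.single ∞ n b‖ ≤ 1 := by
  refine lp.norm_le_of_forall_le zero_le_one fun k => ?_
  simp only [lp.coeFn_add, lp.coeFn_sub, Pi.add_apply, Pi.sub_apply]
  by_cases hk : k = n
  · subst hk
    rw [lp.single_apply_self, lp.single_apply_self, sub_self, zero_add]
    exact hb
  · rw [lp.single_apply_ne _ _ _ hk, lp.single_apply_ne _ _ _ hk, sub_zero, add_zero]
    exact (lp.norm_apply_le_norm ENNReal.top_ne_zero x k).trans hx

theorem lp_single_sub (n : ℕ) (a b : X n) :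
    lp.single ∞ n (a - b) = lp.single ∞ n a - lp.single ∞ n b := by
  rw [sub_eq_add_neg, lp_single_add, lp.single_neg, sub_eq_add_neg]

/-- If for every `r ∈ [0,1)` some component `Xₙ` satisfies the `r`-approximate version of
the `κ`-SSD2P, then the `c₀`-sum `c₀(ℕ, Xₙ)` has the `κ`-SSD2P. -/
theorem c0Sum_SSD2P (X : ℕ → Type u) [∀ n, NormedAddCommGroup (X n)]
    [∀ n, NormedSpace ℝ (X n)] [∀ n, CompleteSpace (X n)]
    (κ : Cardinal.{u}) (hκ : ℵ₀ < κ)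
    (h : ∀ r : ℝ, 0 ≤ r → r < 1 → ∃ n : ℕ,
      ∀ A : Set (StrongDual ℝ (X n)), (∀ f ∈ A, ‖f‖ = 1) → #A < κ →
        ∃ (B : Set (X n)) (y : X n), B ⊆ closedBall 0 1 ∧ y ∈ closedBall (0 : X n) 1 ∧
          r ≤ ‖y‖ ∧
          (∀ x ∈ B, x + y ∈ closedBall (0 : X n) 1 ∧ x - y ∈ closedBall (0 : X n) 1) ∧
          (∀ f ∈ A, ∃ x ∈ B, r ≤ f x)) :
    SSD2P κ (c0Sum X) := by
  intro A hA hAcard ε hε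
  rcases le_or_gt 1 ε with hε1 | hε1
  · refine ⟨{0}, 0, ?_, ?_, ?_, ?_, ?_⟩
    · intro z hz; simp at hz; simp [hz]
    · simp
    · simp; linarith
    · intro x hx; simp at hx; simp [hx]
    · intro f hf; exact ⟨0, rfl, by simp; linarith⟩
  · set r : ℝ := 1 - ε / 2 with hrdef
    have hr0 : 0 ≤ r := by simp only [hrdef]; linarith
    have hr1 : r < 1 := by simp only [hrdef]; linarith
    obtain ⟨n, hn⟩ := h r hr0 hr1
    set g : StrongDual ℝ (c0Sum X) → StrongDual ℝ (X n) := fun f => f.comp (c0single X n) with hgdef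
    have hgle : ∀ f ∈ A, ‖g f‖ ≤ 1 := by
      intro f hf
      calc ‖g f‖ ≤ ‖f‖ * ‖c0single X n‖ := ContinuousLinearMap.opNorm_comp_le _ _
        _ ≤ 1 := by rw [hA f hf, one_mul]; exact norm_c0single_le n
    set A' : Set (StrongDual ℝ (X n)) := (fun f => ‖g f‖⁻¹ • g f) '' {f ∈ A | g f ≠ 0} with hA'def
    have hA'1 : ∀ φ ∈ A', ‖φ‖ = 1 := by
      rintro φ ⟨f, hf, rfl⟩
      exact norm_smul_inv_norm hf.2
    have hA'card : #A' < κ :=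
      lt_of_le_of_lt ((Cardinal.mk_image_le).trans
        (Cardinal.mk_le_mk_of_subset (Set.sep_subset _ _))) hAcard
    obtain ⟨B', y', hB'sub, hy'ball, hy'norm, hB'pm, hB'norm⟩ := hn A' hA'1 hA'card
    have hy'1 : ‖y'‖ ≤ 1 := mem_closedBall_zero_iff.mp hy'ball
    set y : c0Sum X := c0single X n y' with hydef
    have hynorm : ‖y‖ = ‖y'‖ := norm_c0single n y'
    refine ⟨{z : c0Sum X | ‖z‖ ≤ 1 ∧ ‖z + y‖ ≤ 1 ∧ ‖z - y‖ ≤ 1 ∧ ∃ f ∈ A, 1 - ε ≤ f z},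
      y, ?_, ?_, ?_, ?_, ?_⟩
    · intro z hz; exact mem_closedBall_zero_iff.mpr hz.1
    · exact mem_closedBall_zero_iff.mpr (by rw [hynorm]; exact hy'1)
    · rw [hynorm]; simp only [hrdef] at hy'norm; linarith
    · intro x hx
      exact ⟨mem_closedBall_zero_iff.mpr hx.2.1, mem_closedBall_zero_iff.mpr hx.2.2.1⟩
    · intro f hf
      have hf1 := hA f hf
      obtain ⟨x, hx1, hxr⟩ : ∃ x : c0Sum X, ‖x‖ ≤ 1 ∧ r ≤ f x := by
        have hlt : r < ‖f‖ := by rw [hf1]; exact hr1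
        obtain ⟨x, hx, hfx⟩ := f.exists_lt_apply_of_lt_opNorm hlt
        rcases le_or_gt 0 (f x) with h0 | h0
        · exact ⟨x, hx.le, by rw [Real.norm_eq_abs, abs_of_nonneg h0] at hfx; exact hfx.le⟩
        · refine ⟨-x, by simpa using hx.le, ?_⟩
          rw [Real.norm_eq_abs, abs_of_neg h0] at hfx
          rw [map_neg]; linarith
      obtain ⟨b, hb1, hby1, hby2, hbg⟩ : ∃ b : X n, ‖b‖ ≤ 1 ∧ ‖b + y'‖ ≤ 1 ∧ ‖b - y'‖ ≤ 1 ∧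
          r * ‖g f‖ ≤ g f b := by
        by_cases hg0 : g f = 0
        · exact ⟨0, by simp, by simpa using hy'1, by simpa using hy'1, by simp [hg0]⟩
        · have hmem : ‖g f‖⁻¹ • g f ∈ A' := ⟨f, ⟨hf, hg0⟩, rfl⟩
          obtain ⟨b, hbB, hrb⟩ := hB'norm _ hmem
          have hbpm := hB'pm b hbB
          have hgpos : (0 : ℝ) < ‖g f‖ := norm_pos_iff.mpr hg0
          refine ⟨b, mem_closedBall_zero_iff.mp (hB'sub hbB),
            mem_closedBall_zero_iff.mp hbpm.1, mem_closedBall_zero_iff.mp hbpm.2, ?_⟩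
          rw [ContinuousLinearMap.smul_apply, smul_eq_mul] at hrb
          have h2 := mul_le_mul_of_nonneg_right hrb hgpos.le
          rwa [mul_comm (‖g f‖⁻¹) _, mul_assoc, inv_mul_cancel₀ hgpos.ne', mul_one] at h2
      set xn : X n := (x : lp X ∞) n with hxndef
      have hxn1 : ‖xn‖ ≤ 1 :=
        (lp.norm_apply_le_norm ENNReal.top_ne_zero (x : lp X ∞) n).trans hx1
      set z : c0Sum X := x - c0single X n xn + c0single X n b with hzdef
      have hzval : (z : lp X ∞) = (x : lp X ∞) - lp.single ∞ n xn + lp.single ∞ n b := rfl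
      have hz1 : ‖z‖ ≤ 1 := by
        show ‖(z : lp X ∞)‖ ≤ 1
        rw [hzval]; exact coord_bound hx1 hb1
      have hzy1 : ‖z + y‖ ≤ 1 := by
        show ‖((z + y : c0Sum X) : lp X ∞)‖ ≤ 1
        have : ((z + y : c0Sum X) : lp X ∞)
            = (x : lp X ∞) - lp.single ∞ n xn + lp.single ∞ n (b + y') := by
          rw [lp_single_add]
          show (z : lp X ∞) + (y : lp X ∞) = _
          rw [hzval]
          show _ = (x : lp X ∞) - lp.single ∞ n xn + (lp.single ∞ n b + lp.single ∞ n y')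
          rw [← add_assoc]; rfl
        rw [this]; exact coord_bound hx1 hby1
      have hzy2 : ‖z - y‖ ≤ 1 := by
        show ‖((z - y : c0Sum X) : lp X ∞)‖ ≤ 1
        have : ((z - y : c0Sum X) : lp X ∞)
            = (x : lp X ∞) - lp.single ∞ n xn + lp.single ∞ n (b - y') := by
          rw [lp_single_sub]
          show (z : lp X ∞) - (y : lp X ∞) = _
          rw [hzval]
          show _ = (x : lp X ∞) - lp.single ∞ n xn + (lp.single ∞ n b - lp.single ∞ n y')
          rw [← add_sub_assoc]; rfl
        rw [this]; exact coord_bound hx1 hby2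
      have hfz : f z = f x - g f xn + g f b := by
        rw [hzdef, map_add, map_sub, hgdef]
        simp only [ContinuousLinearMap.comp_apply]
      have hgxn : g f xn ≤ ‖g f‖ := by
        refine (le_abs_self _).trans (((g f).le_opNorm xn).trans ?_)
        exact mul_le_of_le_one_right (norm_nonneg _) hxn1
      have hgf1 : ‖g f‖ ≤ 1 := hgle f hf
      have hfinal : 1 - ε ≤ f z := by
        rw [hfz]
        have hgnn : (0 : ℝ) ≤ ‖g f‖ := norm_nonneg _
        have hr' : (1 - r) * ‖g f‖ ≤ (1 - r) * 1 :=
          mul_le_mul_of_nonneg_left hgf1 (by linarith)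
        rw [hrdef] at hxr hbg hr'
        linarith [hxr, hbg, hr', hgxn]
      exact ⟨z, ⟨hz1, hzy1, hzy2, f, hf, hfinal⟩, hfinal⟩
end
end

section
/- Let X and Y be real Banach spaces and κ > ℵ₀ a cardinal. Then the ℓ∞-direct sum X ⊕∞ Y has the κ-SSD2P if and only if X has the κ-SSD2P or Y has the κ-SSD2P. -/
open Cardinal Metric Filter Topology NormedSpace
open scoped ENNReal
universe u
noncomputable section

section Aux

variable {X Y : Type u} [NormedAddCommGroup X] [NormedSpace ℝ X]
  [NormedAddCommGroup Y] [NormedSpace ℝ Y]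

/-- Left inclusion into the `ℓ∞` sum. -/
def inlL : X →L[ℝ] WithLp ⊤ (X × Y) :=
  ((WithLp.prodContinuousLinearEquiv ⊤ ℝ X Y).symm : (X × Y) →L[ℝ] WithLp ⊤ (X × Y)).comp
    (ContinuousLinearMap.inl ℝ X Y)

/-- Right inclusion into the `ℓ∞` sum. -/
def inrL : Y →L[ℝ] WithLp ⊤ (X × Y) :=
  ((WithLp.prodContinuousLinearEquiv ⊤ ℝ X Y).symm : (X × Y) →L[ℝ] WithLp ⊤ (X × Y)).comp
    (ContinuousLinearMap.inr ℝ X Y)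

/-- First projection from the `ℓ∞` sum. -/
def fstL : WithLp ⊤ (X × Y) →L[ℝ] X :=
  (ContinuousLinearMap.fst ℝ X Y).comp
    ((WithLp.prodContinuousLinearEquiv ⊤ ℝ X Y) : WithLp ⊤ (X × Y) →L[ℝ] (X × Y))

/-- Second projection from the `ℓ∞` sum. -/
def sndL : WithLp ⊤ (X × Y) →L[ℝ] Y :=
  (ContinuousLinearMap.snd ℝ X Y).comp
    ((WithLp.prodContinuousLinearEquiv ⊤ ℝ X Y) : WithLp ⊤ (X × Y) →L[ℝ] (X × Y))

lemma norm_eqL (z : WithLp ⊤ (X × Y)) : ‖z‖ = ‖z.fst‖ ⊔ ‖z.snd‖ := rfl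

lemma normFstLe (z : WithLp ⊤ (X × Y)) : ‖z.fst‖ ≤ ‖z‖ := by
  rw [norm_eqL]; exact le_sup_left

lemma normSndLe (z : WithLp ⊤ (X × Y)) : ‖z.snd‖ ≤ ‖z‖ := by
  rw [norm_eqL]; exact le_sup_right

lemma norm_inlL (x : X) : ‖(inlL x : WithLp ⊤ (X × Y))‖ = ‖x‖ := by
  show ‖x‖ ⊔ ‖(0 : Y)‖ = ‖x‖
  simp

lemma norm_inrL (y : Y) : ‖(inrL y : WithLp ⊤ (X × Y))‖ = ‖y‖ := by
  show ‖(0 : X)‖ ⊔ ‖y‖ = ‖y‖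
  simp

lemma decompL (z : WithLp ⊤ (X × Y)) : inlL z.fst + inrL z.snd = z := by
  show (WithLp.equiv ⊤ (X × Y)).symm (z.fst, 0) + (WithLp.equiv ⊤ (X × Y)).symm (0, z.snd) = z
  rw [← WithLp.toLp_add]
  simp
  rfl

/-- norm of `g ∘ fstL` equals norm of `g`. -/
lemma norm_comp_fstL (g : StrongDual ℝ X) : ‖g.comp (fstL : WithLp ⊤ (X × Y) →L[ℝ] X)‖ = ‖g‖ := by
  refine le_antisymm ?_ ?_
  · refine ContinuousLinearMap.opNorm_le_bound _ (norm_nonneg g) fun z => ?_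
    calc ‖g z.fst‖ ≤ ‖g‖ * ‖z.fst‖ := g.le_opNorm _
      _ ≤ ‖g‖ * ‖z‖ := mul_le_mul_of_nonneg_left (normFstLe z) (norm_nonneg g)
  · refine ContinuousLinearMap.opNorm_le_bound _ (norm_nonneg _) fun x => ?_
    have h1 : g x = (g.comp (fstL : WithLp ⊤ (X × Y) →L[ℝ] X)) (inlL x) := rfl
    calc ‖g x‖ = ‖(g.comp (fstL : WithLp ⊤ (X × Y) →L[ℝ] X)) (inlL x)‖ := by rw [h1]
      _ ≤ ‖g.comp (fstL : WithLp ⊤ (X × Y) →L[ℝ] X)‖ * ‖(inlL x : WithLp ⊤ (X × Y))‖ :=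
          ContinuousLinearMap.le_opNorm _ _
      _ = ‖g.comp (fstL : WithLp ⊤ (X × Y) →L[ℝ] X)‖ * ‖x‖ := by rw [norm_inlL]

lemma norm_comp_sndL (h : StrongDual ℝ Y) : ‖h.comp (sndL : WithLp ⊤ (X × Y) →L[ℝ] Y)‖ = ‖h‖ := by
  refine le_antisymm ?_ ?_
  · refine ContinuousLinearMap.opNorm_le_bound _ (norm_nonneg h) fun z => ?_
    calc ‖h z.snd‖ ≤ ‖h‖ * ‖z.snd‖ := h.le_opNorm _
      _ ≤ ‖h‖ * ‖z‖ := mul_le_mul_of_nonneg_left (normSndLe z) (norm_nonneg h)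
  · refine ContinuousLinearMap.opNorm_le_bound _ (norm_nonneg _) fun y => ?_
    have h1 : h y = (h.comp (sndL : WithLp ⊤ (X × Y) →L[ℝ] Y)) (inrL y) := rfl
    calc ‖h y‖ = ‖(h.comp (sndL : WithLp ⊤ (X × Y) →L[ℝ] Y)) (inrL y)‖ := by rw [h1]
      _ ≤ ‖h.comp (sndL : WithLp ⊤ (X × Y) →L[ℝ] Y)‖ * ‖(inrL y : WithLp ⊤ (X × Y))‖ :=
          ContinuousLinearMap.le_opNorm _ _
      _ = ‖h.comp (sndL : WithLp ⊤ (X × Y) →L[ℝ] Y)‖ * ‖y‖ := by rw [norm_inrL]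

/-- Almost-norm-attainment for real functionals. -/
lemma exists_near (h : StrongDual ℝ X) {c : ℝ} (hc0 : 0 ≤ c) (hc1 : c < 1) :
    ∃ x, ‖x‖ ≤ 1 ∧ c * ‖h‖ ≤ h x := by
  by_cases h0 : h = 0
  · exact ⟨0, by simp, by simp [h0]⟩
  · have hn : 0 < ‖h‖ := by
      rcases (norm_nonneg h).lt_or_eq with hlt | heq
      · exact hlt
      · exact absurd ((ContinuousLinearMap.opNorm_zero_iff h).mp heq.symm) h0
    have hlt : c * ‖h‖ < ‖h‖ := by nlinarith
    obtain ⟨x, hx1, hx2⟩ := h.exists_lt_apply_of_lt_opNorm hlt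
    rw [Real.norm_eq_abs] at hx2
    rcases le_abs.mp hx2.le with h1 | h2
    · exact ⟨x, hx1.le, h1⟩
    · exact ⟨-x, by simpa using hx1.le, by simpa using h2⟩

/-- If `X` has the κ-SSD2P then so does `X ⊕∞ Y`. -/
lemma SSD2P_prod_of_left {κ : Cardinal.{u}} (hX : SSD2P κ X) :
    SSD2P κ (WithLp ⊤ (X × Y)) := by
  intro A hA1 hAκ ε hε
  set ε' : ℝ := min ε 1 / 2 with hε'def
  have hm : 0 < min ε 1 := lt_min hε one_pos
  have hm1 : min ε 1 ≤ ε := min_le_left ε 1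
  have hm2 : min ε 1 ≤ 1 := min_le_right ε 1
  have hε'pos : 0 < ε' := by rw [hε'def]; linarith
  have hε'le : ε' ≤ ε := by rw [hε'def]; linarith
  have hε'lt1 : ε' < 1 := by rw [hε'def]; linarith
  set AX : Set (StrongDual ℝ X) :=
    (fun f : StrongDual ℝ (WithLp ⊤ (X × Y)) => ‖f.comp inlL‖⁻¹ • (f.comp inlL)) ''
      {f ∈ A | f.comp inlL ≠ 0} with hAXdef
  have hAX1 : ∀ g ∈ AX, ‖g‖ = 1 := by
    rintro g ⟨f, ⟨hfA, hf0⟩, rfl⟩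
    exact norm_smul_inv_norm hf0
  have hAXκ : #AX < κ :=
    lt_of_le_of_lt ((mk_image_le).trans (mk_le_mk_of_subset (Set.sep_subset _ _))) hAκ
  obtain ⟨BX, yX, hBX, hyX, hyXn, hBXpm, hBXnorm⟩ := hX AX hAX1 hAXκ ε' hε'pos
  refine ⟨{z : WithLp ⊤ (X × Y) | (z.fst ∈ BX ∨ z.fst = 0) ∧ ‖z.snd‖ ≤ 1},
    (WithLp.equiv ⊤ (X × Y)).symm (yX, 0), ?_, ?_, ?_, ?_, ?_⟩
  · -- B ⊆ ball
    rintro z ⟨hz1, hz2⟩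
    rw [mem_closedBall_zero_iff, norm_eqL]
    refine sup_le ?_ hz2
    rcases hz1 with hz1 | hz1
    · exact mem_closedBall_zero_iff.mp (hBX hz1)
    · simp [hz1]
  · -- y ∈ ball
    rw [mem_closedBall_zero_iff]
    show ‖yX‖ ⊔ ‖(0 : Y)‖ ≤ 1
    simp only [norm_zero, sup_of_le_left (norm_nonneg yX)]
    exact mem_closedBall_zero_iff.mp hyX
  · -- 1 - ε ≤ ‖y‖
    show 1 - ε ≤ ‖yX‖ ⊔ ‖(0 : Y)‖
    simp only [norm_zero, sup_of_le_left (norm_nonneg yX)]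
    linarith
  · -- B ± y ⊆ ball
    rintro z ⟨hz1, hz2⟩
    have hyX1 : ‖yX‖ ≤ 1 := mem_closedBall_zero_iff.mp hyX
    constructor
    · rw [mem_closedBall_zero_iff]
      show ‖z.fst + yX‖ ⊔ ‖z.snd + (0 : Y)‖ ≤ 1
      rw [add_zero]
      refine sup_le ?_ hz2
      rcases hz1 with hz1 | hz1
      · exact mem_closedBall_zero_iff.mp (hBXpm z.fst hz1).1
      · rw [hz1, zero_add]; exact hyX1
    · rw [mem_closedBall_zero_iff]
      show ‖z.fst - yX‖ ⊔ ‖z.snd - (0 : Y)‖ ≤ 1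
      rw [sub_zero]
      refine sup_le ?_ hz2
      rcases hz1 with hz1 | hz1
      · exact mem_closedBall_zero_iff.mp (hBXpm z.fst hz1).2
      · rw [hz1, zero_sub, norm_neg]; exact hyX1
  · -- norming
    intro f hf
    set g : StrongDual ℝ X := f.comp inlL with hgdef
    set h : StrongDual ℝ Y := f.comp inrL with hhdef
    have hsum : 1 ≤ ‖g‖ + ‖h‖ := by
      have hfb : ‖f‖ ≤ ‖g‖ + ‖h‖ := by
        refine ContinuousLinearMap.opNorm_le_bound _ (by positivity) fun z => ?_
        have hz : f z = g z.fst + h z.snd := by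
          conv_lhs => rw [← decompL z]
          rw [map_add]
          rfl
        rw [hz]
        calc ‖g z.fst + h z.snd‖ ≤ ‖g z.fst‖ + ‖h z.snd‖ := norm_add_le _ _
          _ ≤ ‖g‖ * ‖z.fst‖ + ‖h‖ * ‖z.snd‖ := add_le_add (g.le_opNorm _) (h.le_opNorm _)
          _ ≤ ‖g‖ * ‖z‖ + ‖h‖ * ‖z‖ :=
              add_le_add (mul_le_mul_of_nonneg_left (normFstLe z) (norm_nonneg g))
                (mul_le_mul_of_nonneg_left (normSndLe z) (norm_nonneg h))
          _ = (‖g‖ + ‖h‖) * ‖z‖ := by ring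
      rw [hA1 f hf] at hfb
      exact hfb
    have hx : ∃ x : X, (x ∈ BX ∨ x = 0) ∧ (x + yX ∈ closedBall (0 : X) 1 ∧
        x - yX ∈ closedBall (0 : X) 1) ∧ (1 - ε') * ‖g‖ ≤ g x := by
      by_cases hg : g = 0
      · refine ⟨0, Or.inr rfl, ?_, by simp [hg]⟩
        have hyX1 : ‖yX‖ ≤ 1 := mem_closedBall_zero_iff.mp hyX
        constructor
        · rw [mem_closedBall_zero_iff, zero_add]; exact hyX1
        · rw [mem_closedBall_zero_iff, zero_sub, norm_neg]; exact hyX1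
      · have hgAX : ‖g‖⁻¹ • g ∈ AX := ⟨f, ⟨hf, hg⟩, rfl⟩
        obtain ⟨x, hxB, hxn⟩ := hBXnorm _ hgAX
        have hgpos : 0 < ‖g‖ := by
          rcases (norm_nonneg g).lt_or_eq with hlt | heq
          · exact hlt
          · exact absurd ((ContinuousLinearMap.opNorm_zero_iff g).mp heq.symm) hg
        have hxn' : 1 - ε' ≤ ‖g‖⁻¹ * g x := by
          simpa [ContinuousLinearMap.smul_apply, smul_eq_mul] using hxn
        have hval : (1 - ε') * ‖g‖ ≤ g x := by
          have h2 : ‖g‖ * (‖g‖⁻¹ * g x) = g x := by field_simp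
          nlinarith [mul_le_mul_of_nonneg_left hxn' hgpos.le]
        exact ⟨x, Or.inl hxB, hBXpm x hxB, hval⟩
    obtain ⟨x, hxB, _, hgx⟩ := hx
    obtain ⟨yf, hyf1, hyf2⟩ := exists_near h (by linarith : (0:ℝ) ≤ 1 - ε') (by linarith)
    refine ⟨(WithLp.equiv ⊤ (X × Y)).symm (x, yf), ⟨hxB, hyf1⟩, ?_⟩
    have hfz : f ((WithLp.equiv ⊤ (X × Y)).symm (x, yf)) = g x + h yf := by
      have hd : (inlL x : WithLp ⊤ (X × Y)) + inrL yf
          = (WithLp.equiv ⊤ (X × Y)).symm (x, yf) := by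
        show (WithLp.equiv ⊤ (X × Y)).symm (x, 0) + (WithLp.equiv ⊤ (X × Y)).symm (0, yf) = _
        rw [← WithLp.toLp_add]
        simp
      rw [← hd, map_add]
      rfl
    rw [hfz]
    nlinarith [norm_nonneg g, norm_nonneg h]

end Aux

section Swap

variable {X Y : Type u} [NormedAddCommGroup X] [NormedSpace ℝ X]
  [NormedAddCommGroup Y] [NormedSpace ℝ Y]

/-- SSD2P transfers along a linear isometric isomorphism. -/
lemma SSD2P.congr {κ : Cardinal.{u}} (e : X ≃ₗᵢ[ℝ] Y) (hX : SSD2P κ X) : SSD2P κ Y := by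
  intro A hA1 hAκ ε hε
  set eC : X →L[ℝ] Y := e.toLinearIsometry.toContinuousLinearMap with heC
  set A' : Set (StrongDual ℝ X) := (fun f : StrongDual ℝ Y => f.comp eC) '' A with hA'
  have hA'1 : ∀ g ∈ A', ‖g‖ = 1 := by
    rintro g ⟨f, hf, rfl⟩
    show ‖f.comp (e : X →SL[RingHom.id ℝ] Y)‖ = 1
    rw [ContinuousLinearMap.opNorm_comp_linearIsometryEquiv]
    exact hA1 f hf
  have hA'κ : #A' < κ := lt_of_le_of_lt mk_image_le hAκ
  obtain ⟨B, y, hB, hy, hyn, hBpm, hBnorm⟩ := hX A' hA'1 hA'κ ε hε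
  refine ⟨e '' B, e y, ?_, ?_, ?_, ?_, ?_⟩
  · rintro _ ⟨x, hx, rfl⟩
    rw [mem_closedBall_zero_iff, e.norm_map]
    exact mem_closedBall_zero_iff.mp (hB hx)
  · rw [mem_closedBall_zero_iff, e.norm_map]
    exact mem_closedBall_zero_iff.mp hy
  · rw [e.norm_map]; exact hyn
  · rintro _ ⟨x, hx, rfl⟩
    constructor
    · rw [mem_closedBall_zero_iff, ← e.map_add, e.norm_map]
      exact mem_closedBall_zero_iff.mp (hBpm x hx).1
    · rw [mem_closedBall_zero_iff, ← e.map_sub, e.norm_map]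
      exact mem_closedBall_zero_iff.mp (hBpm x hx).2
  · intro f hf
    obtain ⟨x, hx, hfx⟩ := hBnorm (f.comp eC) ⟨f, hf, rfl⟩
    exact ⟨e x, ⟨x, hx, rfl⟩, hfx⟩

/-- The swap isometry between `X ⊕∞ Y` and `Y ⊕∞ X`. -/
def swapLi : WithLp ⊤ (Y × X) ≃ₗᵢ[ℝ] WithLp ⊤ (X × Y) where
  toLinearEquiv :=
    (WithLp.linearEquiv ⊤ ℝ (Y × X)).trans
      ((LinearEquiv.prodComm ℝ Y X).trans (WithLp.linearEquiv ⊤ ℝ (X × Y)).symm)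
  norm_map' := fun z => by
    show ‖z.snd‖ ⊔ ‖z.fst‖ = ‖z.fst‖ ⊔ ‖z.snd‖
    exact sup_comm _ _

end Swap

/-- For `κ > ℵ₀`, the `ℓ∞`-direct sum `X ⊕∞ Y` has the `κ`-SSD2P if and only if
`X` or `Y` has the `κ`-SSD2P. -/
theorem prodLinf_SSD2P_iff {X Y : Type u} [NormedAddCommGroup X] [NormedSpace ℝ X]
    [CompleteSpace X] [NormedAddCommGroup Y] [NormedSpace ℝ Y] [CompleteSpace Y]
    (κ : Cardinal.{u}) (hκ : ℵ₀ < κ) :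
    SSD2P κ (WithLp ⊤ (X × Y)) ↔ (SSD2P κ X ∨ SSD2P κ Y) := by
  constructor
  · intro hP
    by_contra hc
    obtain ⟨h1, h2⟩ := not_or.mp hc
    simp only [SSD2P, not_forall, Classical.not_imp] at h1 h2
    obtain ⟨AX, hAX1, hAXκ, εX, hεX, hXfail⟩ := h1
    obtain ⟨AY, hAY1, hAYκ, εY, hεY, hYfail⟩ := h2
    set ε : ℝ := min εX εY with hεdef
    have hεpos : 0 < ε := lt_min hεX hεY
    set A : Set (StrongDual ℝ (WithLp ⊤ (X × Y))) :=
      ((fun g : StrongDual ℝ X => g.comp fstL) '' AX) ∪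
        ((fun h : StrongDual ℝ Y => h.comp sndL) '' AY) with hAdef
    have hA1 : ∀ f ∈ A, ‖f‖ = 1 := by
      rintro f (⟨g, hg, rfl⟩ | ⟨h, hh, rfl⟩)
      · rw [norm_comp_fstL]; exact hAX1 g hg
      · rw [norm_comp_sndL]; exact hAY1 h hh
    have hAκ : #A < κ := by
      calc #A ≤ #((fun g : StrongDual ℝ X => g.comp fstL) '' AX)
          + #((fun h : StrongDual ℝ Y => h.comp sndL) '' AY) := mk_union_le _ _
        _ ≤ #AX + #AY := add_le_add mk_image_le mk_image_le
        _ < κ := Cardinal.add_lt_of_lt hκ.le hAXκ hAYκ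
    obtain ⟨B, y, hB, hy, hyn, hBpm, hBnorm⟩ := hP A hA1 hAκ ε hεpos
    rw [norm_eqL] at hyn
    rcases le_sup_iff.mp hyn with hyf | hys
    · -- X gets the witnesses
      refine hXfail ⟨(fun z : WithLp ⊤ (X × Y) => z.fst) '' B, y.fst, ?_, ?_, ?_, ?_, ?_⟩
      · rintro _ ⟨z, hz, rfl⟩
        rw [mem_closedBall_zero_iff]
        exact (normFstLe z).trans (mem_closedBall_zero_iff.mp (hB hz))
      · rw [mem_closedBall_zero_iff]
        exact (normFstLe y).trans (mem_closedBall_zero_iff.mp hy)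
      · linarith [min_le_left εX εY]
      · rintro _ ⟨z, hz, rfl⟩
        constructor
        · rw [mem_closedBall_zero_iff]
          have : z.fst + y.fst = (z + y).fst := rfl
          rw [this]
          exact (normFstLe _).trans (mem_closedBall_zero_iff.mp (hBpm z hz).1)
        · rw [mem_closedBall_zero_iff]
          have : z.fst - y.fst = (z - y).fst := rfl
          rw [this]
          exact (normFstLe _).trans (mem_closedBall_zero_iff.mp (hBpm z hz).2)
      · intro g hg
        obtain ⟨z, hz, hgz⟩ := hBnorm (g.comp fstL) (Or.inl ⟨g, hg, rfl⟩)
        refine ⟨z.fst, ⟨z, hz, rfl⟩, ?_⟩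
        have : (g.comp fstL) z = g z.fst := rfl
        rw [this] at hgz
        linarith [min_le_left εX εY]
    · -- Y gets the witnesses
      refine hYfail ⟨(fun z : WithLp ⊤ (X × Y) => z.snd) '' B, y.snd, ?_, ?_, ?_, ?_, ?_⟩
      · rintro _ ⟨z, hz, rfl⟩
        rw [mem_closedBall_zero_iff]
        exact (normSndLe z).trans (mem_closedBall_zero_iff.mp (hB hz))
      · rw [mem_closedBall_zero_iff]
        exact (normSndLe y).trans (mem_closedBall_zero_iff.mp hy)
      · linarith [min_le_right εX εY]
      · rintro _ ⟨z, hz, rfl⟩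
        constructor
        · rw [mem_closedBall_zero_iff]
          have : z.snd + y.snd = (z + y).snd := rfl
          rw [this]
          exact (normSndLe _).trans (mem_closedBall_zero_iff.mp (hBpm z hz).1)
        · rw [mem_closedBall_zero_iff]
          have : z.snd - y.snd = (z - y).snd := rfl
          rw [this]
          exact (normSndLe _).trans (mem_closedBall_zero_iff.mp (hBpm z hz).2)
      · intro h hh
        obtain ⟨z, hz, hhz⟩ := hBnorm (h.comp sndL) (Or.inr ⟨h, hh, rfl⟩)
        refine ⟨z.snd, ⟨z, hz, rfl⟩, ?_⟩
        have : (h.comp sndL) z = h z.snd := rfl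
        rw [this] at hhz
        linarith [min_le_right εX εY]
  · rintro (hX | hY)
    · exact SSD2P_prod_of_left hX
    · exact SSD2P.congr swapLi (SSD2P_prod_of_left hY)
end
end

section
/- Let κ > ℵ₀ be a cardinal. The Banach space c₀(ℕ, ℓ_n(κ)) (the c₀-sum over n ∈ ℕ of the spaces ℓ_n(κ)) has the κ-SSD2P. -/
open Cardinal Metric Filter Topology NormedSpace
open scoped ENNReal
universe u
noncomputable section

instance (n : ℕ) : Fact (1 ≤ ((n + 1 : ℕ) : ℝ≥0∞)) :=
  ⟨by exact_mod_cast Nat.succ_le_succ (Nat.zero_le n)⟩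


lemma aux_disjoint_norm {ι : Type u} [DecidableEq ι] (p : ℝ≥0∞) [Fact (1 ≤ p)]
    (hp : 0 < p.toReal) (u : lp (fun _ : ι => ℝ) p) (μ : ι) (hu : u μ = 0) (c : ℝ) :
    ‖u + lp.single p μ c‖ ^ p.toReal = ‖u‖ ^ p.toReal + |c| ^ p.toReal := by
  set v : lp (fun _ : ι => ℝ) p := u + lp.single p μ c with hv
  have h := lp.hasSum_norm hp v
  have h2 : HasSum (fun i : ι => ‖u i‖ ^ p.toReal + if i = μ then |c| ^ p.toReal else 0)
      (‖u‖ ^ p.toReal + |c| ^ p.toReal) :=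
    (lp.hasSum_norm hp u).add (hasSum_ite_eq μ _)
  have key : (fun i : ι => ‖v i‖ ^ p.toReal)
      = fun i : ι => ‖u i‖ ^ p.toReal + if i = μ then |c| ^ p.toReal else 0 := by
    funext i
    have hvi : v i = u i + (lp.single p μ c : lp (fun _ : ι => ℝ) p) i := by rw [hv]; simp
    rcases eq_or_ne i μ with rfl | hi
    · rw [hvi, hu, lp.single_apply_self]
      simp [Real.zero_rpow hp.ne', Real.norm_eq_abs]
    · rw [hvi, lp.single_apply_ne p μ _ hi]
      simp [hi]
  exact h.unique (by rw [key]; exact h2)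

set_option maxHeartbeats 1000000 in
/-- For `κ > ℵ₀`, the `c₀`-sum `c₀(ℕ, ℓ_n(κ))` has the `κ`-SSD2P. -/
theorem c0Sum_lp_SSD2P {ι : Type u} (κ : Cardinal.{u}) (hκ : ℵ₀ < κ) (hι : #ι = κ) :
    SSD2P κ (c0Sum (fun n => lp (fun _ : ι => ℝ) ((n + 1 : ℕ) : ℝ≥0∞))) := by
  classical
  intro A hA hAcard ε hε
  by_cases hε1 : 1 ≤ ε
  · refine ⟨{0}, 0, ?_, ?_, ?_, ?_, ?_⟩
    · intro x hx; simp only [Set.mem_singleton_iff] at hx; subst hx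
      simp [mem_closedBall_zero_iff]
    · simp [mem_closedBall_zero_iff]
    · simp; linarith
    · intro x hx; simp only [Set.mem_singleton_iff] at hx; subst hx
      simp [mem_closedBall_zero_iff]
    · intro f hf
      exact ⟨0, rfl, by simp; linarith⟩
  · push_neg at hε1
    set Xf : ℕ → Type u := fun m => lp (fun _ : ι => ℝ) ((m + 1 : ℕ) : ℝ≥0∞) with hXf
    set E := c0Sum Xf with hE
    obtain ⟨n, hn⟩ := exists_pow_lt_of_lt_one (by norm_num : (0:ℝ) < 1/2)
      (by linarith : 1 - ε/2 < 1)
    set p : ℝ≥0∞ := ((n + 1 : ℕ) : ℝ≥0∞) with hpdef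
    have hpR : p.toReal = ((n + 1 : ℕ) : ℝ) := by rw [hpdef, ENNReal.toReal_natCast]
    have hp0 : 0 < p.toReal := by rw [hpR]; positivity
    set s : ℝ := (1/2 : ℝ) ^ (((n + 1 : ℕ) : ℝ))⁻¹ with hsdef
    have hs_pow : s ^ (n + 1) = 1/2 :=
      Real.rpow_inv_natCast_pow (by norm_num) (Nat.succ_ne_zero n)
    have hs_pos : 0 < s := Real.rpow_pos_of_pos (by norm_num) _
    have hs_le1 : s ≤ 1 := Real.rpow_le_one (by norm_num) (by norm_num) (by positivity)
    have hε2 : (0:ℝ) < 1 - ε/2 := by linarith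
    have hs_ge : 1 - ε/2 ≤ s := by
      have h1 : (1 - ε/2) ^ (n + 1) ≤ s ^ (n + 1) := by
        rw [hs_pow]
        calc (1 - ε/2) ^ (n + 1) ≤ (1 - ε/2) ^ n :=
              pow_le_pow_of_le_one hε2.le (by linarith) (Nat.le_succ n)
          _ ≤ 1/2 := hn.le
      exact le_of_pow_le_pow_left₀ (Nat.succ_ne_zero n) hs_pos.le h1
    have hs_rpow : s ^ p.toReal = 1/2 := by
      rw [hpR, Real.rpow_natCast]; exact_mod_cast hs_pow
    -- witnesses for each functional
    have hfx : ∀ f : A, ∃ z : E, ‖z‖ ≤ 1 ∧ 1 - ε/2 < (f : StrongDual ℝ E) z := by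
      intro f
      have hf1 : (1 - ε/2 : ℝ) < ‖(f : StrongDual ℝ E)‖ := by
        rw [hA f f.2]; linarith
      obtain ⟨x, hx1, hx2⟩ := ContinuousLinearMap.exists_lt_apply_of_lt_opNorm _ hf1
      rcases le_or_gt 0 ((f : StrongDual ℝ E) x) with h | h
      · exact ⟨x, hx1.le, by rwa [Real.norm_eq_abs, abs_of_nonneg h] at hx2⟩
      · refine ⟨-x, by rw [norm_neg]; exact hx1.le, ?_⟩
        rw [map_neg]
        rwa [Real.norm_eq_abs, abs_of_neg h] at hx2
    choose g hg1 hg2 using hfx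
    -- find a fresh coordinate μ
    set S : Set ι := ⋃ (f : A), ⋃ (m : ℕ), {i : ι | ((g f : lp Xf ∞) m) i ≠ 0} with hSdef
    have hcnt : ∀ f : A, (⋃ (m : ℕ), {i : ι | ((g f : lp Xf ∞) m) i ≠ 0}).Countable := by
      intro f
      refine Set.countable_iUnion fun m => ?_
      have hm0 : 0 < ((m + 1 : ℕ) : ℝ≥0∞).toReal := by rw [ENNReal.toReal_natCast]; positivity
      have hsum : Summable fun i : ι =>
          ‖((g f : lp Xf ∞) m) i‖ ^ ((m + 1 : ℕ) : ℝ≥0∞).toReal :=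
        (memℓp_gen_iff hm0).1 (lp.memℓp ((g f : lp Xf ∞) m))
      refine hsum.countable_support.mono ?_
      intro i hi
      simp only [Set.mem_setOf_eq] at hi
      have : (0:ℝ) < ‖((g f : lp Xf ∞) m) i‖ := norm_pos_iff.2 hi
      exact (Real.rpow_pos_of_pos this _).ne'
    have hS1 : #S ≤ #A * ℵ₀ := by
      refine (Cardinal.mk_iUnion_le _).trans ?_
      exact mul_le_mul' le_rfl (ciSup_le' fun f =>
        @Cardinal.mk_le_aleph0 _ (hcnt f).to_subtype)
    have hS2 : #S < κ := lt_of_le_of_lt hS1 (Cardinal.mul_lt_of_lt hκ.le hAcard hκ)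
    have hSne : S ≠ Set.univ := by
      intro h
      rw [h, Cardinal.mk_univ, hι] at hS2
      exact lt_irrefl _ hS2
    obtain ⟨μ, hμ⟩ : ∃ μ : ι, μ ∉ S := by
      by_contra h
      push_neg at h
      exact hSne (Set.eq_univ_iff_forall.2 h)
    have hμ' : ∀ (f : A) (m : ℕ), ((g f : lp Xf ∞) m) μ = 0 := by
      intro f m
      by_contra h
      exact hμ (Set.mem_iUnion.2 ⟨f, Set.mem_iUnion.2 ⟨m, h⟩⟩)
    -- define y
    set w : Xf n := lp.single p μ s with hwdef
    have hw_norm : ‖w‖ = s := by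
      have := lp.norm_single (E := fun _ : ι => ℝ) (ENNReal.toReal_pos_iff.1 hp0).1 μ s
      rw [hwdef]
      simpa [Real.norm_eq_abs, abs_of_pos hs_pos] using this
    set yval : lp Xf ∞ := lp.single ∞ n w with hyvaldef
    have hyval_n : yval n = w := lp.single_apply_self ∞ n w
    have hyval_ne : ∀ m : ℕ, m ≠ n → yval m = 0 := fun m hm => lp.single_apply_ne ∞ n w hm
    have hymem : yval ∈ c0Set Xf := by
      have hev : ∀ᶠ m in atTop, (0:ℝ) = ‖yval m‖ := by
        refine eventually_atTop.2 ⟨n + 1, fun m hm => ?_⟩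
        rw [hyval_ne m (by omega)]
        simp
      exact Tendsto.congr' hev tendsto_const_nhds
    set y : E := ⟨yval, hymem⟩ with hydef
    have hynorm : ‖y‖ = ‖yval‖ := rfl
    have hy_le : ‖yval‖ ≤ s := by
      refine lp.norm_le_of_forall_le hs_pos.le fun m => ?_
      by_cases hm : m = n
      · subst hm; rw [hyval_n, hw_norm]
      · rw [hyval_ne m hm]; simp [hs_pos.le]
    have hy_ge : s ≤ ‖yval‖ := by
      have := lp.norm_apply_le_norm ENNReal.top_ne_zero yval n
      rwa [hyval_n, hw_norm] at this
    -- the set B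
    set B : Set E := Set.range (fun f : A => (s • g f : E)) with hBdef
    have hgnorm : ∀ f : A, ‖(s • g f : E)‖ ≤ s := by
      intro f
      rw [norm_smul, Real.norm_eq_abs, abs_of_pos hs_pos]
      calc s * ‖g f‖ ≤ s * 1 := by
            exact mul_le_mul_of_nonneg_left (hg1 f) hs_pos.le
        _ = s := mul_one s
    -- main norm estimate
    have main : ∀ (f : A) (z : lp Xf ∞) (c : ℝ), |c| = s →
        (∀ m : ℕ, m ≠ n → z m = 0) → z n = lp.single p μ c →
        ‖s • (g f : lp Xf ∞) + z‖ ≤ 1 := by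
      intro f z c hc hz0 hzn
      refine lp.norm_le_of_forall_le zero_le_one fun m => ?_
      have hz : (⇑(s • (g f : lp Xf ∞) + z) : ∀ m, Xf m) m
          = s • ((g f : lp Xf ∞) m) + z m := by
        simp only [lp.coeFn_add, lp.coeFn_smul, Pi.add_apply, Pi.smul_apply]
      by_cases hm : m = n
      · subst hm
        rw [hz, hzn]
        set u : Xf m := s • ((g f : lp Xf ∞) m) with hudef
        have hu0 : u μ = 0 := by
          rw [hudef]
          have h0 : ((g f : lp Xf ∞) m) μ = 0 := hμ' f m
          have hcs := congrFun (lp.coeFn_smul s ((g f : lp Xf ∞) m)) μ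
          rw [hcs, Pi.smul_apply, h0, smul_zero]
        have hkey := aux_disjoint_norm p hp0 u μ hu0 c
        have hu_le : ‖u‖ ≤ s := by
          rw [hudef, norm_smul, Real.norm_eq_abs, abs_of_pos hs_pos]
          have h1 : ‖(g f : lp Xf ∞) m‖ ≤ ‖(g f : lp Xf ∞)‖ :=
            lp.norm_apply_le_norm ENNReal.top_ne_zero _ m
          have h2 : ‖(g f : lp Xf ∞)‖ ≤ 1 := hg1 f
          calc s * ‖(g f : lp Xf ∞) m‖ ≤ s * 1 := by
                exact mul_le_mul_of_nonneg_left (h1.trans h2) hs_pos.le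
            _ = s := mul_one s
        have hle : ‖u + lp.single p μ c‖ ^ p.toReal ≤ 1 := by
          rw [hkey, hc]
          have : ‖u‖ ^ p.toReal ≤ s ^ p.toReal :=
            Real.rpow_le_rpow (norm_nonneg _) hu_le hp0.le
          rw [hs_rpow] at this ⊢
          linarith
        have := (Real.rpow_le_rpow_iff (norm_nonneg _) zero_le_one hp0).1
          (by rwa [Real.one_rpow])
        exact this
      · rw [hz, hz0 m hm, add_zero, norm_smul, Real.norm_eq_abs,
          abs_of_pos hs_pos]
        have h1 : ‖(g f : lp Xf ∞) m‖ ≤ ‖(g f : lp Xf ∞)‖ :=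
          lp.norm_apply_le_norm ENNReal.top_ne_zero _ m
        have h2 : ‖(g f : lp Xf ∞)‖ ≤ 1 := hg1 f
        have h3 : s * ‖(g f : lp Xf ∞) m‖ ≤ s * 1 :=
          mul_le_mul_of_nonneg_left (h1.trans h2) hs_pos.le
        rw [mul_one] at h3
        exact h3.trans hs_le1
    refine ⟨B, y, ?_, ?_, ?_, ?_, ?_⟩
    · rintro x ⟨f, rfl⟩
      rw [mem_closedBall_zero_iff]
      exact (hgnorm f).trans hs_le1
    · rw [mem_closedBall_zero_iff, hynorm]
      exact hy_le.trans hs_le1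
    · rw [hynorm]
      calc (1 - ε : ℝ) ≤ 1 - ε/2 := by linarith
        _ ≤ s := hs_ge
        _ ≤ ‖yval‖ := hy_ge
    · rintro x ⟨f, rfl⟩
      constructor
      · rw [mem_closedBall_zero_iff]
        have hcoe : ((s • g f + y : E) : lp Xf ∞) = s • (g f : lp Xf ∞) + yval := rfl
        rw [show ‖(s • g f + y : E)‖ = ‖((s • g f + y : E) : lp Xf ∞)‖ from rfl, hcoe]
        exact main f yval s (abs_of_pos hs_pos) hyval_ne hyval_n
      · rw [mem_closedBall_zero_iff]
        have hcoe : ((s • g f - y : E) : lp Xf ∞) = s • (g f : lp Xf ∞) + (-yval) := by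
          rw [← sub_eq_add_neg]; rfl
        rw [show ‖(s • g f - y : E)‖ = ‖((s • g f - y : E) : lp Xf ∞)‖ from rfl, hcoe]
        refine main f (-yval) (-s) (by rw [abs_neg, abs_of_pos hs_pos]) ?_ ?_
        · intro m hm
          have : (⇑(-yval) : ∀ m, Xf m) m = -(yval m) := by
            simp only [lp.coeFn_neg, Pi.neg_apply]
          rw [this, hyval_ne m hm, neg_zero]
        · have : (⇑(-yval) : ∀ m, Xf m) n = -(yval n) := by
            simp only [lp.coeFn_neg, Pi.neg_apply]
          rw [this, hyval_n, hwdef, ← lp.single_neg]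
    · intro f hf
      refine ⟨s • g ⟨f, hf⟩, ⟨⟨f, hf⟩, rfl⟩, ?_⟩
      have : f (s • g ⟨f, hf⟩) = s * f (g ⟨f, hf⟩) := by
        rw [map_smul]; rfl
      rw [this]
      have h2 := hg2 ⟨f, hf⟩
      have h3 : s * (1 - ε/2) ≤ s * f (g ⟨f, hf⟩) :=
        mul_le_mul_of_nonneg_left h2.le hs_pos.le
      nlinarith [hs_ge, hε2]
end
end

section
/- Let X and Y be real Banach spaces and κ > ℵ₀. If both X and Y have the κ-SSD2P, then the projective tensor product X ⊗̂_π Y has the κ-SSD2P. -/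
open Cardinal Metric Filter Topology NormedSpace
open scoped ENNReal
universe u
noncomputable section

/-- `φ : X →L Y →L Z` exhibits the Banach space `Z` as the completed projective tensor
product `X ⊗̂_π Y`: the span of the elementary tensors `φ x y` is dense in `Z` and
`g ↦ g ∘ φ` is an isometric bijection from `Z*` onto the bounded bilinear forms on
`X × Y` (this pins down the projective norm). -/
def IsProjTensorProduct {X Y Z : Type u} [NormedAddCommGroup X] [NormedSpace ℝ X]
    [NormedAddCommGroup Y] [NormedSpace ℝ Y] [NormedAddCommGroup Z] [NormedSpace ℝ Z]
    (φ : X →L[ℝ] Y →L[ℝ] Z) : Prop :=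
  Dense ((Submodule.span ℝ {z : Z | ∃ x y, φ x y = z} : Submodule ℝ Z) : Set Z) ∧
  (∀ g : Z →L[ℝ] ℝ, ‖(ContinuousLinearMap.compL ℝ Y Z ℝ g).comp φ‖ = ‖g‖) ∧
  (∀ b : X →L[ℝ] Y →L[ℝ] ℝ, ∃ g : Z →L[ℝ] ℝ, (ContinuousLinearMap.compL ℝ Y Z ℝ g).comp φ = b)

section Aux
variable {X Y Z : Type u} [NormedAddCommGroup X] [NormedSpace ℝ X]
    [NormedAddCommGroup Y] [NormedSpace ℝ Y] [NormedAddCommGroup Z] [NormedSpace ℝ Z]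

lemma aux_le (φ : X →L[ℝ] Y →L[ℝ] Z)
    (hiso : ∀ g : Z →L[ℝ] ℝ, ‖(ContinuousLinearMap.compL ℝ Y Z ℝ g).comp φ‖ = ‖g‖)
    (u : X) (v : Y) : ‖φ u v‖ ≤ ‖u‖ * ‖v‖ := by
  apply norm_le_dual_bound ℝ _ (by positivity)
  intro g
  have h1 : g (φ u v) = ((ContinuousLinearMap.compL ℝ Y Z ℝ g).comp φ) u v := by simp
  have h2 : ‖((ContinuousLinearMap.compL ℝ Y Z ℝ g).comp φ) u v‖ ≤
      ‖(ContinuousLinearMap.compL ℝ Y Z ℝ g).comp φ‖ * ‖u‖ * ‖v‖ :=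
    ContinuousLinearMap.le_opNorm₂ _ u v
  rw [hiso] at h2
  rw [h1]
  calc ‖((ContinuousLinearMap.compL ℝ Y Z ℝ g).comp φ) u v‖ ≤ ‖g‖ * ‖u‖ * ‖v‖ := h2
    _ = ‖u‖ * ‖v‖ * ‖g‖ := by ring

lemma aux_ge [CompleteSpace X] [CompleteSpace Y] (φ : X →L[ℝ] Y →L[ℝ] Z)
    (hiso : ∀ g : Z →L[ℝ] ℝ, ‖(ContinuousLinearMap.compL ℝ Y Z ℝ g).comp φ‖ = ‖g‖)
    (hsurj : ∀ b : X →L[ℝ] Y →L[ℝ] ℝ, ∃ g : Z →L[ℝ] ℝ,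
      (ContinuousLinearMap.compL ℝ Y Z ℝ g).comp φ = b)
    (u : X) (v : Y) : ‖u‖ * ‖v‖ ≤ ‖φ u v‖ := by
  rcases eq_or_ne u 0 with rfl | hu
  · simp
  rcases eq_or_ne v 0 with rfl | hv
  · simp
  obtain ⟨f, hf1, hfu⟩ := exists_dual_vector ℝ u (norm_ne_zero_iff.mpr hu)
  obtain ⟨h, hh1, hhv⟩ := exists_dual_vector ℝ v (norm_ne_zero_iff.mpr hv)
  obtain ⟨g, hg⟩ := hsurj (f.smulRight h)
  have hgn : ‖g‖ = 1 := by
    rw [← hiso g, hg, ContinuousLinearMap.norm_smulRight_apply, hf1, hh1, one_mul]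
  have happ : g (φ u v) = ‖u‖ * ‖v‖ := by
    have h0 : ((ContinuousLinearMap.compL ℝ Y Z ℝ g).comp φ) u v = (f.smulRight h) u v := by
      rw [hg]
    simpa [hfu, hhv] using h0
  rw [← happ]
  calc g (φ u v) ≤ ‖g (φ u v)‖ := le_abs_self _
    _ ≤ ‖g‖ * ‖φ u v‖ := g.le_opNorm _
    _ = ‖φ u v‖ := by rw [hgn, one_mul]

end Aux

set_option maxHeartbeats 1000000 in
/-- If `X` and `Y` have the `κ`-SSD2P (`κ > ℵ₀`), then the completed projective tensor
product `X ⊗̂_π Y` has the `κ`-SSD2P. -/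
theorem projTensor_SSD2P {X Y Z : Type u} [NormedAddCommGroup X] [NormedSpace ℝ X]
    [CompleteSpace X] [NormedAddCommGroup Y] [NormedSpace ℝ Y] [CompleteSpace Y]
    [NormedAddCommGroup Z] [NormedSpace ℝ Z] [CompleteSpace Z]
    (φ : X →L[ℝ] Y →L[ℝ] Z) (hφ : IsProjTensorProduct φ)
    (κ : Cardinal.{u}) (hκ : ℵ₀ < κ) (hX : SSD2P κ X) (hY : SSD2P κ Y) :
    SSD2P κ Z := by
  obtain ⟨-, hiso, hsurj⟩ := hφ
  intro A hA1 hAκ ε hε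
  set δ : ℝ := min (ε/3) (1/2) with hδdef
  have hδ0 : 0 < δ := lt_min (by linarith) (by norm_num)
  have hδ2 : δ ≤ 1/2 := min_le_right _ _
  have hδε : 3*δ ≤ ε := by
    have := min_le_left (ε/3) (1/2); linarith
  set b : A → (X →L[ℝ] Y →L[ℝ] ℝ) :=
    fun g => (ContinuousLinearMap.compL ℝ Y Z ℝ (g : Z →L[ℝ] ℝ)).comp φ with hbdef
  have hbn : ∀ g : A, ‖b g‖ = 1 := fun g => by rw [hbdef]; exact (hiso g).trans (hA1 g g.2)
  have key : ∀ g : A, ∃ u : X, ∃ v : Y, ‖u‖ ≤ 1 ∧ ‖v‖ ≤ 1 ∧ 1 - δ < b g u v := by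
    intro g
    have h1 : (1 - δ : ℝ) < ‖b g‖ := by rw [hbn g]; linarith
    obtain ⟨u, hu, hbu⟩ := (b g).exists_lt_apply_of_lt_opNorm h1
    obtain ⟨v, hv, hbv⟩ := (b g u).exists_lt_apply_of_lt_opNorm hbu
    rcases le_or_gt 0 (b g u v) with hpos | hneg
    · exact ⟨u, v, hu.le, hv.le, by rwa [Real.norm_eq_abs, abs_of_nonneg hpos] at hbv⟩
    · refine ⟨-u, v, by simpa using hu.le, hv.le, ?_⟩
      rw [Real.norm_eq_abs, abs_of_neg hneg] at hbv
      simpa using hbv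
  choose uu vv huu hvv hval using key
  -- step 1 : X side
  set f : A → (X →L[ℝ] ℝ) := fun g => (b g).flip (vv g) with hfdef
  have hfapp : ∀ g : A, ∀ w : X, f g w = b g w (vv g) := fun g w => rfl
  have hfub : ∀ g : A, ‖f g‖ ≤ 1 := by
    intro g
    calc ‖(b g).flip (vv g)‖ ≤ ‖(b g).flip‖ * ‖vv g‖ := (b g).flip.le_opNorm _
      _ ≤ 1 * 1 := by
          rw [(b g).opNorm_flip, hbn g]
          exact mul_le_mul le_rfl (hvv g) (norm_nonneg _) zero_le_one
      _ = 1 := one_mul 1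
  have hflb : ∀ g : A, 1 - δ < ‖f g‖ := by
    intro g
    calc (1 - δ : ℝ) < b g (uu g) (vv g) := hval g
      _ ≤ ‖f g (uu g)‖ := by rw [hfapp]; exact le_abs_self _
      _ ≤ ‖f g‖ * ‖uu g‖ := (f g).le_opNorm _
      _ ≤ ‖f g‖ * 1 := mul_le_mul le_rfl (huu g) (norm_nonneg _) (norm_nonneg _)
      _ = ‖f g‖ := mul_one _
  have hfpos : ∀ g : A, 0 < ‖f g‖ := fun g => lt_of_lt_of_le (by linarith [hflb g]) (hflb g).le
  set F : A → (X →L[ℝ] ℝ) := fun g => ‖f g‖⁻¹ • f g with hFdef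
  have hF1 : ∀ g : A, ‖F g‖ = 1 := by
    intro g
    simp only [hFdef]
    rw [norm_smul (β := X →L[ℝ] ℝ) (‖f g‖⁻¹) (f g), norm_inv, norm_norm]
    exact inv_mul_cancel₀ (hfpos g).ne'
  obtain ⟨B1, x, hB1sub, hx1, hxn, hB1pm, hB1norm⟩ :=
    hX (Set.range F) (by rintro _ ⟨g, rfl⟩; exact hF1 g)
      (lt_of_le_of_lt Cardinal.mk_range_le hAκ) δ hδ0
  have haux : ∀ g : A, ∃ a ∈ B1, 1 - δ ≤ F g a := fun g => hB1norm (F g) ⟨g, rfl⟩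
  choose aa haaB haF using haux
  have haan : ∀ g : A, ‖aa g‖ ≤ 1 := fun g => mem_closedBall_zero_iff.mp (hB1sub (haaB g))
  have hfa : ∀ g : A, (1 - δ) ^ 2 ≤ f g (aa g) := by
    intro g
    have h1 : (1 - δ) * ‖f g‖ ≤ f g (aa g) := by
      have h2 : 1 - δ ≤ ‖f g‖⁻¹ * f g (aa g) := by
        have h3 : 1 - δ ≤ (‖f g‖⁻¹ • f g) (aa g) := haF g
        rwa [ContinuousLinearMap.smul_apply, smul_eq_mul] at h3
      calc (1 - δ) * ‖f g‖ ≤ (‖f g‖⁻¹ * f g (aa g)) * ‖f g‖ :=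
            mul_le_mul_of_nonneg_right h2 (norm_nonneg _)
        _ = f g (aa g) := by
            rw [mul_comm, ← mul_assoc, mul_inv_cancel₀ (hfpos g).ne', one_mul]
    calc (1 - δ) ^ 2 ≤ (1 - δ) * ‖f g‖ := by
          rw [sq]; exact mul_le_mul_of_nonneg_left (hflb g).le (by linarith)
      _ ≤ f g (aa g) := h1
  -- step 2 : Y side
  set h : A → (Y →L[ℝ] ℝ) := fun g => b g (aa g) with hhdef
  have hhub : ∀ g : A, ‖h g‖ ≤ 1 := by
    intro g
    calc ‖b g (aa g)‖ ≤ ‖b g‖ * ‖aa g‖ := (b g).le_opNorm _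
      _ ≤ 1 * 1 := by rw [hbn g]; exact mul_le_mul le_rfl (haan g) (norm_nonneg _) zero_le_one
      _ = 1 := one_mul 1
  have hhlb : ∀ g : A, (1 - δ) ^ 2 ≤ ‖h g‖ := by
    intro g
    calc ((1 - δ) ^ 2 : ℝ) ≤ f g (aa g) := hfa g
      _ ≤ ‖h g (vv g)‖ := by rw [hfapp]; exact le_abs_self _
      _ ≤ ‖h g‖ * ‖vv g‖ := (h g).le_opNorm _
      _ ≤ ‖h g‖ * 1 := mul_le_mul le_rfl (hvv g) (norm_nonneg _) (norm_nonneg _)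
      _ = ‖h g‖ := mul_one _
  have hhpos : ∀ g : A, 0 < ‖h g‖ := by
    intro g
    have : (0:ℝ) < (1 - δ)^2 := by nlinarith
    exact lt_of_lt_of_le this (hhlb g)
  set H : A → (Y →L[ℝ] ℝ) := fun g => ‖h g‖⁻¹ • h g with hHdef
  have hH1 : ∀ g : A, ‖H g‖ = 1 := by
    intro g
    simp only [hHdef]
    rw [norm_smul (β := Y →L[ℝ] ℝ) (‖h g‖⁻¹) (h g), norm_inv, norm_norm]
    exact inv_mul_cancel₀ (hhpos g).ne'
  obtain ⟨B2, y, hB2sub, hy1, hyn, hB2pm, hB2norm⟩ :=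
    hY (Set.range H) (by rintro _ ⟨g, rfl⟩; exact hH1 g)
      (lt_of_le_of_lt Cardinal.mk_range_le hAκ) δ hδ0
  have haux2 : ∀ g : A, ∃ c ∈ B2, 1 - δ ≤ H g c := fun g => hB2norm (H g) ⟨g, rfl⟩
  choose cc hccB hcH using haux2
  have hccn : ∀ g : A, ‖cc g‖ ≤ 1 := fun g => mem_closedBall_zero_iff.mp (hB2sub (hccB g))
  have hhc : ∀ g : A, 1 - ε ≤ h g (cc g) := by
    intro g
    have h1 : (1 - δ) * ‖h g‖ ≤ h g (cc g) := by
      have h2 : 1 - δ ≤ ‖h g‖⁻¹ * h g (cc g) := by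
        have h3 : 1 - δ ≤ (‖h g‖⁻¹ • h g) (cc g) := hcH g
        rwa [ContinuousLinearMap.smul_apply, smul_eq_mul] at h3
      calc (1 - δ) * ‖h g‖ ≤ (‖h g‖⁻¹ * h g (cc g)) * ‖h g‖ :=
            mul_le_mul_of_nonneg_right h2 (norm_nonneg _)
        _ = h g (cc g) := by
            rw [mul_comm, ← mul_assoc, mul_inv_cancel₀ (hhpos g).ne', one_mul]
    have h3 : (1 - δ) ^ 3 ≤ h g (cc g) := by
      calc (1 - δ) ^ 3 = (1 - δ) * (1 - δ)^2 := by ring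
        _ ≤ (1 - δ) * ‖h g‖ := mul_le_mul_of_nonneg_left (hhlb g) (by linarith)
        _ ≤ h g (cc g) := h1
    nlinarith [h3, hδ0, hδε, hδ2, sq_nonneg δ, sq_nonneg (1-δ)]
  -- conclude
  have hxnorm : ‖x‖ ≤ 1 := mem_closedBall_zero_iff.mp hx1
  have hynorm : ‖y‖ ≤ 1 := mem_closedBall_zero_iff.mp hy1
  refine ⟨Set.range (fun g : A => φ (aa g) (cc g)), φ x y, ?_, ?_, ?_, ?_, ?_⟩
  · rintro _ ⟨g, rfl⟩
    rw [mem_closedBall_zero_iff]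
    calc ‖φ (aa g) (cc g)‖ ≤ ‖aa g‖ * ‖cc g‖ := aux_le φ hiso _ _
      _ ≤ 1 * 1 := mul_le_mul (haan g) (hccn g) (norm_nonneg _) zero_le_one
      _ = 1 := one_mul 1
  · rw [mem_closedBall_zero_iff]
    calc ‖φ x y‖ ≤ ‖x‖ * ‖y‖ := aux_le φ hiso _ _
      _ ≤ 1 * 1 := mul_le_mul hxnorm hynorm (norm_nonneg _) zero_le_one
      _ = 1 := one_mul 1
  · have := aux_ge φ hiso hsurj x y
    nlinarith [hxn, hyn, hδ0, hδε, hδ2]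
  · rintro _ ⟨g, rfl⟩
    obtain ⟨hax1, hax2⟩ := hB1pm (aa g) (haaB g)
    obtain ⟨hcy1, hcy2⟩ := hB2pm (cc g) (hccB g)
    rw [mem_closedBall_zero_iff] at hax1 hax2 hcy1 hcy2 ⊢
    rw [mem_closedBall_zero_iff]
    constructor
    · have hid : (2:ℝ) • (φ (aa g) (cc g) + φ x y)
          = φ (aa g + x) (cc g + y) + φ (aa g - x) (cc g - y) := by
        simp only [map_add, map_sub, ContinuousLinearMap.add_apply,
          ContinuousLinearMap.sub_apply, two_smul]
        abel
      have hn : (2:ℝ) * ‖φ (aa g) (cc g) + φ x y‖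
          = ‖φ (aa g + x) (cc g + y) + φ (aa g - x) (cc g - y)‖ := by
        rw [← hid, norm_smul]; norm_num
      have hb1 : ‖φ (aa g + x) (cc g + y)‖ ≤ 1 := by
        calc ‖φ (aa g + x) (cc g + y)‖ ≤ ‖aa g + x‖ * ‖cc g + y‖ := aux_le φ hiso _ _
          _ ≤ 1 * 1 := mul_le_mul hax1 hcy1 (norm_nonneg _) zero_le_one
          _ = 1 := one_mul 1
      have hb2 : ‖φ (aa g - x) (cc g - y)‖ ≤ 1 := by
        calc ‖φ (aa g - x) (cc g - y)‖ ≤ ‖aa g - x‖ * ‖cc g - y‖ := aux_le φ hiso _ _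
          _ ≤ 1 * 1 := mul_le_mul hax2 hcy2 (norm_nonneg _) zero_le_one
          _ = 1 := one_mul 1
      have := norm_add_le (φ (aa g + x) (cc g + y)) (φ (aa g - x) (cc g - y))
      linarith [hn ▸ this]
    · have hid : (2:ℝ) • (φ (aa g) (cc g) - φ x y)
          = φ (aa g + x) (cc g - y) + φ (aa g - x) (cc g + y) := by
        simp only [map_add, map_sub, ContinuousLinearMap.add_apply,
          ContinuousLinearMap.sub_apply, two_smul]
        abel
      have hn : (2:ℝ) * ‖φ (aa g) (cc g) - φ x y‖
          = ‖φ (aa g + x) (cc g - y) + φ (aa g - x) (cc g + y)‖ := by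
        rw [← hid, norm_smul]; norm_num
      have hb1 : ‖φ (aa g + x) (cc g - y)‖ ≤ 1 := by
        calc ‖φ (aa g + x) (cc g - y)‖ ≤ ‖aa g + x‖ * ‖cc g - y‖ := aux_le φ hiso _ _
          _ ≤ 1 * 1 := mul_le_mul hax1 hcy2 (norm_nonneg _) zero_le_one
          _ = 1 := one_mul 1
      have hb2 : ‖φ (aa g - x) (cc g + y)‖ ≤ 1 := by
        calc ‖φ (aa g - x) (cc g + y)‖ ≤ ‖aa g - x‖ * ‖cc g + y‖ := aux_le φ hiso _ _
          _ ≤ 1 * 1 := mul_le_mul hax2 hcy1 (norm_nonneg _) zero_le_one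
          _ = 1 := one_mul 1
      have := norm_add_le (φ (aa g + x) (cc g - y)) (φ (aa g - x) (cc g + y))
      linarith [hn ▸ this]
  · intro g hg
    refine ⟨φ (aa ⟨g, hg⟩) (cc ⟨g, hg⟩), ⟨⟨g, hg⟩, rfl⟩, ?_⟩
    have : g (φ (aa ⟨g, hg⟩) (cc ⟨g, hg⟩)) = h ⟨g, hg⟩ (cc ⟨g, hg⟩) := by
      rw [hhdef, hbdef]; simp
    rw [this]
    exact hhc ⟨g, hg⟩
end
end

section
/- Let (Xₙ) be a sequence of real Banach spaces. Suppose that for every sequence (Uₙ) of non-empty relatively weakly open subsets of the unit ball of Z := c₀(ℕ, Xₙ) and every ε > 0 there exist (xₙ) and y in B_Z with ‖y‖ ≥ 1 − ε, xₙ ± y ∈ B_Z and xₙ ∈ Uₙ for all n. Then there exists m ∈ ℕ such that X_m is not uniformly convex. -/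
open Cardinal Metric Filter Topology NormedSpace
open scoped ENNReal
universe u
noncomputable section

/-- Evaluation at a coordinate, as a continuous linear map on `lp X ∞`. -/
def lpCoordCLM (X : ℕ → Type u) [∀ n, NormedAddCommGroup (X n)] [∀ n, NormedSpace ℝ (X n)]
    (n : ℕ) : lp X ∞ →L[ℝ] X n :=
  LinearMap.mkContinuous
    { toFun := fun f => f n
      map_add' := fun _ _ => rfl
      map_smul' := fun _ _ => rfl }
    1 (fun f => by
      rw [one_mul]; exact lp.norm_apply_le_norm (by norm_num : (∞ : ℝ≥0∞) ≠ 0) f n)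

/-- If in `Z = c₀(ℕ, Xₙ)` one can, for every sequence of non-empty relatively weakly open
subsets of `B_Z`, find points `xₙ ∈ Uₙ` and `y` with `‖y‖ ≥ 1 - ε` and `xₙ ± y ∈ B_Z`,
then some component `X_m` is not uniformly convex. -/
theorem not_uniformConvex_of_c0Sum_weakOpen (X : ℕ → Type u)
    [∀ n, NormedAddCommGroup (X n)] [∀ n, NormedSpace ℝ (X n)] [∀ n, CompleteSpace (X n)]
    (h : ∀ U : ℕ → Set (c0Sum X),
      (∀ n, (U n).Nonempty ∧ ∃ W : Set (WeakSpace ℝ (c0Sum X)), IsOpen W ∧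
        U n = (show Set (c0Sum X) from W) ∩ closedBall 0 1) →
      ∀ ε : ℝ, 0 < ε →
        ∃ (x : ℕ → c0Sum X) (y : c0Sum X), y ∈ closedBall (0 : c0Sum X) 1 ∧ 1 - ε ≤ ‖y‖ ∧
          ∀ n, x n ∈ U n ∧ x n + y ∈ closedBall (0 : c0Sum X) 1 ∧
            x n - y ∈ closedBall (0 : c0Sum X) 1) :
    ∃ m : ℕ, ¬ UniformConvexSpace (X m) := by
  by_contra hc
  push_neg at hc
  -- For each coordinate, a modulus of convexity and a norming slice functional.
  have key : ∀ n : ℕ, ∃ (δ : ℝ) (f : X n →L[ℝ] ℝ) (z : c0Sum X),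
      0 < δ ∧
      (∀ ⦃a : X n⦄, ‖a‖ ≤ 1 → ∀ ⦃b : X n⦄, ‖b‖ ≤ 1 → 1/2 ≤ ‖a - b‖ → ‖a + b‖ ≤ 2 - δ) ∧
      (∀ v : X n, f v ≤ ‖v‖) ∧ ‖z‖ ≤ 1 ∧ 1 - δ/2 < f ((z : lp X ∞) n) := by
    intro n
    by_cases hn : ∃ u : X n, u ≠ 0
    · obtain ⟨u, hu⟩ := hn
      have hu' : ‖u‖ ≠ 0 := norm_ne_zero_iff.mpr hu
      set u' : X n := ‖u‖⁻¹ • u with hu'def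
      have hnu' : ‖u'‖ = 1 := by
        rw [hu'def, norm_smul, norm_inv, norm_norm, inv_mul_cancel₀ hu']
      have hu'0 : u' ≠ 0 := by
        intro h0; rw [h0, norm_zero] at hnu'; norm_num at hnu'
      obtain ⟨f, hf1, hfu⟩ := exists_dual_vector ℝ u' (norm_ne_zero_iff.mpr hu'0)
      haveI := hc n
      obtain ⟨δ, hδ, hP⟩ :=
        exists_forall_closed_ball_dist_add_le_two_sub (X n) (by norm_num : (0:ℝ) < 1/2)
      have hzmem : (lp.single ∞ n u' : lp X ∞) ∈ c0Set X := by
        have hev : ∀ᶠ k in atTop, ‖(lp.single ∞ n u' : lp X ∞) k‖ = 0 := by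
          filter_upwards [eventually_gt_atTop n] with k hk
          rw [lp.single_apply_ne _ _ _ (by omega : k ≠ n), norm_zero]
        exact tendsto_const_nhds.congr' (by filter_upwards [hev] with k hk; rw [hk])
      refine ⟨δ, f, ⟨lp.single ∞ n u', hzmem⟩, hδ, hP, ?_, ?_, ?_⟩
      · intro v
        calc f v ≤ |f v| := le_abs_self _
        _ = ‖f v‖ := rfl
        _ ≤ ‖f‖ * ‖v‖ := f.le_opNorm v
        _ = ‖v‖ := by rw [hf1, one_mul]
      · rw [Submodule.coe_norm]
        refine lp.norm_le_of_forall_le zero_le_one (fun k => ?_)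
        by_cases hk : k = n
        · subst hk; rw [lp.single_apply_self, hnu']
        · rw [lp.single_apply_ne _ _ _ hk, norm_zero]; exact zero_le_one
      · show 1 - δ/2 < f ((lp.single ∞ n u' : lp X ∞) n)
        rw [lp.single_apply_self, hfu, hnu', RCLike.ofReal_one]
        linarith
    · push_neg at hn
      refine ⟨4, 0, 0, by norm_num, ?_, ?_, by simp, ?_⟩
      · intro a _ b _ hab
        rw [hn a, hn b, sub_zero, norm_zero] at hab
        norm_num at hab
      · intro v; simp
      · have : ((0 : c0Sum X) : lp X ∞) = 0 := rfl
        rw [this]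
        simp only [ContinuousLinearMap.zero_apply]
        norm_num
  choose δ f z hδ hP hfle hz1 hslice using key
  set G : ∀ n : ℕ, c0Sum X →L[ℝ] ℝ :=
    fun n => (f n).comp ((lpCoordCLM X n).comp (c0Set X).subtypeL) with hG
  set U : ℕ → Set (c0Sum X) := fun n =>
    (show Set (c0Sum X) from
      (fun w : WeakSpace ℝ (c0Sum X) => G n w) ⁻¹' Set.Ioi (1 - δ n / 2))
      ∩ closedBall 0 1 with hUdef
  have hU : ∀ n, (U n).Nonempty ∧ ∃ W : Set (WeakSpace ℝ (c0Sum X)), IsOpen W ∧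
      U n = (show Set (c0Sum X) from W) ∩ closedBall 0 1 := by
    intro n
    constructor
    · exact ⟨z n, ⟨hslice n, mem_closedBall_zero_iff.mpr (hz1 n)⟩⟩
    · refine ⟨(fun w : WeakSpace ℝ (c0Sum X) => G n w) ⁻¹' Set.Ioi (1 - δ n / 2), ?_, rfl⟩
      exact isOpen_Ioi.preimage
        (WeakBilin.eval_continuous (topDualPairing ℝ (c0Sum X)).flip (G n))
  obtain ⟨x, y, hy, hynorm, hx⟩ := h U hU (1/2) (by norm_num)
  have hyn : ∀ n, ‖(y : lp X ∞) n‖ ≤ 1/4 := by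
    intro n
    obtain ⟨hxU, hxp, hxm⟩ := hx n
    have hGx : 1 - δ n / 2 < f n ((x n : lp X ∞) n) := hxU.1
    set xc : X n := (x n : lp X ∞) n with hxc
    set yc : X n := (y : lp X ∞) n with hyc
    have ha : ‖xc + yc‖ ≤ 1 := by
      have h1 : ‖(x n + y : c0Sum X)‖ ≤ 1 := mem_closedBall_zero_iff.mp hxp
      have h2 : ‖((x n + y : c0Sum X) : lp X ∞) n‖ ≤ ‖((x n + y : c0Sum X) : lp X ∞)‖ :=
        lp.norm_apply_le_norm (by norm_num : (∞ : ℝ≥0∞) ≠ 0) _ n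
      rw [Submodule.coe_norm] at h1
      exact le_trans h2 h1
    have hb : ‖xc - yc‖ ≤ 1 := by
      have h1 : ‖(x n - y : c0Sum X)‖ ≤ 1 := mem_closedBall_zero_iff.mp hxm
      have h2 : ‖((x n - y : c0Sum X) : lp X ∞) n‖ ≤ ‖((x n - y : c0Sum X) : lp X ∞)‖ :=
        lp.norm_apply_le_norm (by norm_num : (∞ : ℝ≥0∞) ≠ 0) _ n
      rw [Submodule.coe_norm] at h1
      exact le_trans h2 h1
    have hsum : ‖(xc + yc) + (xc - yc)‖ = 2 * ‖xc‖ := by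
      have : (xc + yc) + (xc - yc) = (2 : ℝ) • xc := by
        rw [two_smul]; abel
      rw [this, norm_smul]
      norm_num
    have hbig : 2 - δ n < ‖(xc + yc) + (xc - yc)‖ := by
      have := hfle n xc
      rw [hsum]
      linarith
    have hsmall : ¬ (1/2 ≤ ‖(xc + yc) - (xc - yc)‖) := by
      intro hge
      have := hP n ha hb hge
      linarith
    push_neg at hsmall
    have hdiff : ‖(xc + yc) - (xc - yc)‖ = 2 * ‖yc‖ := by
      have : (xc + yc) - (xc - yc) = (2 : ℝ) • yc := by
        rw [two_smul]; abel
      rw [this, norm_smul]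
      norm_num
    rw [hdiff] at hsmall
    linarith
  have hy4 : ‖y‖ ≤ 1/4 := by
    rw [Submodule.coe_norm]
    exact lp.norm_le_of_forall_le (by norm_num) hyn
  linarith
end
end

section
/- Let κ be an infinite cardinal. For every x in the unit sphere of ℓ∞(κ) there exist a net (y^x_μ) in B_{ℓ∞(κ)} indexed by ordinals μ < κ and a net (z_μ) in S_{ℓ∞(κ)} such that y^x_μ ± z_μ ∈ S_{ℓ∞(κ)} for all μ, z_μ → 0 weakly, and y^x_μ → x weakly. Explicitly, y^x_μ := x − x(μ)e_μ and z_μ := δ_μ satisfy these properties. -/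
open Cardinal Metric Filter Topology NormedSpace
open scoped ENNReal
universe u
noncomputable section

set_option maxHeartbeats 1000000 in
/-- In `ℓ∞(κ)`: for every `x` on the unit sphere, the nets `y_μ := x - x(μ)•e_μ` and
`z_μ := δ_μ` satisfy `y_μ ± z_μ ∈ S`, `z_μ → 0` weakly and `y_μ → x` weakly. -/
theorem linf_kappa_nets {ι : Type u} [DecidableEq ι] (κ : Cardinal.{u}) (hκ : ℵ₀ ≤ κ)
    (hι : #ι = κ) (x : lp (fun _ : ι => ℝ) ∞)
    (hx : x ∈ sphere (0 : lp (fun _ : ι => ℝ) ∞) 1)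
    (y z : ι → lp (fun _ : ι => ℝ) ∞)
    (hy : y = fun μ => x - x μ • lp.single ∞ μ (1 : ℝ))
    (hz : z = fun μ => lp.single ∞ μ (1 : ℝ)) :
    (∀ μ : ι, y μ ∈ closedBall (0 : lp (fun _ : ι => ℝ) ∞) 1 ∧
      z μ ∈ sphere (0 : lp (fun _ : ι => ℝ) ∞) 1 ∧
      y μ + z μ ∈ sphere (0 : lp (fun _ : ι => ℝ) ∞) 1 ∧
      y μ - z μ ∈ sphere (0 : lp (fun _ : ι => ℝ) ∞) 1) ∧
    (∀ φ : StrongDual ℝ (lp (fun _ : ι => ℝ) ∞),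
      Tendsto (fun μ => φ (z μ)) cofinite (𝓝 0) ∧
      Tendsto (fun μ => φ (y μ)) cofinite (𝓝 (φ x))) := by
  have hx1 : ‖x‖ = 1 := mem_sphere_zero_iff_norm.mp hx
  have hxc : ∀ i, ‖x i‖ ≤ 1 := fun i =>
    hx1 ▸ lp.norm_apply_le_norm ENNReal.top_ne_zero x i
  subst hy hz
  -- helper for norms
  have key : ∀ (f : lp (fun _ : ι => ℝ) ∞) (μ : ι), (∀ i, ‖f i‖ ≤ 1) → ‖f μ‖ = 1 → ‖f‖ = 1 := by
    intro f μ h1 h2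
    refine le_antisymm (lp.norm_le_of_forall_le zero_le_one h1) ?_
    calc (1:ℝ) = ‖f μ‖ := h2.symm
      _ ≤ ‖f‖ := lp.norm_apply_le_norm ENNReal.top_ne_zero f μ
  have coordy : ∀ μ i, ((x - x μ • lp.single ∞ μ (1:ℝ) : lp (fun _ : ι => ℝ) ∞) : ι → ℝ) i =
      if i = μ then 0 else x i := by
    intro μ i
    rw [lp.coeFn_sub, Pi.sub_apply, lp.coeFn_smul, Pi.smul_apply]
    by_cases h : i = μ
    · subst h; rw [lp.single_apply_self]; simp
    · rw [lp.single_apply_ne _ _ _ h]; simp [h]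
  have coordz : ∀ μ i, (lp.single ∞ μ (1:ℝ) : lp (fun _ : ι => ℝ) ∞) i =
      if i = μ then 1 else 0 := by
    intro μ i
    by_cases h : i = μ
    · subst h; rw [lp.single_apply_self]; simp
    · rw [lp.single_apply_ne _ _ _ h]; simp [h]
  constructor
  · intro μ
    refine ⟨?_, ?_, ?_, ?_⟩
    · rw [mem_closedBall, dist_zero_right]
      refine lp.norm_le_of_forall_le zero_le_one fun i => ?_
      rw [coordy μ i]
      split
      · simp
      · exact hxc i
    · rw [mem_sphere, dist_zero_right]
      refine key _ μ (fun i => ?_) ?_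
      · rw [coordz μ i]; split <;> simp
      · rw [coordz μ μ]; simp
    · rw [mem_sphere, dist_zero_right]
      refine key _ μ (fun i => ?_) ?_
      · rw [lp.coeFn_add, Pi.add_apply, coordy μ i, coordz μ i]
        by_cases h : i = μ
        · simp [h]
        · simp only [h, if_false, add_zero]; exact hxc i
      · rw [lp.coeFn_add, Pi.add_apply, coordy μ μ, coordz μ μ]; simp
    · rw [mem_sphere, dist_zero_right]
      refine key _ μ (fun i => ?_) ?_
      · rw [lp.coeFn_sub, Pi.sub_apply, coordy μ i, coordz μ i]
        by_cases h : i = μ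
        · simp [h]
        · simp only [h, if_false, sub_zero]; exact hxc i
      · rw [lp.coeFn_sub, Pi.sub_apply, coordy μ μ, coordz μ μ]; simp
  · intro φ
    set f : ι → ℝ := fun μ => φ (lp.single ∞ μ (1:ℝ)) with hf
    have habs : Summable fun μ => |f μ| := by
      refine summable_of_sum_le (fun μ => abs_nonneg _) (fun s => ?_) (c := ‖φ‖)
      set c : ι → ℝ := fun μ => if 0 ≤ f μ then (1:ℝ) else -1 with hc
      have hcf : ∀ μ, c μ * f μ = |f μ| := by
        intro μ
        by_cases h : 0 ≤ f μ
        · simp [hc, h, abs_of_nonneg h]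
        · simp [hc, h, abs_of_neg (lt_of_not_ge h)]
      set g : lp (fun _ : ι => ℝ) ∞ := ∑ μ ∈ s, c μ • lp.single ∞ μ (1:ℝ) with hg
      have hgi : ∀ i, (g : ι → ℝ) i = if i ∈ s then c i else 0 := by
        intro i
        rw [hg, lp.coeFn_sum, Finset.sum_apply]
        have : ∀ μ ∈ s, (c μ • lp.single ∞ μ (1:ℝ) : lp (fun _ : ι => ℝ) ∞) i
            = if μ = i then c i else 0 := by
          intro μ _
          rw [lp.coeFn_smul, Pi.smul_apply, coordz μ i]
          by_cases h : μ = i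
          · simp [h]
          · simp [h, Ne.symm h]
        rw [Finset.sum_congr rfl this, Finset.sum_ite_eq']
      have hgn : ‖g‖ ≤ 1 := by
        refine lp.norm_le_of_forall_le zero_le_one fun i => ?_
        rw [hgi i]
        by_cases h : i ∈ s <;> by_cases h2 : 0 ≤ f i <;> simp [h, h2, hc]
      have hφg : φ g = ∑ μ ∈ s, |f μ| := by
        rw [hg, map_sum]
        refine Finset.sum_congr rfl fun μ _ => ?_
        rw [map_smul, smul_eq_mul, hcf μ]
      calc ∑ μ ∈ s, |f μ| = φ g := hφg.symm
        _ ≤ ‖φ g‖ := le_abs_self _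
        _ ≤ ‖φ‖ * ‖g‖ := φ.le_opNorm g
        _ ≤ ‖φ‖ * 1 := by nlinarith [norm_nonneg φ]
        _ = ‖φ‖ := mul_one _
    have hf0 : Tendsto f cofinite (𝓝 0) := by
      rw [tendsto_zero_iff_norm_tendsto_zero]
      simpa [Real.norm_eq_abs] using habs.tendsto_cofinite_zero
    constructor
    · exact hf0
    · have heq : (fun μ => φ (x - x μ • lp.single ∞ μ (1:ℝ))) = fun μ => φ x - x μ * f μ := by
        funext μ; rw [map_sub, map_smul, smul_eq_mul]
      rw [heq]
      have h2 : Tendsto (fun μ => x μ * f μ) cofinite (𝓝 0) := by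
        refine squeeze_zero_norm (fun μ => ?_) (by simpa [Real.norm_eq_abs] using (tendsto_zero_iff_norm_tendsto_zero.mp hf0))
        rw [norm_mul]
        calc ‖x μ‖ * ‖f μ‖ ≤ 1 * ‖f μ‖ := by
              exact mul_le_mul_of_nonneg_right (hxc μ) (norm_nonneg _)
          _ = ‖f μ‖ := one_mul _
      simpa using (tendsto_const_nhds.sub h2)
end
end

section
/- Let X be a real Banach space and κ > ℵ₀. If X has the attaining κ-SSD2P, then: given any family 𝒰 of fewer than κ non-empty relatively weakly open subsets of B_X, a relatively weakly open neighborhood V of 0 in B_X, and ε > 0, there exist points {x_U : U ∈ 𝒰} and y ∈ V ∩ S_X such that x_U ∈ U and x_U ± y ∈ B_X for every U ∈ 𝒰. -/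
open Cardinal Metric Filter Topology NormedSpace
open scoped ENNReal
universe u
noncomputable section

section AuxLemmas
open Set

variable {E : Type*} [NormedAddCommGroup E] [NormedSpace ℝ E] [FiniteDimensional ℝ E]

lemma myIsCompact_convexHull {s : Set E} (hs : IsCompact s) :
    IsCompact (convexHull ℝ s) := by
  classical
  rcases s.eq_empty_or_nonempty with rfl | ⟨z₀, hz₀⟩
  · simpa using isCompact_empty
  set m := Module.finrank ℝ E + 1 with hm
  set F : (Fin m → ℝ) × (Fin m → E) → E := fun p => ∑ i, p.1 i • p.2 i with hF
  have hFc : Continuous F := by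
    apply continuous_finset_sum
    intro i _
    exact ((continuous_apply i).comp continuous_fst).smul
      ((continuous_apply i).comp continuous_snd)
  have hD : IsCompact ((stdSimplex ℝ (Fin m)) ×ˢ (univ.pi fun _ : Fin m => s)) :=
    (isCompact_stdSimplex _ _).prod (isCompact_univ_pi fun _ => hs)
  have himage : F '' ((stdSimplex ℝ (Fin m)) ×ˢ (univ.pi fun _ : Fin m => s))
      = convexHull ℝ s := by
    apply Subset.antisymm
    · rintro x ⟨⟨w, z⟩, ⟨⟨hw0, hw1⟩, hz⟩, rfl⟩
      exact (convex_convexHull ℝ s).sum_mem (fun i _ => hw0 i) hw1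
        (fun i _ => subset_convexHull ℝ s (hz i (mem_univ i)))
    · intro x hx
      obtain ⟨ι, hι, z, w, hrange, hai, hwpos, hw1, hsum⟩ :=
        eq_pos_convex_span_of_mem_convexHull hx
      have hcard : Fintype.card ι ≤ m :=
        hai.card_le_finrank_succ.trans (by
          have := Submodule.finrank_le (vectorSpan ℝ (Set.range z))
          omega)
      obtain ⟨emb⟩ := Function.Embedding.nonempty_of_card_le
        (by simpa using hcard : Fintype.card ι ≤ Fintype.card (Fin m))
      set w' : Fin m → ℝ := fun j => if h : ∃ i, emb i = j then w h.choose else 0 with hw'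
      set z' : Fin m → E := fun j => if h : ∃ i, emb i = j then z h.choose else z₀ with hz'
      have hw'e : ∀ i, w' (emb i) = w i := by
        intro i
        have h : ∃ i', emb i' = emb i := ⟨i, rfl⟩
        simp only [hw', dif_pos h]
        rw [emb.injective h.choose_spec]
      have hz'e : ∀ i, z' (emb i) = z i := by
        intro i
        have h : ∃ i', emb i' = emb i := ⟨i, rfl⟩
        simp only [hz', dif_pos h]
        rw [emb.injective h.choose_spec]
      have hsumR : ∀ (f : Fin m → ℝ),
          (∀ j, ¬(∃ i, emb i = j) → f j = 0) → ∑ j, f j = ∑ i, f (emb i) := by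
        intro f hf
        rw [← Finset.sum_map Finset.univ emb f]
        refine (Finset.sum_subset (Finset.subset_univ _) ?_).symm
        intro j _ hj
        refine hf j fun ⟨i, hi⟩ => hj ?_
        rw [Finset.mem_map]
        exact ⟨i, Finset.mem_univ i, hi⟩
      have hsumE : ∀ (f : Fin m → E),
          (∀ j, ¬(∃ i, emb i = j) → f j = 0) → ∑ j, f j = ∑ i, f (emb i) := by
        intro f hf
        rw [← Finset.sum_map Finset.univ emb f]
        refine (Finset.sum_subset (Finset.subset_univ _) ?_).symm
        intro j _ hj
        refine hf j fun ⟨i, hi⟩ => hj ?_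
        rw [Finset.mem_map]
        exact ⟨i, Finset.mem_univ i, hi⟩
      refine ⟨⟨w', z'⟩, ⟨⟨fun j => ?_, ?_⟩, fun j _ => ?_⟩, ?_⟩
      · by_cases h : ∃ i, emb i = j
        · simp only [hw', dif_pos h]; exact (hwpos _).le
        · simp [hw', dif_neg h]
      · rw [show ∑ x : Fin m, (w',z').1 x = ∑ j, w' j from rfl,
          hsumR w' (fun j hj => by simp [hw', dif_neg hj])]
        simpa [hw'e] using hw1
      · by_cases h : ∃ i, emb i = j
        · simp only [hz', dif_pos h]; exact hrange ⟨_, rfl⟩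
        · simpa [hz', dif_neg h] using hz₀
      · show ∑ j, w' j • z' j = x
        rw [hsumE (fun j => w' j • z' j)
          (fun j hj => by simp [hw', dif_neg hj])]
        simp only [hw'e, hz'e]
        exact hsum
  rw [← himage]
  exact hD.image hFc
lemma extreme_denting {K : Set E} (hKc : IsCompact K) (hKconv : Convex ℝ K)
    {e : E} (he : e ∈ K.extremePoints ℝ) {α : ℝ} (hα : 0 < α) :
    ∃ (φ : E →L[ℝ] ℝ) (c : ℝ), c < φ e ∧ ∀ k ∈ K, c < φ k → dist k (e : E) < α := by
  classical
  set K' : Set E := {k ∈ K | α ≤ dist k e} with hK'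
  by_cases hK'e : K' = ∅
  · refine ⟨0, -1, by norm_num, fun k hk _ => ?_⟩
    by_contra hd
    exact (eq_empty_iff_forall_notMem.mp hK'e k) ⟨hk, not_lt.mp hd⟩
  · have hK'c : IsCompact K' :=
      hKc.inter_right (isClosed_le continuous_const (continuous_id.dist continuous_const))
    have hDc : IsCompact (convexHull ℝ K') := myIsCompact_convexHull hK'c
    have heD : e ∉ convexHull ℝ K' := by
      intro heD
      have heD' : e ∈ (convexHull ℝ K').extremePoints ℝ := by
        refine ⟨heD, fun x₁ hx₁ x₂ hx₂ hseg => ?_⟩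
        have hsub : convexHull ℝ K' ⊆ K := convexHull_min (fun k hk => hk.1) hKconv
        exact he.2 (hsub hx₁) (hsub hx₂) hseg
      have : e ∈ K' := extremePoints_convexHull_subset heD'
      simpa [dist_self] using lt_of_lt_of_le hα this.2
    obtain ⟨φ, c, hlt, hce⟩ := geometric_hahn_banach_closed_point
      (convex_convexHull ℝ K') hDc.isClosed heD
    refine ⟨φ, c, hce, fun k hk hck => ?_⟩
    by_contra hd
    exact absurd hck (not_lt.mpr (hlt k (subset_convexHull ℝ K' ⟨hk, not_lt.mp hd⟩)).le)

lemma findim_bourgain {K : Set E} (hKc : IsCompact K) (hKconv : Convex ℝ K)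
    {p : E} (hp : p ∈ K) {α : ℝ} (hα : 0 < α) :
    ∃ (m : ℕ) (lam : Fin m → ℝ) (e : Fin m → E) (φ : Fin m → (E →L[ℝ] ℝ)) (c : Fin m → ℝ),
      (∀ i, 0 ≤ lam i) ∧ (∑ i, lam i = 1) ∧ dist (∑ i, lam i • e i) p < α ∧
      (∀ i, e i ∈ K) ∧ (∀ i, c i < φ i (e i)) ∧
      (∀ i, ∀ k ∈ K, c i < φ i k → dist k (e i) < α) := by
  classical
  have hKM := closure_convexHull_extremePoints hKc hKconv
  have hpc : p ∈ closure (convexHull ℝ (K.extremePoints ℝ)) := hKM.symm ▸ hp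
  obtain ⟨q, hq, hqp⟩ := Metric.mem_closure_iff.mp hpc α hα
  obtain ⟨ι, hι, z, w, hrange, _, hwpos, hw1, hsum⟩ :=
    eq_pos_convex_span_of_mem_convexHull hq
  let eq := (Fintype.equivFin ι).symm
  have hext : ∀ i : Fin (Fintype.card ι), ∃ (φ : E →L[ℝ] ℝ) (c : ℝ),
      c < φ (z (eq i)) ∧ ∀ k ∈ K, c < φ k → dist k (z (eq i)) < α := by
    intro i
    exact extreme_denting hKc hKconv (hrange ⟨eq i, rfl⟩) hα
  choose φ c hφ1 hφ2 using hext
  refine ⟨Fintype.card ι, fun i => w (eq i), fun i => z (eq i), φ, c,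
    fun i => (hwpos _).le, ?_, ?_, fun i => extremePoints_subset (hrange ⟨eq i, rfl⟩),
    hφ1, hφ2⟩
  · rw [Fintype.sum_equiv eq.symm _ (fun i => w (eq i)) (fun i => by simp)] at hw1
    exact hw1
  · rw [Fintype.sum_equiv eq.symm _ (fun i => w (eq i) • z (eq i)) (fun i => by simp)] at hsum
    rw [hsum]
    rwa [dist_comm] at hqp
variable {X : Type*} [NormedAddCommGroup X] [NormedSpace ℝ X]

lemma weak_basis {W : Set (WeakSpace ℝ X)} (hW : IsOpen W) {u : X}
    (hu : u ∈ (show Set X from W)) :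
    ∃ (n : ℕ) (g : Fin n → StrongDual ℝ X) (αf : Fin n → ℝ), (∀ i, 0 < αf i) ∧
      ∀ x : X, (∀ i, |g i x - g i u| < αf i) → x ∈ (show Set X from W) := by
  classical
  obtain ⟨t, hto, htW⟩ := isOpen_induced_iff.mp hW
  set F : X → (StrongDual ℝ X → ℝ) := fun x y => y x with hFdef
  have hFu : F u ∈ t := by
    have : (u : WeakSpace ℝ X) ∈ ((fun x y => (topDualPairing ℝ X).flip x y) ⁻¹' t) :=
      htW.symm ▸ hu
    exact this
  obtain ⟨I, v, hIv, hIsub⟩ := isOpen_pi_iff.mp hto _ hFu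
  set n := I.card with hn
  set g : Fin n → StrongDual ℝ X := fun i => (I.equivFin.symm i : StrongDual ℝ X)
    with hg
  have hgI : ∀ i, g i ∈ I := fun i => (I.equivFin.symm i).2
  have hex : ∀ i : Fin n, ∃ ε > 0, Metric.ball (g i u) ε ⊆ v (g i) := by
    intro i
    exact Metric.isOpen_iff.mp (hIv _ (hgI i)).1 _ (hIv _ (hgI i)).2
  choose αf hαf hball using hex
  refine ⟨n, g, αf, hαf, fun x hx => ?_⟩
  have hFx : F x ∈ t := by
    apply hIsub
    intro a ha
    have key : F x (g (I.equivFin ⟨a, ha⟩)) ∈ v (g (I.equivFin ⟨a, ha⟩)) := by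
      apply hball
      rw [Metric.mem_ball, Real.dist_eq]
      exact hx _
    simpa only [hg, Equiv.symm_apply_apply] using key
  have : (x : WeakSpace ℝ X) ∈ ((fun x y => (topDualPairing ℝ X).flip x y) ⁻¹' t) := hFx
  exact htW ▸ this

lemma bourgain_comb [CompleteSpace X] (hf0 : ∃ f0 : StrongDual ℝ X, ‖f0‖ = 1)
    {W : Set (WeakSpace ℝ X)} (hW : IsOpen W) {u : X}
    (huW : u ∈ (show Set X from W)) (huC : u ∈ Metric.closedBall (0:X) 1) :
    ∃ (m : ℕ) (lam : Fin m → ℝ) (f : Fin m → StrongDual ℝ X) (δ : Fin m → ℝ),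
      (∀ i, 0 ≤ lam i) ∧ (∑ i, lam i = 1) ∧ (∀ i, ‖f i‖ = 1) ∧
      (∀ i, δ i ∈ Set.Ioo (0:ℝ) 1) ∧
      ∀ z : Fin m → X, (∀ i, z i ∈ Metric.closedBall (0:X) 1) →
        (∀ i, 1 - δ i < f i (z i)) →
        (∑ i, lam i • z i) ∈ (show Set X from W) ∩ Metric.closedBall (0:X) 1 := by
  classical
  obtain ⟨f0, hf01⟩ := hf0
  obtain ⟨n, g, αf, hαf, hbasis⟩ := weak_basis hW huW
  set α : ℝ := (insert (1:ℝ) (Finset.univ.image αf)).min' ⟨1, Finset.mem_insert_self _ _⟩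
    with hαdef
  have hα : 0 < α := by
    have := Finset.min'_mem (insert (1:ℝ) (Finset.univ.image αf))
      ⟨1, Finset.mem_insert_self _ _⟩
    rw [← hαdef] at this
    rcases Finset.mem_insert.mp this with h | h
    · rw [h]; norm_num
    · obtain ⟨i, _, hi⟩ := Finset.mem_image.mp h
      rw [← hi]; exact hαf i
  have hαle : ∀ i, α ≤ αf i := fun i =>
    Finset.min'_le _ _ (Finset.mem_insert_of_mem (Finset.mem_image_of_mem _ (Finset.mem_univ i)))
  set T : X →L[ℝ] (Fin n → ℝ) := ContinuousLinearMap.pi g with hT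
  set C : Set X := Metric.closedBall (0:X) 1 with hC
  set K : Set (Fin n → ℝ) := closure (T '' C) with hK
  have hKconv : Convex ℝ K :=
    ((convex_closedBall (0:X) 1).linear_image (T : X →ₗ[ℝ] (Fin n → ℝ))).closure
  have hKcomp : IsCompact K := by
    have hb : Bornology.IsBounded (T '' C) :=
      (T.lipschitz).isBounded_image (Metric.isBounded_closedBall)
    exact Metric.isCompact_of_isClosed_isBounded isClosed_closure hb.closure
  have hp : T u ∈ K := subset_closure (Set.mem_image_of_mem _ huC)
  obtain ⟨m, lam, e, φ, c, hlam0, hlam1, hdistp, heK, hce, hslice⟩ :=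
    findim_bourgain hKcomp hKconv hp (half_pos hα)
  set ψ : Fin m → StrongDual ℝ X := fun i => (φ i).comp T with hψ
  have hKle : ∀ i, ∀ k ∈ K, φ i k ≤ ‖ψ i‖ := by
    intro i k hk
    have hsub : T '' C ⊆ {k | φ i k ≤ ‖ψ i‖} := by
      rintro _ ⟨x, hx, rfl⟩
      have h1 : ψ i x ≤ ‖ψ i‖ * ‖x‖ := (ψ i).le_opNorm x |>.trans' (le_abs_self _)
      have h2 : ‖x‖ ≤ 1 := by
        rw [hC, Metric.mem_closedBall, dist_zero_right] at hx
        exact hx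
      calc φ i (T x) = ψ i x := rfl
        _ ≤ ‖ψ i‖ * ‖x‖ := h1
        _ ≤ ‖ψ i‖ * 1 := by
            exact mul_le_mul_of_nonneg_left h2 (norm_nonneg _)
        _ = ‖ψ i‖ := mul_one _
    exact closure_minimal hsub (isClosed_le (φ i).continuous continuous_const) hk
  set f : Fin m → StrongDual ℝ X :=
    fun i => if ψ i = 0 then f0 else ‖ψ i‖⁻¹ • ψ i with hf
  set δ : Fin m → ℝ :=
    fun i => if ψ i = 0 then 1/2 else min (1 - c i / ‖ψ i‖) (1/2) with hδ
  have hψpos : ∀ i, ψ i ≠ 0 → 0 < ‖ψ i‖ := fun i hi => norm_pos_iff.mpr hi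
  have hcln : ∀ i, ψ i ≠ 0 → c i < ‖ψ i‖ := fun i hi => lt_of_lt_of_le (hce i) (hKle i _ (heK i))
  have hδIoo : ∀ i, δ i ∈ Set.Ioo (0:ℝ) 1 := by
    intro i
    by_cases hi : ψ i = 0
    · simp only [hδ, if_pos hi]; norm_num
    · simp only [hδ, if_neg hi]
      constructor
      · apply lt_min
        · have := (div_lt_one (hψpos i hi)).mpr (hcln i hi)
          linarith
        · norm_num
      · exact lt_of_le_of_lt (min_le_right _ _) (by norm_num)
  have hf1 : ∀ i, ‖f i‖ = 1 := by
    intro i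
    by_cases hi : ψ i = 0
    · simp only [hf, if_pos hi]; exact hf01
    · simp only [hf, if_neg hi]
      rw [norm_smul, Real.norm_eq_abs, abs_of_pos (inv_pos.mpr (hψpos i hi)),
        inv_mul_cancel₀ (hψpos i hi).ne']
  have key : ∀ i, ∀ z ∈ C, 1 - δ i < f i z → dist (T z) (e i) < α/2 := by
    intro i z hz hfz
    have hTz : T z ∈ K := subset_closure (Set.mem_image_of_mem _ hz)
    by_cases hi : ψ i = 0
    · have hzero : ∀ k ∈ K, φ i k = 0 := by
        intro k hk
        have hsub : T '' C ⊆ {k | φ i k = 0} := by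
          rintro _ ⟨x, _, rfl⟩
          show ψ i x = 0
          rw [hi]; rfl
        have : K ⊆ {k | φ i k = 0} :=
          closure_minimal hsub (isClosed_eq (φ i).continuous continuous_const)
        exact this hk
      apply hslice i _ hTz
      rw [hzero _ hTz]
      have := hce i
      rw [hzero _ (heK i)] at this
      exact this
    · apply hslice i _ hTz
      have hfz' : ψ i z = ‖ψ i‖ * (f i z) := by
        simp only [hf, if_neg hi]
        rw [ContinuousLinearMap.smul_apply, smul_eq_mul, ← mul_assoc,
          mul_inv_cancel₀ (hψpos i hi).ne', one_mul]
      have hδle : 1 - δ i ≥ c i / ‖ψ i‖ := by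
        simp only [hδ, if_neg hi]
        have : min (1 - c i / ‖ψ i‖) (1/2) ≤ 1 - c i / ‖ψ i‖ := min_le_left _ _
        linarith
      have : c i ≤ ‖ψ i‖ * (1 - δ i) := by
        rw [ge_iff_le, div_le_iff₀ (hψpos i hi)] at hδle
        linarith [hδle]
      calc c i ≤ ‖ψ i‖ * (1 - δ i) := this
        _ < ‖ψ i‖ * (f i z) := by
            exact mul_lt_mul_of_pos_left hfz (hψpos i hi)
        _ = φ i (T z) := hfz'.symm
  refine ⟨m, lam, f, δ, hlam0, hlam1, hf1, hδIoo, ?_⟩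
  intro z hzC hzf
  have hxC : (∑ i, lam i • z i) ∈ C :=
    (convex_closedBall (0:X) 1).sum_mem (fun i _ => hlam0 i) hlam1 (fun i _ => hzC i)
  refine ⟨?_, hxC⟩
  apply hbasis
  intro j
  have hTx : T (∑ i, lam i • z i) = ∑ i, lam i • T (z i) := by
    rw [map_sum]
    simp only [ContinuousLinearMap.map_smul]
  have hd1 : dist (T (∑ i, lam i • z i)) (∑ i, lam i • e i) ≤ α/2 := by
    rw [hTx, dist_eq_norm, ← Finset.sum_sub_distrib]
    have : ∀ i ∈ Finset.univ, lam i • T (z i) - lam i • e i = lam i • (T (z i) - e i) := by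
      intro i _; rw [smul_sub]
    rw [Finset.sum_congr rfl this]
    calc ‖∑ i, lam i • (T (z i) - e i)‖ ≤ ∑ i, ‖lam i • (T (z i) - e i)‖ :=
          norm_sum_le _ _
      _ ≤ ∑ i, lam i * (α/2) := by
          apply Finset.sum_le_sum
          intro i _
          rw [norm_smul, Real.norm_eq_abs, abs_of_nonneg (hlam0 i)]
          apply mul_le_mul_of_nonneg_left _ (hlam0 i)
          rw [← dist_eq_norm]
          exact (key i (z i) (hzC i) (hzf i)).le
      _ = α/2 := by rw [← Finset.sum_mul, hlam1, one_mul]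
  have hd : dist (T (∑ i, lam i • z i)) (T u) < α :=
    calc dist (T (∑ i, lam i • z i)) (T u)
        ≤ dist (T (∑ i, lam i • z i)) (∑ i, lam i • e i) + dist (∑ i, lam i • e i) (T u) :=
          dist_triangle _ _ _
      _ < α/2 + α/2 := add_lt_add_of_le_of_lt hd1 hdistp
      _ = α := by ring
  have hcoord : |g j (∑ i, lam i • z i) - g j u| ≤ dist (T (∑ i, lam i • z i)) (T u) := by
    rw [dist_eq_norm]
    have : g j (∑ i, lam i • z i) - g j u = (T (∑ i, lam i • z i) - T u) j := rfl
    rw [this, ← Real.norm_eq_abs]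
    exact norm_le_pi_norm _ j
  exact lt_of_le_of_lt hcoord (lt_of_lt_of_le hd (hαle j))
end AuxLemmas

/-- A Banach space `X` has the attaining `κ`-SSD2P if for every set `A` of norm-one
functionals of cardinality `< κ` there are `B ⊆ S_X` which norms `A` (i.e. `r`-norms `A`
for every `r ∈ (0,1)`) and `y ∈ S_X` with `B ± y ⊆ S_X`. -/
def ASSD2P (κ : Cardinal.{u}) (X : Type u) [NormedAddCommGroup X] [NormedSpace ℝ X] : Prop :=
  ∀ A : Set (StrongDual ℝ X), (∀ f ∈ A, ‖f‖ = 1) → #A < κ →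
    ∃ (B : Set X) (y : X), B ⊆ sphere 0 1 ∧ y ∈ sphere (0 : X) 1 ∧
      (∀ x ∈ B, x + y ∈ sphere (0 : X) 1 ∧ x - y ∈ sphere (0 : X) 1) ∧
      (∀ f ∈ A, ∀ r ∈ Set.Ioo (0:ℝ) 1, ∃ x ∈ B, r ≤ f x)

/-- If `X` has the attaining `κ`-SSD2P (`κ > ℵ₀`), then for every family `𝒰` of fewer
than `κ` non-empty relatively weakly open subsets of `B_X`, every relatively weakly open
neighborhood `V` of `0` in `B_X` and every `ε > 0` there are points `x_U ∈ U` and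
`y ∈ V ∩ S_X` with `x_U ± y ∈ B_X`. -/
theorem ASSD2P_implies_weakOpen {X : Type u} [NormedAddCommGroup X] [NormedSpace ℝ X]
    [CompleteSpace X] (κ : Cardinal.{u}) (hκ : ℵ₀ < κ) (h : ASSD2P κ X)
    (𝒰 : Set (Set X)) (h𝒰 : #𝒰 < κ)
    (hU : ∀ U ∈ 𝒰, U.Nonempty ∧ ∃ W : Set (WeakSpace ℝ X), IsOpen W ∧
      U = (show Set X from W) ∩ closedBall 0 1)
    (V : Set X)
    (hV : ∃ W : Set (WeakSpace ℝ X), IsOpen W ∧ V = (show Set X from W) ∩ closedBall 0 1)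
    (h0V : (0 : X) ∈ V) (ε : ℝ) (hε : 0 < ε) :
    ∃ (x : 𝒰 → X) (y : X), y ∈ V ∧ y ∈ sphere (0 : X) 1 ∧
      ∀ U : 𝒰, x U ∈ (U : Set X) ∧ x U + y ∈ closedBall (0 : X) 1 ∧
        x U - y ∈ closedBall (0 : X) 1 := by
  classical
  -- a norm-one functional exists
  obtain ⟨B₀, y₀, -, hy₀, -, -⟩ := h ∅ (by simp)
    (by rw [Cardinal.mk_emptyCollection]; exact Cardinal.aleph0_pos.trans hκ)
  have hy₀n : y₀ ≠ 0 := by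
    have h1 : ‖y₀‖ = 1 := mem_sphere_zero_iff_norm.mp hy₀
    intro h0; rw [h0, norm_zero] at h1; norm_num at h1
  obtain ⟨f0, hf01, -⟩ := exists_dual_vector ℝ y₀ (norm_ne_zero_iff.mpr hy₀n)
  have hf0 : ∃ f0 : StrongDual ℝ X, ‖f0‖ = 1 := ⟨f0, hf01⟩
  -- data for V
  obtain ⟨Wv, hWvo, hVeq⟩ := hV
  have h0Wv : (0:X) ∈ (show Set X from Wv) := by rw [hVeq] at h0V; exact h0V.1
  obtain ⟨nv, g, αv, hαv, hgbasis⟩ := weak_basis hWvo h0Wv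
  -- data for each U
  have hUdata : ∀ U : 𝒰, ∃ (m : ℕ) (lam : Fin m → ℝ) (f : Fin m → StrongDual ℝ X)
      (δ : Fin m → ℝ),
      (∀ i, 0 ≤ lam i) ∧ (∑ i, lam i = 1) ∧ (∀ i, ‖f i‖ = 1) ∧
      (∀ i, δ i ∈ Set.Ioo (0:ℝ) 1) ∧
      ∀ z : Fin m → X, (∀ i, z i ∈ closedBall (0:X) 1) → (∀ i, 1 - δ i < f i (z i)) →
        (∑ i, lam i • z i) ∈ (U : Set X) := by
    rintro ⟨U, hUm⟩
    obtain ⟨⟨u, hu⟩, Wu, hWuo, hUeq⟩ := hU U hUm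
    have hu' := hu
    rw [hUeq] at hu'
    obtain ⟨m, lam, f, δ, h1, h2, h3, h4, h5⟩ := bourgain_comb hf0 hWuo hu'.1 hu'.2
    refine ⟨m, lam, f, δ, h1, h2, h3, h4, fun z hz1 hz2 => ?_⟩
    have := h5 z hz1 hz2
    show (∑ i, lam i • z i) ∈ U
    rw [hUeq]
    exact this
  choose m lam f δ hlam0 hlam1 hfnorm hδIoo himp using hUdata
  set gnorm : Fin nv → StrongDual ℝ X :=
    fun j => if g j = 0 then f0 else ‖g j‖⁻¹ • g j with hgnorm
  set A : Set (StrongDual ℝ X) := (⋃ U : 𝒰, Set.range (f U)) ∪ Set.range gnorm with hA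
  have hA1 : ∀ φ ∈ A, ‖φ‖ = 1 := by
    rintro φ (hφ | hφ)
    · obtain ⟨s, ⟨U, rfl⟩, hφ⟩ := hφ
      obtain ⟨i, rfl⟩ := hφ
      exact hfnorm U i
    · obtain ⟨j, rfl⟩ := hφ
      by_cases hgj : g j = 0
      · simp only [hgnorm, if_pos hgj]; exact hf01
      · simp only [hgnorm, if_neg hgj]
        rw [norm_smul, Real.norm_eq_abs, abs_of_pos (inv_pos.mpr (norm_pos_iff.mpr hgj)),
          inv_mul_cancel₀ (norm_pos_iff.mpr hgj).ne']
  have hAκ : #A < κ := by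
    have h1 : #(⋃ U : 𝒰, Set.range (f U)) < κ := by
      refine lt_of_le_of_lt (Cardinal.mk_iUnion_le _) ?_
      refine Cardinal.mul_lt_of_lt hκ.le h𝒰 ?_
      refine lt_of_le_of_lt (ciSup_le' fun U => ?_) hκ
      exact (Set.finite_range (f U)).lt_aleph0.le
    have h2 : #(Set.range gnorm) < κ := (Set.finite_range gnorm).lt_aleph0.trans hκ
    exact lt_of_le_of_lt (Cardinal.mk_union_le _ _) (Cardinal.add_lt_of_lt hκ.le h1 h2)
  obtain ⟨B, y, hBs, hys, hpm, hnorm⟩ := h A hA1 hAκ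
  -- y ∈ V
  have hyV : y ∈ V := by
    rw [hVeq]
    refine ⟨hgbasis y (fun j => ?_), sphere_subset_closedBall hys⟩
    rw [map_zero, sub_zero]
    by_cases hgj : g j = 0
    · rw [hgj]
      simpa using hαv j
    · have ht : 0 < ‖g j‖ := norm_pos_iff.mpr hgj
      set r : ℝ := max (1/2) (1 - αv j / (2*‖g j‖)) with hr
      have hrIoo : r ∈ Set.Ioo (0:ℝ) 1 := by
        constructor
        · exact lt_of_lt_of_le (by norm_num) (le_max_left _ _)
        · apply max_lt (by norm_num)
          have haj := hαv j
          have : 0 < αv j / (2*‖g j‖) := by positivity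
          linarith
      have hgnormA : gnorm j ∈ A := Set.mem_union_right _ ⟨j, rfl⟩
      obtain ⟨x, hxB, hrx⟩ := hnorm (gnorm j) hgnormA r hrIoo
      obtain ⟨hxy1, hxy2⟩ := hpm x hxB
      have hgnorm1 : ‖gnorm j‖ = 1 := hA1 _ hgnormA
      have hbound : ∀ w : X, w ∈ sphere (0:X) 1 → gnorm j w ≤ 1 := by
        intro w hw
        have := (gnorm j).le_opNorm w
        rw [hgnorm1, one_mul, mem_sphere_zero_iff_norm.mp hw] at this
        exact le_trans (le_abs_self _) (by rwa [← Real.norm_eq_abs])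
      have hplus : gnorm j x + gnorm j y ≤ 1 := by
        have := hbound _ hxy1
        rwa [map_add] at this
      have hminus : gnorm j x - gnorm j y ≤ 1 := by
        have := hbound _ hxy2
        rwa [map_sub] at this
      have habs : |gnorm j y| ≤ 1 - r := by
        rw [abs_le]
        constructor <;> linarith
      have hr2 : 1 - r ≤ αv j / (2*‖g j‖) := by
        have : 1 - αv j / (2*‖g j‖) ≤ r := le_max_right _ _
        linarith
      have hgy : g j y = ‖g j‖ * (gnorm j y) := by
        simp only [hgnorm, if_neg hgj]
        rw [ContinuousLinearMap.smul_apply, smul_eq_mul, ← mul_assoc,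
          mul_inv_cancel₀ ht.ne', one_mul]
      rw [hgy, abs_mul, abs_of_pos ht]
      calc ‖g j‖ * |gnorm j y| ≤ ‖g j‖ * (αv j / (2*‖g j‖)) := by
            apply mul_le_mul_of_nonneg_left (habs.trans hr2) ht.le
        _ = αv j / 2 := by field_simp
        _ < αv j := by linarith [hαv j]
  -- points in B for each U and slice
  have hzex : ∀ (U : 𝒰) (i : Fin (m U)), ∃ x ∈ B, 1 - δ U i / 2 ≤ f U i x := by
    intro U i
    refine hnorm _ (Set.mem_union_left _ (Set.mem_iUnion.mpr ⟨U, ⟨i, rfl⟩⟩)) _ ?_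
    obtain ⟨hδ0, hδ1⟩ := hδIoo U i
    constructor <;> [linarith; linarith]
  choose z hzB hzf using hzex
  refine ⟨fun U => ∑ i, lam U i • z U i, y, hyV, hys, fun U => ?_⟩
  have hzC : ∀ i, z U i ∈ closedBall (0:X) 1 :=
    fun i => sphere_subset_closedBall (hBs (hzB U i))
  have hzf' : ∀ i, 1 - δ U i < f U i (z U i) := by
    intro i
    have hδ0 := (hδIoo U i).1
    linarith [hzf U i]
  refine ⟨himp U _ hzC hzf', ?_, ?_⟩
  · have heq : (∑ i, lam U i • z U i) + y = ∑ i, lam U i • (z U i + y) := by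
      simp only [smul_add]
      rw [Finset.sum_add_distrib, ← Finset.sum_smul, hlam1 U, one_smul]
    rw [heq]
    exact (convex_closedBall (0:X) 1).sum_mem (fun i _ => hlam0 U i) (hlam1 U)
      (fun i _ => sphere_subset_closedBall (hpm _ (hzB U i)).1)
  · have heq : (∑ i, lam U i • z U i) - y = ∑ i, lam U i • (z U i - y) := by
      simp only [smul_sub]
      rw [Finset.sum_sub_distrib, ← Finset.sum_smul, hlam1 U, one_smul]
    rw [heq]
    exact (convex_closedBall (0:X) 1).sum_mem (fun i _ => hlam0 U i) (hlam1 U)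
      (fun i _ => sphere_subset_closedBall (hpm _ (hzB U i)).2)
end
end

section
/- Let X be a real Banach space and κ > ℵ₀. Suppose that for every family 𝒰 of fewer than κ non-empty relatively weakly open subsets of B_X, every relatively weakly open neighborhood V of 0 in B_X, and every ε > 0 there are {x_U : U ∈ 𝒰} and y ∈ V ∩ S_X with x_U ∈ U and x_U ± y ∈ B_X for all U. Then for every A ⊂ S_X of cardinality < κ there exist nets {(y^x_α) : x ∈ A} and (z_α) in S_X such that ‖z_α ± y^x_α‖ → 1, z_α → 0 weakly, and y^x_α → x weakly for every x ∈ A. -/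
open Cardinal Metric Filter Topology NormedSpace
open scoped ENNReal
universe u
noncomputable section

/-- The directed set of weakly open neighborhoods of `0`, ordered by reverse inclusion. -/
def WNbhd (X : Type u) [NormedAddCommGroup X] [NormedSpace ℝ X] : Type u :=
  {W : Set (WeakSpace ℝ X) // IsOpen W ∧ (0 : WeakSpace ℝ X) ∈ W}

variable {X : Type u} [NormedAddCommGroup X] [NormedSpace ℝ X]

instance : SemilatticeSup (WNbhd X) where
  le a b := b.1 ⊆ a.1
  le_refl a := subset_rfl
  le_trans a b c hab hbc := fun u hu => hab (hbc hu)
  le_antisymm a b hab hba := Subtype.ext (hba.antisymm hab)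
  sup a b := ⟨a.1 ∩ b.1, a.2.1.inter b.2.1, a.2.2, b.2.2⟩
  le_sup_left a b := Set.inter_subset_left
  le_sup_right a b := Set.inter_subset_right
  sup_le a b c hac hbc := Set.subset_inter hac hbc

instance : Nonempty (WNbhd X) := ⟨⟨Set.univ, isOpen_univ, Set.mem_univ _⟩⟩

theorem WNbhd.subset_of_le {a b : WNbhd X} (h : a ≤ b) : b.1 ⊆ a.1 := fun u hu => h hu

/-- If points `x_U ∈ U` and `y ∈ V ∩ S_X` with `x_U ± y ∈ B_X` can always be found for
families of fewer than `κ` relatively weakly open subsets of `B_X`, then every `A ⊆ S_X`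
of cardinality `< κ` admits nets `y^x_α → x` weakly, `z_α → 0` weakly, all in `S_X`, with
`‖z_α ± y^x_α‖ → 1`. -/
theorem weakOpen_implies_nets {X : Type u} [NormedAddCommGroup X] [NormedSpace ℝ X]
    [CompleteSpace X] (κ : Cardinal.{u}) (hκ : ℵ₀ < κ)
    (h : ∀ 𝒰 : Set (Set X), #𝒰 < κ →
      (∀ U ∈ 𝒰, U.Nonempty ∧ ∃ W : Set (WeakSpace ℝ X), IsOpen W ∧
        U = (show Set X from W) ∩ closedBall 0 1) →
      ∀ V : Set X,
        (∃ W : Set (WeakSpace ℝ X), IsOpen W ∧ V = (show Set X from W) ∩ closedBall 0 1) →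
        (0 : X) ∈ V → ∀ ε : ℝ, 0 < ε →
        ∃ (x : 𝒰 → X) (y : X), y ∈ V ∧ y ∈ sphere (0 : X) 1 ∧
          ∀ U : 𝒰, x U ∈ (U : Set X) ∧ x U + y ∈ closedBall (0 : X) 1 ∧
            x U - y ∈ closedBall (0 : X) 1)
    (A : Set X) (hA : A ⊆ sphere (0 : X) 1) (hAκ : #A < κ) :
    ∃ (ι : Type u) (pre : Preorder ι), Nonempty ι ∧
      (∀ a b : ι, ∃ c : ι, pre.le a c ∧ pre.le b c) ∧
      ∃ (y : A → ι → X) (z : ι → X),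
        (∀ (x : A) (i : ι), y x i ∈ sphere (0 : X) 1) ∧
        (∀ i : ι, z i ∈ sphere (0 : X) 1) ∧
        (∀ x : A, Tendsto (fun i => ‖z i + y x i‖) (@Filter.atTop ι pre) (𝓝 1) ∧
          Tendsto (fun i => ‖z i - y x i‖) (@Filter.atTop ι pre) (𝓝 1)) ∧
        (∀ φ : StrongDual ℝ X,
          Tendsto (fun i => φ (z i)) (@Filter.atTop ι pre) (𝓝 0)) ∧
        (∀ (x : A) (φ : StrongDual ℝ X),
          Tendsto (fun i => φ (y x i)) (@Filter.atTop ι pre) (𝓝 (φ (x : X)))) := by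
  classical
  have hAx : ∀ x : A, ‖(x : X)‖ = 1 := fun x => by
    have := hA x.2
    simpa [mem_sphere_zero_iff_norm] using this
  -- norming functionals
  have hφ : ∀ x : A, ∃ φ : StrongDual ℝ X, ‖φ‖ = 1 ∧ φ (x : X) = 1 := by
    intro x
    have hx0 : (x : X) ≠ 0 := by
      intro h0
      have := hAx x
      rw [h0, norm_zero] at this
      norm_num at this
    obtain ⟨φ, h1, h2⟩ := exists_dual_vector ℝ (x : X) (norm_ne_zero_iff.mpr hx0)
    refine ⟨φ, h1, ?_⟩
    rw [h2, hAx x]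
    norm_num
  choose φx hφx1 hφx2 using hφ
  -- continuity of evaluation on the weak space
  have hcont : ∀ φ : StrongDual ℝ X, Continuous fun v : WeakSpace ℝ X => φ (show X from v) :=
    fun φ => WeakBilin.eval_continuous ((topDualPairing ℝ X).flip) φ
  -- the index type
  set ι : Type u := WNbhd X × ULift.{u} ℕ with hι
  set εn : ι → ℝ := fun i => 1 / (i.2.down + 1) with hεn
  have hεpos : ∀ i : ι, 0 < εn i := fun i => by positivity
  have hεle : ∀ i : ι, εn i ≤ 1 := by
    intro i
    rw [hεn, div_le_one (by positivity)]
    simp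
  -- the key construction, one application of `h` per index
  have key : ∀ i : ι, ∃ (xf : A → X) (zz : X),
      zz ∈ (show Set X from i.1.1) ∧ ‖zz‖ = 1 ∧
      ∀ x : A, (xf x - (x : X)) ∈ (show Set X from i.1.1) ∧ 1 - εn i < φx x (xf x) ∧
        ‖xf x‖ ≤ 1 ∧ ‖xf x + zz‖ ≤ 1 ∧ ‖xf x - zz‖ ≤ 1 := by
    intro i
    -- translated weakly open sets
    have htrans : ∀ x : A, Continuous fun u : WeakSpace ℝ X =>
        (show WeakSpace ℝ X from (show X from u) - (x : X)) := by
      intro x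
      refine WeakBilin.continuous_of_continuous_eval _ fun ψ => ?_
      have : Continuous fun u : WeakSpace ℝ X =>
          ψ (show X from u) - ψ (x : X) := (hcont ψ).sub continuous_const
      exact this.congr fun u => (map_sub ψ _ _).symm
    set Wt : A → Set (WeakSpace ℝ X) := fun x =>
      ((fun u : WeakSpace ℝ X => (show WeakSpace ℝ X from (show X from u) - (x : X))) ⁻¹' i.1.1)
        ∩ {u : WeakSpace ℝ X | φx x (show X from u) ∈ Set.Ioi (1 - εn i)} with hWt
    have hWtopen : ∀ x : A, IsOpen (Wt x) :=
      fun x => (i.1.2.1.preimage (htrans x)).inter (isOpen_Ioi.preimage (hcont (φx x)))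
    set U : A → Set X := fun x => (show Set X from Wt x) ∩ closedBall 0 1 with hU
    have hxU : ∀ x : A, (x : X) ∈ U x := by
      intro x
      refine ⟨⟨?_, ?_⟩, ?_⟩
      · show ((x : X) - (x : X)) ∈ (show Set X from i.1.1)
        rw [sub_self]
        exact i.1.2.2
      · show φx x (x : X) ∈ Set.Ioi (1 - εn i)
        rw [hφx2 x]
        have := hεpos i
        simp only [Set.mem_Ioi]
        linarith
      · rw [mem_closedBall_zero_iff, hAx x]
    set 𝒰 : Set (Set X) := Set.range U with h𝒰
    have hcard : #𝒰 < κ := lt_of_le_of_lt Cardinal.mk_range_le hAκ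
    have hform : ∀ U' ∈ 𝒰, U'.Nonempty ∧ ∃ W : Set (WeakSpace ℝ X), IsOpen W ∧
        U' = (show Set X from W) ∩ closedBall 0 1 := by
      rintro U' ⟨x, rfl⟩
      exact ⟨⟨x, hxU x⟩, Wt x, hWtopen x, rfl⟩
    obtain ⟨xf0, zz, hzV, hzS, hxprop⟩ :=
      h 𝒰 hcard hform ((show Set X from i.1.1) ∩ closedBall 0 1)
        ⟨i.1.1, i.1.2.1, rfl⟩ ⟨i.1.2.2, by simp⟩ 1 one_pos
    refine ⟨fun x => xf0 ⟨U x, Set.mem_range_self x⟩, zz, hzV.1, by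
      simpa [mem_sphere_zero_iff_norm] using hzS, ?_⟩
    intro x
    obtain ⟨hmem, hplus, hminus⟩ := hxprop ⟨U x, Set.mem_range_self x⟩
    refine ⟨hmem.1.1, hmem.1.2, ?_, ?_, ?_⟩
    · simpa [mem_closedBall_zero_iff] using hmem.2
    · simpa [mem_closedBall_zero_iff] using hplus
    · simpa [mem_closedBall_zero_iff] using hminus
  choose xf zz hz1 hz2 hprop using key
  -- norms are exactly 1
  have hone : ∀ (i : ι) (x : A), ‖xf i x + zz i‖ = 1 ∧ ‖xf i x - zz i‖ = 1 := by
    intro i x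
    obtain ⟨-, -, -, hp, hm⟩ := hprop i x
    have hz := hz2 i
    have h2 : ‖(xf i x + zz i) - (xf i x - zz i)‖ ≤ ‖xf i x + zz i‖ + ‖xf i x - zz i‖ :=
      norm_sub_le _ _
    have h3 : (xf i x + zz i) - (xf i x - zz i) = zz i + zz i := by abel
    rw [h3] at h2
    have h4 : ‖zz i + zz i‖ = 2 := by
      have h5 : zz i + zz i = (2 : ℝ) • zz i := (two_smul ℝ _).symm
      rw [h5, norm_smul, hz]
      norm_num
    rw [h4] at h2
    constructor <;> linarith
  -- lower bounds on norms
  have hnx : ∀ (i : ι) (x : A), 1 - εn i < ‖xf i x‖ ∧ 0 < ‖xf i x‖ := by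
    intro i x
    obtain ⟨-, hφlt, hle, -, -⟩ := hprop i x
    have hb : φx x (xf i x) ≤ ‖xf i x‖ := by
      calc φx x (xf i x) ≤ |φx x (xf i x)| := le_abs_self _
        _ ≤ ‖φx x‖ * ‖xf i x‖ := (φx x).le_opNorm _
        _ = ‖xf i x‖ := by rw [hφx1]; ring
    have h1 : 1 - εn i < ‖xf i x‖ := lt_of_lt_of_le hφlt hb
    exact ⟨h1, by have := hεle i; linarith⟩
  -- distance from normalization
  have hyd : ∀ (i : ι) (x : A), ‖(‖xf i x‖⁻¹ • xf i x) - xf i x‖ < εn i := by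
    intro i x
    obtain ⟨h1, h0⟩ := hnx i x
    obtain ⟨-, -, hle, -, -⟩ := hprop i x
    have he : (‖xf i x‖⁻¹ • xf i x) - xf i x = (‖xf i x‖⁻¹ - 1) • xf i x := by
      rw [sub_smul, one_smul]
    rw [he, norm_smul, Real.norm_eq_abs]
    have e1 : |‖xf i x‖⁻¹ - 1| * ‖xf i x‖ = |(‖xf i x‖⁻¹ - 1) * ‖xf i x‖| := by
      rw [abs_mul, abs_of_nonneg (norm_nonneg _)]
    have e2 : (‖xf i x‖⁻¹ - 1) * ‖xf i x‖ = 1 - ‖xf i x‖ := by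
      field_simp
    rw [e1, e2, abs_of_nonneg (by linarith)]
    linarith
  have hysph : ∀ (x : A) (i : ι), (‖xf i x‖⁻¹ • xf i x) ∈ sphere (0 : X) 1 := by
    intro x i
    have h0 := (hnx i x).2
    rw [mem_sphere_zero_iff_norm, norm_smul, Real.norm_eq_abs, abs_of_nonneg (by positivity)]
    field_simp
  -- a convergence criterion
  have tends : ∀ (f : ι → ℝ) (l : ℝ),
      (∀ ε : ℝ, 0 < ε → ∃ N : ι, ∀ i : ι, N ≤ i → |f i - l| < ε) →
      Tendsto f atTop (𝓝 l) := by
    intro f l hf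
    rw [Metric.tendsto_atTop]
    intro ε hε
    obtain ⟨N, hN⟩ := hf ε hε
    exact ⟨N, fun i hi => by rw [Real.dist_eq]; exact hN i hi⟩
  -- smallness of εn along the net
  have hεsmall : ∀ ε : ℝ, 0 < ε → ∃ N : ι, ∀ i : ι, N ≤ i → εn i < ε := by
    intro ε hε
    obtain ⟨n, hn⟩ := exists_nat_one_div_lt hε
    refine ⟨(⟨Set.univ, isOpen_univ, Set.mem_univ _⟩, ⟨n⟩), fun i hi => ?_⟩
    have hle2 : (n : ℝ) ≤ (i.2.down : ℝ) := by exact_mod_cast (hi.2 : n ≤ i.2.down)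
    calc εn i = 1 / ((i.2.down : ℝ) + 1) := rfl
      _ ≤ 1 / ((n : ℝ) + 1) := by
          apply one_div_le_one_div_of_le (by positivity) (by linarith)
      _ < ε := hn
  refine ⟨ι, inferInstance, inferInstance, fun a b => ⟨a ⊔ b, le_sup_left, le_sup_right⟩,
    fun x i => ‖xf i x‖⁻¹ • xf i x, zz,
    hysph, fun i => by rw [mem_sphere_zero_iff_norm]; exact hz2 i, ?_, ?_, ?_⟩
  · -- norm convergence
    intro x
    constructor
    · refine tends _ _ fun ε hε => ?_
      obtain ⟨N, hN⟩ := hεsmall ε hε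
      refine ⟨N, fun i hi => ?_⟩
      have h1 : ‖zz i + xf i x‖ = 1 := by rw [add_comm]; exact (hone i x).1
      have h2 : |‖zz i + ‖xf i x‖⁻¹ • xf i x‖ - ‖zz i + xf i x‖| ≤
          ‖(zz i + ‖xf i x‖⁻¹ • xf i x) - (zz i + xf i x)‖ := abs_norm_sub_norm_le _ _
      have h3 : (zz i + ‖xf i x‖⁻¹ • xf i x) - (zz i + xf i x)
          = (‖xf i x‖⁻¹ • xf i x) - xf i x := by abel
      rw [h3, h1] at h2
      have := hyd i x
      have := hN i hi
      calc |‖zz i + ‖xf i x‖⁻¹ • xf i x‖ - 1| ≤ ‖(‖xf i x‖⁻¹ • xf i x) - xf i x‖ := h2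
        _ < ε := by linarith
    · refine tends _ _ fun ε hε => ?_
      obtain ⟨N, hN⟩ := hεsmall ε hε
      refine ⟨N, fun i hi => ?_⟩
      have h1 : ‖zz i - xf i x‖ = 1 := by
        rw [← norm_neg]; simpa [neg_sub] using (hone i x).2
      have h2 : |‖zz i - ‖xf i x‖⁻¹ • xf i x‖ - ‖zz i - xf i x‖| ≤
          ‖(zz i - ‖xf i x‖⁻¹ • xf i x) - (zz i - xf i x)‖ := abs_norm_sub_norm_le _ _
      have h3 : (zz i - ‖xf i x‖⁻¹ • xf i x) - (zz i - xf i x)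
          = xf i x - (‖xf i x‖⁻¹ • xf i x) := by abel
      rw [h3, h1] at h2
      have h4 := hyd i x
      have h5 : ‖xf i x - ‖xf i x‖⁻¹ • xf i x‖ < εn i := by
        rw [← norm_neg]; simpa [neg_sub] using h4
      have := hN i hi
      calc |‖zz i - ‖xf i x‖⁻¹ • xf i x‖ - 1| ≤ ‖xf i x - ‖xf i x‖⁻¹ • xf i x‖ := h2
        _ < ε := by linarith
  · -- z → 0 weakly
    intro φ
    refine tends _ _ fun ε hε => ?_
    have hop : IsOpen {u : WeakSpace ℝ X | |φ (show X from u)| < ε} :=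
      isOpen_Iio.preimage ((hcont φ).abs)
    have h0m : (0 : WeakSpace ℝ X) ∈ {u : WeakSpace ℝ X | |φ (show X from u)| < ε} := by
      show |φ (0 : X)| < ε
      simpa using hε
    refine ⟨(⟨_, hop, h0m⟩, ⟨0⟩), fun i hi => ?_⟩
    have hsub := WNbhd.subset_of_le hi.1
    have hz := hz1 i
    have : |φ (zz i)| < ε := hsub hz
    simpa using this
  · -- y x → x weakly
    intro x φ
    refine tends _ _ fun ε hε => ?_
    have hφ2 : (0:ℝ) < ε / (2 * (‖φ‖ + 1)) := by positivity
    obtain ⟨N1, hN1⟩ := hεsmall (ε / (2 * (‖φ‖ + 1))) hφ2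
    have hop : IsOpen {u : WeakSpace ℝ X | |φ (show X from u)| < ε / 2} :=
      isOpen_Iio.preimage ((hcont φ).abs)
    have h0m : (0 : WeakSpace ℝ X) ∈ {u : WeakSpace ℝ X | |φ (show X from u)| < ε / 2} := by
      show |φ (0 : X)| < ε / 2
      simp only [map_zero, abs_zero]
      linarith
    set N2 : ι := (⟨_, hop, h0m⟩, ⟨0⟩) with hN2
    refine ⟨N1 ⊔ N2, fun i hi => ?_⟩
    have hi1 : N1 ≤ i := le_trans le_sup_left hi
    have hi2 : N2 ≤ i := le_trans le_sup_right hi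
    obtain ⟨hmemW, -, -, -, -⟩ := hprop i x
    have hsub := WNbhd.subset_of_le hi2.1
    have hx2 : |φ (xf i x - (x : X))| < ε / 2 := hsub hmemW
    have hyd2 := hyd i x
    have hεi := hN1 i hi1
    have hterm1 : |φ ((‖xf i x‖⁻¹ • xf i x) - xf i x)| < ε / 2 := by
      have hb : |φ ((‖xf i x‖⁻¹ • xf i x) - xf i x)| ≤
          ‖φ‖ * ‖(‖xf i x‖⁻¹ • xf i x) - xf i x‖ := φ.le_opNorm _
      have hφnn : ‖φ‖ ≤ ‖φ‖ + 1 := by linarith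
      have hc : ‖φ‖ * ‖(‖xf i x‖⁻¹ • xf i x) - xf i x‖ ≤
          (‖φ‖ + 1) * ‖(‖xf i x‖⁻¹ • xf i x) - xf i x‖ := by
        apply mul_le_mul_of_nonneg_right hφnn (norm_nonneg _)
      have hd : (‖φ‖ + 1) * ‖(‖xf i x‖⁻¹ • xf i x) - xf i x‖ <
          (‖φ‖ + 1) * (ε / (2 * (‖φ‖ + 1))) := by
        apply mul_lt_mul_of_pos_left (lt_trans hyd2 hεi) (by positivity)
      have he : (‖φ‖ + 1) * (ε / (2 * (‖φ‖ + 1))) = ε / 2 := by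
        field_simp
      linarith
    have hsplit : φ (‖xf i x‖⁻¹ • xf i x) - φ (x : X)
        = φ ((‖xf i x‖⁻¹ • xf i x) - xf i x) + φ (xf i x - (x : X)) := by
      rw [map_sub, map_sub]
      ring
    rw [hsplit]
    calc |φ ((‖xf i x‖⁻¹ • xf i x) - xf i x) + φ (xf i x - (x : X))|
        ≤ |φ ((‖xf i x‖⁻¹ • xf i x) - xf i x)| + |φ (xf i x - (x : X))| := abs_add_le _ _
      _ < ε := by linarith
end
end

section
/- Let X be a T₄ locally compact topological space. Then C₀(X) fails the (density(X))⁺-SSD2P: there exists a set A of norm-one functionals on C₀(X) of cardinality at most density(X) (namely the Dirac evaluations at points of a dense subset) such that there do NOT exist functions {f_x} ⊂ B_{C₀(X)} and g ∈ B_{C₀(X)} with ‖g‖ ≥ 2/3, f_x(x) ≥ 2/3 and ‖f_x ± g‖ ≤ 1 for all x in the dense set. -/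
open Cardinal Metric Filter Topology NormedSpace
open scoped ENNReal
universe u
noncomputable section

/-- The density character of a topological space: the least cardinality of a dense
subset, joined with `ℵ₀`. -/
def densityChar (X : Type u) [TopologicalSpace X] : Cardinal.{u} :=
  sInf {c | ∃ D : Set X, Dense D ∧ #D = c} ⊔ ℵ₀

namespace C0Aux

variable {X : Type u} [TopologicalSpace X]

theorem abs_apply_le_norm (f : ZeroAtInftyContinuousMap X ℝ) (x : X) : |f x| ≤ ‖f‖ := by
  rw [← ZeroAtInftyContinuousMap.norm_toBCF_eq_norm]
  exact f.toBCF.norm_coe_le_norm x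

theorem norm_le_of_forall {f : ZeroAtInftyContinuousMap X ℝ} {C : ℝ} (hC : 0 ≤ C)
    (h : ∀ x, |f x| ≤ C) : ‖f‖ ≤ C := by
  rw [← ZeroAtInftyContinuousMap.norm_toBCF_eq_norm]
  exact (BoundedContinuousFunction.norm_le hC).2 h

/-- The Dirac evaluation functional on `C₀(X)`. -/
def delta (x : X) : StrongDual ℝ (ZeroAtInftyContinuousMap X ℝ) :=
  LinearMap.mkContinuous
    { toFun := fun f => f x
      map_add' := fun f g => rfl
      map_smul' := fun c f => rfl } 1
    (fun f => by simpa [Real.norm_eq_abs] using abs_apply_le_norm f x)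

@[simp] theorem delta_apply (x : X) (f : ZeroAtInftyContinuousMap X ℝ) : delta x f = f x := rfl

theorem norm_delta [T4Space X] [LocallyCompactSpace X] (x : X) : ‖delta (X := X) x‖ = 1 := by
  refine le_antisymm (LinearMap.mkContinuous_norm_le _ zero_le_one _) ?_
  obtain ⟨f, hf1, -, hcs, hbd⟩ :=
    exists_continuous_one_zero_of_isCompact (isCompact_singleton (x := x)) isClosed_empty
      (Set.disjoint_empty _)
  set F : ZeroAtInftyContinuousMap X ℝ := ⟨f, hcs.is_zero_at_infty⟩ with hF
  have hFx : F x = 1 := hf1 rfl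
  have hFnorm : ‖F‖ ≤ 1 := norm_le_of_forall zero_le_one fun y => by
    have h := hbd y; rw [Set.mem_Icc] at h
    have hFy : F y = f y := rfl
    rw [abs_le, hFy]
    exact ⟨by linarith [h.1], h.2⟩
  calc (1 : ℝ) = |delta x F| := by simp [hFx]
    _ ≤ ‖delta (X := X) x‖ * ‖F‖ := (delta x).le_opNorm F
    _ ≤ ‖delta (X := X) x‖ * 1 := by
        exact mul_le_mul_of_nonneg_left hFnorm (ContinuousLinearMap.opNorm_nonneg _)
    _ = ‖delta (X := X) x‖ := mul_one _

theorem part2 (D : Set X) (hD : Dense D) :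
    ¬ ∃ (f : D → ZeroAtInftyContinuousMap X ℝ) (g : ZeroAtInftyContinuousMap X ℝ),
        (∀ x : D, ‖f x‖ ≤ 1) ∧ ‖g‖ ≤ 1 ∧ 2 / 3 ≤ ‖g‖ ∧
        ∀ x : D, 2 / 3 ≤ f x (x : X) ∧ ‖f x + g‖ ≤ 1 ∧ ‖f x - g‖ ≤ 1 := by
  rintro ⟨f, g, hf, hg1, hg23, h⟩
  -- there is a point where |g| > 1/3
  have hex : ∃ z : X, 1 / 3 < |g z| := by
    by_contra hcon
    push_neg at hcon
    have : ‖g‖ ≤ 1 / 3 := norm_le_of_forall (by norm_num) hcon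
    linarith
  obtain ⟨z, hz⟩ := hex
  have hopen : IsOpen {w : X | 1 / 3 < |g w|} := by
    have : Continuous fun w => |g w| := g.continuous.abs
    exact isOpen_lt continuous_const this
  obtain ⟨x, hxD, hx⟩ := hD.exists_mem_open hopen ⟨z, hz⟩
  set xd : D := ⟨x, hxD⟩
  obtain ⟨h23, hplus, hminus⟩ := h xd
  have h1 : |f xd x + g x| ≤ 1 := by
    have := abs_apply_le_norm (f xd + g) x
    simpa using this.trans hplus
  have h2 : |f xd x - g x| ≤ 1 := by
    have := abs_apply_le_norm (f xd - g) x
    simpa using this.trans hminus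
  rw [abs_le] at h1 h2
  have hx' : 1 / 3 < |g x| := hx
  rw [lt_abs] at hx'
  rcases hx' with hpos | hneg
  · linarith [h1.2]
  · linarith [h2.2]

end C0Aux

/-- For a T₄ locally compact space `X`, the space `C₀(X)` fails the `density(X)⁺`-SSD2P;
concretely, for any dense `D ⊆ X` there are no `{f_x} ⊆ B` and `g ∈ B` with `‖g‖ ≥ 2/3`,
`f_x(x) ≥ 2/3` and `‖f_x ± g‖ ≤ 1` for all `x ∈ D`. -/
theorem C0_fails_densitySucc_SSD2P (X : Type u) [TopologicalSpace X] [T4Space X]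
    [LocallyCompactSpace X] :
    ¬ SSD2P (Order.succ (densityChar X)) (ZeroAtInftyContinuousMap X ℝ) ∧
    ∀ D : Set X, Dense D →
      ¬ ∃ (f : D → ZeroAtInftyContinuousMap X ℝ) (g : ZeroAtInftyContinuousMap X ℝ),
        (∀ x : D, ‖f x‖ ≤ 1) ∧ ‖g‖ ≤ 1 ∧ 2 / 3 ≤ ‖g‖ ∧
        ∀ x : D, 2 / 3 ≤ f x (x : X) ∧ ‖f x + g‖ ≤ 1 ∧ ‖f x - g‖ ≤ 1 := by
  refine ⟨?_, fun D hD => C0Aux.part2 D hD⟩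
  intro hS
  -- pick a dense set of minimal cardinality
  have hne : {c : Cardinal.{u} | ∃ D : Set X, Dense D ∧ #D = c}.Nonempty :=
    ⟨#(Set.univ : Set X), Set.univ, dense_univ, rfl⟩
  obtain ⟨D, hD, hDcard⟩ := csInf_mem hne
  have hDle : #D ≤ densityChar X := by
    rw [densityChar, hDcard]; exact le_sup_left
  set A : Set (StrongDual ℝ (ZeroAtInftyContinuousMap X ℝ)) :=
    Set.range (fun x : D => C0Aux.delta (x : X)) with hA
  have hAnorm : ∀ φ ∈ A, ‖φ‖ = 1 := by
    rintro φ ⟨x, rfl⟩; exact C0Aux.norm_delta _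
  have hAcard : #A < Order.succ (densityChar X) := by
    rw [Order.lt_succ_iff]
    exact (Cardinal.mk_range_le).trans hDle
  obtain ⟨B, y, hB, hy1, hynorm, hpm, hnorming⟩ := hS A hAnorm hAcard (1/3) (by norm_num)
  have hpick : ∀ x : D, ∃ b ∈ B, 1 - 1/3 ≤ C0Aux.delta (x : X) b :=
    fun x => hnorming _ ⟨x, rfl⟩
  choose f hfB hf23 using hpick
  refine C0Aux.part2 D hD ⟨f, y, ?_, ?_, ?_, ?_⟩
  · intro x
    have := hB (hfB x)
    rwa [mem_closedBall_zero_iff] at this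
  · rwa [mem_closedBall_zero_iff] at hy1
  · have : (1 : ℝ) - 1/3 ≤ ‖y‖ := hynorm
    linarith
  · intro x
    obtain ⟨hp, hm⟩ := hpm _ (hfB x)
    rw [mem_closedBall_zero_iff] at hp hm
    refine ⟨?_, hp, hm⟩
    have h := hf23 x
    rw [C0Aux.delta_apply] at h
    linarith
end
end

section
/- Let X be a T₄ locally compact space with cellularity c(X) > ℵ₀. Then C₀(X) has the attaining c(X)-SSD2P: for every set M of norm-one regular Borel measures on X of cardinality < c(X), there exist functions B ⊂ S_{C₀(X)} which norm M and a function h ∈ S_{C₀(X)} such that f ± h ∈ S_{C₀(X)} for every f ∈ B. -/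
open Cardinal Metric Filter Topology NormedSpace
open scoped ENNReal
universe u
noncomputable section

/-- The cellularity of a topological space: the supremum of the cardinalities of families
of pairwise disjoint non-empty open sets, joined with `ℵ₀`. -/
def cellularity (X : Type u) [TopologicalSpace X] : Cardinal.{u} :=
  (⨆ C : {C : Set (Set X) // (∀ U ∈ C, IsOpen U ∧ U.Nonempty) ∧ C.PairwiseDisjoint id},
    #(C.1)) ⊔ ℵ₀

namespace C0Helpers

variable {X : Type u} [TopologicalSpace X]

/-- Multiply a `C₀` function by a continuous function bounded by `1`. -/
def mulAux (ψ : C(X, ℝ)) (hψ : ∀ x, |ψ x| ≤ 1) (f : ZeroAtInftyContinuousMap X ℝ) :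
    ZeroAtInftyContinuousMap X ℝ where
  toFun := fun x => ψ x * f x
  continuous_toFun := ψ.continuous.mul (map_continuous f)
  zero_at_infty' := by
    apply squeeze_zero_norm (a := fun x => ‖f x‖)
    · intro x
      have h : ‖ψ x * f x‖ = |ψ x| * ‖f x‖ := by
        simp [Real.norm_eq_abs, abs_mul]
      rw [h]
      calc |ψ x| * ‖f x‖ ≤ 1 * ‖f x‖ :=
            mul_le_mul_of_nonneg_right (hψ x) (norm_nonneg _)
        _ = ‖f x‖ := one_mul _
    · simpa using (zero_at_infty (f : ZeroAtInftyContinuousMap X ℝ)).norm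

@[simp] lemma mulAux_apply (ψ : C(X, ℝ)) (hψ : ∀ x, |ψ x| ≤ 1)
    (f : ZeroAtInftyContinuousMap X ℝ) (x : X) : mulAux ψ hψ f x = ψ x * f x := rfl

lemma apply_le_norm (f : ZeroAtInftyContinuousMap X ℝ) (x : X) : |f x| ≤ ‖f‖ := by
  rw [← ZeroAtInftyContinuousMap.norm_toBCF_eq_norm, ← Real.norm_eq_abs]
  exact f.toBCF.norm_coe_le_norm x

lemma norm_le_one_iff (f : ZeroAtInftyContinuousMap X ℝ) :
    ‖f‖ ≤ 1 ↔ ∀ x, |f x| ≤ 1 := by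
  rw [← ZeroAtInftyContinuousMap.norm_toBCF_eq_norm]
  simpa [Real.norm_eq_abs] using f.toBCF.norm_le (zero_le_one)

lemma norm_eq_one (f : ZeroAtInftyContinuousMap X ℝ) (h1 : ∀ x, |f x| ≤ 1)
    {x : X} (hx : |f x| = 1) : ‖f‖ = 1 :=
  le_antisymm ((norm_le_one_iff f).2 h1) (hx ▸ apply_le_norm f x)

/-- a bump function -/
lemma exists_bump [T4Space X] [LocallyCompactSpace X] {U : Set X} (hU : IsOpen U) {x : X}
    (hx : x ∈ U) :
    ∃ b : ZeroAtInftyContinuousMap X ℝ, b x = 1 ∧ (∀ y, b y ∈ Set.Icc (0:ℝ) 1) ∧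
      tsupport b ⊆ U := by
  obtain ⟨K, hK, hxK, hKU⟩ := exists_compact_subset hU hx
  obtain ⟨g, hg0, hg1, hg01⟩ := exists_continuous_zero_one_of_isClosed
    (isClosed_compl_iff.mpr isOpen_interior) isClosed_singleton
    (Set.disjoint_singleton_right.mpr (fun h => h hxK))
  have hsupp : tsupport g ⊆ K := by
    refine (closure_minimal ?_ hK.isClosed)
    intro y hy
    by_contra hyK
    exact hy (hg0 (fun hmem => hyK (interior_subset hmem)))
  have hcs : HasCompactSupport (g : X → ℝ) :=
    IsCompact.of_isClosed_subset hK isClosed_closure hsupp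
  refine ⟨⟨g, hcs.is_zero_at_infty⟩, hg1 rfl, hg01, hsupp.trans hKU⟩

/-- Urysohn with support control -/
lemma exists_urysohn_tsupport [T4Space X] {K U : Set X} (hK : IsClosed K) (hU : IsOpen U)
    (hKU : K ⊆ U) :
    ∃ ψ : C(X, ℝ), Set.EqOn ψ 1 K ∧ (∀ y, ψ y ∈ Set.Icc (0:ℝ) 1) ∧ tsupport ψ ⊆ U := by
  obtain ⟨V, hV, hKV, hVU⟩ := normal_exists_closure_subset hK hU hKU
  obtain ⟨ψ, hψ0, hψ1, hψ01⟩ := exists_continuous_zero_one_of_isClosed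
    (isClosed_compl_iff.mpr hV) hK
    (Set.disjoint_left.mpr fun y hyV hyK => hyV (hKV hyK))
  refine ⟨ψ, hψ1, hψ01, ?_⟩
  refine (closure_minimal (fun y hy => subset_closure ?_) isClosed_closure).trans hVU
  by_contra hyV
  exact hy (hψ0 hyV)

/-- attain near norm -/
lemma exists_near_norming {E : Type*} [NormedAddCommGroup E] [NormedSpace ℝ E]
    (μ : StrongDual ℝ E) (hμ : ‖μ‖ = 1) {r : ℝ} (hr0 : 0 ≤ r) (hr1 : r < 1) :
    ∃ f : E, ‖f‖ ≤ 1 ∧ r < μ f := by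
  by_contra hcon
  push_neg at hcon
  have hle : ‖μ‖ ≤ r := by
    apply ContinuousLinearMap.opNorm_le_bound μ hr0
    intro x
    rcases eq_or_ne x 0 with rfl | hx
    · simp
    · have hxn : (0:ℝ) < ‖x‖ := norm_pos_iff.mpr hx
      have h1 : μ (‖x‖⁻¹ • x) ≤ r := hcon _ (by
        rw [norm_smul, norm_inv, norm_norm]
        exact le_of_eq (inv_mul_cancel₀ hxn.ne'))
      have h2 : μ (-(‖x‖⁻¹ • x)) ≤ r := hcon _ (by
        rw [norm_neg, norm_smul, norm_inv, norm_norm]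
        exact le_of_eq (inv_mul_cancel₀ hxn.ne'))
      rw [map_smul, smul_eq_mul] at h1
      rw [map_neg, map_smul, smul_eq_mul] at h2
      have key : ∀ c : ℝ, ‖x‖⁻¹ * c ≤ r → c ≤ r * ‖x‖ := by
        intro c hcr
        have := mul_le_mul_of_nonneg_left hcr hxn.le
        rwa [← mul_assoc, mul_inv_cancel₀ hxn.ne', one_mul, mul_comm ‖x‖ r] at this
      have habs : |μ x| ≤ r * ‖x‖ := by
        rw [abs_le]
        refine ⟨?_, key _ h1⟩
        have := key (-(μ x)) (by rw [mul_neg]; linarith)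
        linarith
      simpa [Real.norm_eq_abs] using habs
  rw [hμ] at hle; linarith



lemma coe_sum_apply {ι : Type*} (t : Finset ι) (w : ι → ZeroAtInftyContinuousMap X ℝ)
    (y : X) : (∑ i ∈ t, w i) y = ∑ i ∈ t, w i y := by
  classical
  induction t using Finset.cons_induction with
  | empty => simp
  | cons a s ha ih => simp [Finset.sum_insert ha, ZeroAtInftyContinuousMap.add_apply, ih]

lemma countable_significant {𝒞 : Set (Set X)} (hdisj : 𝒞.PairwiseDisjoint id)
    (μ : StrongDual ℝ (ZeroAtInftyContinuousMap X ℝ)) (hμ : ‖μ‖ = 1) :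
    {U | U ∈ 𝒞 ∧ ∃ g : ZeroAtInftyContinuousMap X ℝ, tsupport g ⊆ U ∧ μ g ≠ 0}.Countable := by
  classical
  set T : ℕ → Set (Set X) := fun n =>
    {U | U ∈ 𝒞 ∧ ∃ g : ZeroAtInftyContinuousMap X ℝ,
      tsupport g ⊆ U ∧ ‖g‖ ≤ 1 ∧ 1 / (n + 1 : ℝ) ≤ μ g} with hT
  have hsub : {U | U ∈ 𝒞 ∧ ∃ g : ZeroAtInftyContinuousMap X ℝ, tsupport g ⊆ U ∧ μ g ≠ 0}
      ⊆ ⋃ n, T n := by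
    rintro U ⟨hU𝒞, g, hg, hgne⟩
    have hgz : g ≠ 0 := by rintro rfl; exact hgne (map_zero μ)
    have hgn : (0:ℝ) < ‖g‖ := norm_pos_iff.mpr hgz
    obtain ⟨g', hg's, hg'n, hg'pos⟩ : ∃ g' : ZeroAtInftyContinuousMap X ℝ,
        tsupport g' ⊆ U ∧ ‖g'‖ ≤ 1 ∧ 0 < μ g' := by
      rcases (lt_or_gt_of_ne hgne) with hneg | hpos
      · refine ⟨-(‖g‖⁻¹ • g), ?_, ?_, ?_⟩
        · refine (closure_mono ?_).trans hg
          intro y hy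
          simp only [Function.mem_support, ZeroAtInftyContinuousMap.neg_apply,
            ZeroAtInftyContinuousMap.smul_apply, ne_eq, neg_eq_zero, smul_eq_mul,
            mul_eq_zero, not_or] at hy
          exact Function.mem_support.mpr hy.2
        · rw [norm_neg]
          apply (norm_le_one_iff _).2
          intro y
          simp only [ZeroAtInftyContinuousMap.smul_apply, smul_eq_mul, abs_mul, abs_inv,
            abs_norm]
          calc ‖g‖⁻¹ * |g y| ≤ ‖g‖⁻¹ * ‖g‖ :=
                mul_le_mul_of_nonneg_left (apply_le_norm g y) (inv_nonneg.mpr hgn.le)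
            _ = 1 := inv_mul_cancel₀ hgn.ne'
        · rw [map_neg, map_smul, smul_eq_mul]
          have : ‖g‖⁻¹ * μ g < 0 := mul_neg_of_pos_of_neg (inv_pos.mpr hgn) hneg
          linarith
      · refine ⟨‖g‖⁻¹ • g, ?_, ?_, ?_⟩
        · refine (closure_mono ?_).trans hg
          intro y hy
          simp only [Function.mem_support, ZeroAtInftyContinuousMap.smul_apply, ne_eq,
            smul_eq_mul, mul_eq_zero, not_or] at hy
          exact Function.mem_support.mpr hy.2
        · apply (norm_le_one_iff _).2
          intro y
          simp only [ZeroAtInftyContinuousMap.smul_apply, smul_eq_mul, abs_mul, abs_inv,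
            abs_norm]
          calc ‖g‖⁻¹ * |g y| ≤ ‖g‖⁻¹ * ‖g‖ :=
                mul_le_mul_of_nonneg_left (apply_le_norm g y) (inv_nonneg.mpr hgn.le)
            _ = 1 := inv_mul_cancel₀ hgn.ne'
        · rw [map_smul, smul_eq_mul]
          exact mul_pos (inv_pos.mpr hgn) hpos
    obtain ⟨n, hn⟩ := exists_nat_one_div_lt hg'pos
    exact Set.mem_iUnion.mpr ⟨n, hU𝒞, g', hg's, hg'n, hn.le⟩
  refine Set.Countable.mono hsub (Set.countable_iUnion fun n => Set.Finite.countable ?_)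
  by_contra hfin
  have hinf : (T n).Infinite := hfin
  obtain ⟨t, hts, htc⟩ := hinf.exists_subset_card_eq (n + 2)
  have hw : ∀ U ∈ t, ∃ g : ZeroAtInftyContinuousMap X ℝ,
      tsupport g ⊆ U ∧ ‖g‖ ≤ 1 ∧ 1 / (n + 1 : ℝ) ≤ μ g := fun U hU => (hts hU).2
  choose! w hw1 hw2 hw3 using hw
  set G := ∑ U ∈ t, w U with hG
  have hGy : ∀ y, |G y| ≤ 1 := by
    intro y
    have hsum : G y = ∑ U ∈ t, w U y := coe_sum_apply t w y
    by_cases hex : ∃ U₀ ∈ t, y ∈ (U₀ : Set X)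
    · obtain ⟨U₀, hU₀t, hyU₀⟩ := hex
      have hone : ∑ U ∈ t, w U y = w U₀ y := by
        refine Finset.sum_eq_single_of_mem U₀ hU₀t (fun U hUt hne => ?_)
        apply image_eq_zero_of_notMem_tsupport
        intro hy
        have hyU : y ∈ U := hw1 U hUt hy
        exact Set.disjoint_left.mp (hdisj (hts hUt).1 (hts hU₀t).1 hne) hyU hyU₀
      rw [hsum, hone]
      exact (apply_le_norm _ _).trans (hw2 U₀ hU₀t)
    · push_neg at hex
      have : ∀ U ∈ t, w U y = 0 := fun U hUt =>
        image_eq_zero_of_notMem_tsupport (fun hy => hex U hUt (hw1 U hUt hy))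
      rw [hsum, Finset.sum_eq_zero this]
      norm_num
  have hGnorm : ‖G‖ ≤ 1 := (norm_le_one_iff G).2 hGy
  have hμG : ((n : ℝ) + 2) * (1 / (n + 1)) ≤ μ G := by
    rw [hG, map_sum]
    calc ((n : ℝ) + 2) * (1 / (n + 1)) = ∑ _U ∈ t, 1 / (n + 1 : ℝ) := by
          rw [Finset.sum_const, htc, nsmul_eq_mul]; push_cast; ring
      _ ≤ ∑ U ∈ t, μ (w U) := Finset.sum_le_sum fun U hU => hw3 U hU
  have hμG' : μ G ≤ 1 := by
    calc μ G ≤ |μ G| := le_abs_self _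
      _ ≤ ‖μ‖ * ‖G‖ := by simpa [Real.norm_eq_abs] using μ.le_opNorm G
      _ ≤ 1 := by rw [hμ]; linarith
  have hgt : (1 : ℝ) < ((n : ℝ) + 2) * (1 / (n + 1)) := by
    rw [mul_one_div, lt_div_iff₀ (by positivity)]
    linarith
  linarith

end C0Helpers

open C0Helpers Set Function

/-- For a T₄ locally compact space `X` with uncountable cellularity, `C₀(X)` has the
attaining `c(X)`-SSD2P: every set `M` of norm-one functionals with `|M| < c(X)` admits
`B ⊆ S` norming `M` and `h ∈ S` with `B ± h ⊆ S`. -/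
theorem C0_ASSD2P_of_cellularity (X : Type u) [TopologicalSpace X] [T4Space X]
    [LocallyCompactSpace X] (hc : ℵ₀ < cellularity X)
    (M : Set (StrongDual ℝ (ZeroAtInftyContinuousMap X ℝ)))
    (hM1 : ∀ μ ∈ M, ‖μ‖ = 1) (hMc : #M < cellularity X) :
    ∃ (B : Set (ZeroAtInftyContinuousMap X ℝ)) (h : ZeroAtInftyContinuousMap X ℝ),
      B ⊆ sphere 0 1 ∧ h ∈ sphere (0 : ZeroAtInftyContinuousMap X ℝ) 1 ∧
      (∀ f ∈ B, f + h ∈ sphere (0 : ZeroAtInftyContinuousMap X ℝ) 1 ∧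
        f - h ∈ sphere (0 : ZeroAtInftyContinuousMap X ℝ) 1) ∧
      ∀ μ ∈ M, ∀ r ∈ Set.Ioo (0 : ℝ) 1, ∃ f ∈ B, r ≤ μ f := by
  classical
  -- Step 1: a large family of pairwise disjoint nonempty open sets
  set S : Cardinal.{u} :=
    ⨆ C : {C : Set (Set X) // (∀ U ∈ C, IsOpen U ∧ U.Nonempty) ∧ C.PairwiseDisjoint id},
      #(C.1) with hSdef
  have hcS : cellularity X = S ⊔ ℵ₀ := rfl
  have h0 : ℵ₀ < S := by
    rcases lt_sup_iff.mp (hcS ▸ hc) with h | h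
    · exact h
    · exact absurd h (lt_irrefl _)
  set κ : Cardinal.{u} := #M ⊔ ℵ₀ with hκdef
  have hκinf : ℵ₀ ≤ κ := le_sup_right
  have hκS : κ < S := by
    refine sup_lt_iff.mpr ⟨?_, h0⟩
    calc #M < cellularity X := hMc
      _ = S ⊔ ℵ₀ := hcS
      _ = S := sup_eq_left.mpr h0.le
  haveI : Nonempty {C : Set (Set X) // (∀ U ∈ C, IsOpen U ∧ U.Nonempty) ∧
      C.PairwiseDisjoint id} := ⟨⟨∅, fun U hU => absurd hU (Set.notMem_empty U),
    Set.pairwiseDisjoint_empty⟩⟩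
  obtain ⟨C, hC⟩ := exists_lt_of_lt_ciSup (hSdef ▸ hκS)
  obtain ⟨hCopen, hCdisj⟩ := C.2
  -- Step 2: all but few members of the family are null for every μ ∈ M
  set bad : Set (Set X) :=
    {U | U ∈ C.1 ∧ ¬ ∀ g : ZeroAtInftyContinuousMap X ℝ, tsupport g ⊆ U →
      ∀ μ ∈ M, μ g = 0} with hbaddef
  have hbadsub : bad ⊆ ⋃ μ : M,
      {U | U ∈ C.1 ∧ ∃ g : ZeroAtInftyContinuousMap X ℝ, tsupport g ⊆ U ∧ μ.1 g ≠ 0} := by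
    rintro U ⟨hU, hnull⟩
    push_neg at hnull
    obtain ⟨g, hg, μ, hμM, hgμ⟩ := hnull
    exact Set.mem_iUnion.mpr ⟨⟨μ, hμM⟩, hU, g, hg, hgμ⟩
  have hbadcard : #bad ≤ κ := by
    calc #bad ≤ #(⋃ μ : M, {U | U ∈ C.1 ∧ ∃ g : ZeroAtInftyContinuousMap X ℝ,
          tsupport g ⊆ U ∧ μ.1 g ≠ 0}) := Cardinal.mk_le_mk_of_subset hbadsub
      _ ≤ #M * ⨆ μ : M, #{U | U ∈ C.1 ∧ ∃ g : ZeroAtInftyContinuousMap X ℝ,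
          tsupport g ⊆ U ∧ μ.1 g ≠ 0} := Cardinal.mk_iUnion_le _
      _ ≤ #M * ℵ₀ := by
          refine mul_le_mul_right (ciSup_le' fun μ => ?_) _
          rw [Cardinal.mk_le_aleph0_iff]
          exact Set.countable_coe_iff.mpr (countable_significant hCdisj μ.1 (hM1 μ.1 μ.2))
      _ ≤ κ * κ := mul_le_mul' le_sup_left le_sup_right
      _ = κ := Cardinal.mul_eq_self hκinf
  -- Step 3: there are at least two null members
  set good : Set (Set X) := C.1 \ bad with hgooddef
  have hgood2 : 1 < #good := by
    by_contra hle
    push_neg at hle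
    have heq : #good + #bad = #(C.1) :=
      Cardinal.mk_diff_add_mk (fun U hU => hU.1)
    have : #(C.1) ≤ κ := by
      calc #(C.1) = #good + #bad := heq.symm
        _ ≤ 1 + κ := add_le_add hle hbadcard
        _ ≤ κ + κ := add_le_add (le_trans (le_of_lt Cardinal.one_lt_aleph0) hκinf) le_rfl
        _ = κ := Cardinal.add_eq_self hκinf
    exact absurd hC (not_lt.mpr this)
  rw [Cardinal.one_lt_iff_nontrivial] at hgood2
  obtain ⟨⟨U₁, hU₁⟩, ⟨U₂, hU₂⟩, hne'⟩ := hgood2.exists_pair_ne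
  have hne12 : U₁ ≠ U₂ := fun h => hne' (Subtype.ext h)
  have hNull₁ : ∀ g : ZeroAtInftyContinuousMap X ℝ, tsupport g ⊆ U₁ →
      ∀ μ ∈ M, μ g = 0 := by
    by_contra h; exact hU₁.2 ⟨hU₁.1, h⟩
  have hNull₂ : ∀ g : ZeroAtInftyContinuousMap X ℝ, tsupport g ⊆ U₂ →
      ∀ μ ∈ M, μ g = 0 := by
    by_contra h; exact hU₂.2 ⟨hU₂.1, h⟩
  obtain ⟨hU₁open, hU₁ne⟩ := hCopen U₁ hU₁.1
  obtain ⟨hU₂open, hU₂ne⟩ := hCopen U₂ hU₂.1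
  have hd : Disjoint U₁ U₂ := hCdisj hU₁.1 hU₂.1 hne12
  -- Step 4: bump functions
  obtain ⟨x₁, hx₁⟩ := hU₁ne
  obtain ⟨x₂, hx₂⟩ := hU₂ne
  obtain ⟨h, hh1, hh01, hhsupp⟩ := exists_bump hU₁open hx₁
  obtain ⟨b, hb1, hb01, hbsupp⟩ := exists_bump hU₂open hx₂
  have hhabs : ∀ y, |h y| ≤ 1 := fun y => abs_le.mpr ⟨by linarith [(hh01 y).1], (hh01 y).2⟩
  have hbabs : ∀ y, |b y| ≤ 1 := fun y => abs_le.mpr ⟨by linarith [(hb01 y).1], (hb01 y).2⟩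
  have hnormh : ‖h‖ = 1 := norm_eq_one h hhabs (x := x₁) (by rw [hh1]; norm_num)
  have hx₁supp : x₁ ∈ tsupport h :=
    subset_tsupport h (Function.mem_support.mpr (by rw [hh1]; norm_num))
  have hx₂supp : x₂ ∈ tsupport b :=
    subset_tsupport b (Function.mem_support.mpr (by rw [hb1]; norm_num))
  -- Step 5: the set B
  set B : Set (ZeroAtInftyContinuousMap X ℝ) :=
    {f | ‖f‖ = 1 ∧ ∀ y ∈ tsupport h, f y = 0} with hBdef
  refine ⟨B, h, ?_, ?_, ?_, ?_⟩
  · intro f hf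
    simpa [mem_sphere_iff_norm] using hf.1
  · simpa [mem_sphere_iff_norm] using hnormh
  · rintro f ⟨hfn, hfz⟩
    have hpm : ∀ s : ℝ, |s| = 1 → ‖f + s • h‖ = 1 := by
      intro s hs
      apply norm_eq_one
      · intro y
        by_cases hy : y ∈ tsupport h
        · rw [ZeroAtInftyContinuousMap.add_apply, hfz y hy, zero_add,
            ZeroAtInftyContinuousMap.smul_apply, smul_eq_mul, abs_mul, hs, one_mul]
          exact hhabs y
        · have hz : h y = 0 := image_eq_zero_of_notMem_tsupport hy
          rw [ZeroAtInftyContinuousMap.add_apply, ZeroAtInftyContinuousMap.smul_apply,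
            smul_eq_mul, hz, mul_zero, add_zero]
          exact hfn ▸ apply_le_norm f y
      · show |(f + s • h) x₁| = 1
        rw [ZeroAtInftyContinuousMap.add_apply, hfz x₁ hx₁supp, zero_add,
          ZeroAtInftyContinuousMap.smul_apply, smul_eq_mul, hh1, mul_one]
        exact hs
    constructor
    · have := hpm 1 (by norm_num)
      rw [one_smul] at this
      simpa [mem_sphere_iff_norm] using this
    · have := hpm (-1) (by norm_num)
      have h2 : f + (-1 : ℝ) • h = f - h := by
        apply ZeroAtInftyContinuousMap.ext
        intro y
        simp only [ZeroAtInftyContinuousMap.add_apply, ZeroAtInftyContinuousMap.smul_apply,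
          ZeroAtInftyContinuousMap.sub_apply, smul_eq_mul]
        ring
      rw [h2] at this
      simpa [mem_sphere_iff_norm] using this
  · rintro μ hμM r ⟨hr0, hr1⟩
    obtain ⟨f₀, hf₀n, hf₀r⟩ := exists_near_norming μ (hM1 μ hμM) hr0.le hr1
    obtain ⟨ψ₁, hψ₁eq, hψ₁01, hψ₁supp⟩ :=
      exists_urysohn_tsupport (isClosed_tsupport h) hU₁open hhsupp
    obtain ⟨ψ₂, hψ₂eq, hψ₂01, hψ₂supp⟩ :=
      exists_urysohn_tsupport (isClosed_tsupport b) hU₂open hbsupp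
    have hψ₁abs : ∀ y, |ψ₁ y| ≤ 1 := fun y =>
      abs_le.mpr ⟨by linarith [(hψ₁01 y).1], (hψ₁01 y).2⟩
    have hψ₂abs : ∀ y, |ψ₂ y| ≤ 1 := fun y =>
      abs_le.mpr ⟨by linarith [(hψ₂01 y).1], (hψ₂01 y).2⟩
    set φ : C(X, ℝ) := (1 - ψ₁) * (1 - ψ₂) with hφdef
    have hφ01 : ∀ y, φ y ∈ Set.Icc (0:ℝ) 1 := by
      intro y
      have h₁ := hψ₁01 y; have h₂ := hψ₂01 y
      simp only [hφdef, ContinuousMap.mul_apply, ContinuousMap.sub_apply,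
        ContinuousMap.one_apply]
      constructor
      · nlinarith [h₁.1, h₁.2, h₂.1, h₂.2]
      · nlinarith [h₁.1, h₁.2, h₂.1, h₂.2]
    have hφabs : ∀ y, |φ y| ≤ 1 := fun y =>
      abs_le.mpr ⟨by linarith [(hφ01 y).1], (hφ01 y).2⟩
    have hψ₂ψ₁abs : ∀ y, |(ψ₂ * (1 - ψ₁)) y| ≤ 1 := by
      intro y
      have h₁ := hψ₁01 y; have h₂ := hψ₂01 y
      simp only [ContinuousMap.mul_apply, ContinuousMap.sub_apply, ContinuousMap.one_apply]
      rw [abs_le]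
      constructor
      · nlinarith [h₁.1, h₁.2, h₂.1, h₂.2]
      · nlinarith [h₁.1, h₁.2, h₂.1, h₂.2]
    set f : ZeroAtInftyContinuousMap X ℝ := mulAux φ hφabs f₀ + b with hfdef
    have hf₀abs : ∀ y, |f₀ y| ≤ 1 := fun y => (apply_le_norm f₀ y).trans hf₀n
    -- f vanishes on tsupport h
    have hfz : ∀ y ∈ tsupport h, f y = 0 := by
      intro y hy
      have hφy : φ y = 0 := by
        simp only [hφdef, ContinuousMap.mul_apply, ContinuousMap.sub_apply,
          ContinuousMap.one_apply, hψ₁eq hy, Pi.one_apply]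
        ring
      have hby : b y = 0 := by
        apply image_eq_zero_of_notMem_tsupport
        intro hyb
        exact Set.disjoint_left.mp hd (hhsupp hy) (hbsupp hyb)
      rw [hfdef, ZeroAtInftyContinuousMap.add_apply, mulAux_apply, hφy, zero_mul, hby,
        add_zero]
    -- ‖f‖ = 1
    have hfb : ∀ y, f y = if y ∈ tsupport b then b y else φ y * f₀ y := by
      intro y
      by_cases hy : y ∈ tsupport b
      · have hφy : φ y = 0 := by
          simp only [hφdef, ContinuousMap.mul_apply, ContinuousMap.sub_apply,
            ContinuousMap.one_apply, hψ₂eq hy, Pi.one_apply]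
          ring
        simp [hfdef, ZeroAtInftyContinuousMap.add_apply, mulAux_apply, hφy, hy]
      · have hby : b y = 0 := image_eq_zero_of_notMem_tsupport hy
        simp [hfdef, ZeroAtInftyContinuousMap.add_apply, mulAux_apply, hby, hy]
    have hfn : ‖f‖ = 1 := by
      apply norm_eq_one (x := x₂)
      · intro y
        rw [hfb y]
        by_cases hy : y ∈ tsupport b
        · rw [if_pos hy]; exact hbabs y
        · rw [if_neg hy, abs_mul]
          calc |φ y| * |f₀ y| ≤ 1 * 1 :=
              mul_le_mul (hφabs y) (hf₀abs y) (abs_nonneg _) zero_le_one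
            _ = 1 := one_mul 1
      · rw [hfb x₂, if_pos hx₂supp, hb1]
        norm_num
    -- μ f = μ f₀
    have hμb : μ b = 0 := hNull₂ b hbsupp μ hμM
    set g₁ : ZeroAtInftyContinuousMap X ℝ := mulAux ψ₁ hψ₁abs f₀ with hg₁def
    set g₂ : ZeroAtInftyContinuousMap X ℝ := mulAux (ψ₂ * (1 - ψ₁)) hψ₂ψ₁abs f₀ with hg₂def
    have hg₁supp : tsupport g₁ ⊆ U₁ := by
      refine (closure_minimal (fun y hy => ?_) (isClosed_tsupport ψ₁)).trans hψ₁supp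
      simp only [hg₁def, Function.mem_support, mulAux_apply, ne_eq, mul_eq_zero, not_or] at hy
      exact subset_closure (Function.mem_support.mpr hy.1)
    have hg₂supp : tsupport g₂ ⊆ U₂ := by
      refine (closure_minimal (fun y hy => ?_) (isClosed_tsupport ψ₂)).trans hψ₂supp
      simp only [hg₂def, Function.mem_support, mulAux_apply, ne_eq, mul_eq_zero, not_or,
        ContinuousMap.mul_apply, ContinuousMap.sub_apply, ContinuousMap.one_apply] at hy
      exact subset_closure (Function.mem_support.mpr hy.1.1)
    have hμg₁ : μ g₁ = 0 := hNull₁ g₁ hg₁supp μ hμM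
    have hμg₂ : μ g₂ = 0 := hNull₂ g₂ hg₂supp μ hμM
    have hdecomp : f₀ = mulAux φ hφabs f₀ + g₁ + g₂ := by
      apply ZeroAtInftyContinuousMap.ext
      intro y
      simp only [ZeroAtInftyContinuousMap.add_apply, mulAux_apply, hφdef, hg₁def, hg₂def,
        ContinuousMap.mul_apply, ContinuousMap.sub_apply, ContinuousMap.one_apply]
      ring
    have hμf : μ f = μ f₀ := by
      have h1 : μ f₀ = μ (mulAux φ hφabs f₀) + μ g₁ + μ g₂ := by
        conv_lhs => rw [hdecomp]
        rw [map_add, map_add]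
      rw [hfdef, map_add, hμb, add_zero, h1, hμg₁, hμg₂, add_zero, add_zero]
    exact ⟨f, ⟨hfn, hfz⟩, by rw [hμf]; exact hf₀r.le⟩
end
end

section
/- Let X be a T₄ locally compact space, M a set of regular signed Borel measures on X with |M| < κ ≤ c(X) where c(X) is the cellularity of X and κ is uncountable. Then there exists a non-empty open set C ⊂ X with |μ|(C) = 0 for every μ ∈ M. -/
open Cardinal Metric Filter Topology NormedSpace
open scoped ENNReal
universe u
noncomputable section

/-- If `M` is a set of regular signed Borel measures on a T₄ locally compact space `X`
with `|M| < κ ≤ c(X)`, `κ` uncountable, then some non-empty open set `C` is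
`|μ|`-null for every `μ ∈ M`. -/
theorem exists_null_open_cell (X : Type u) [TopologicalSpace X] [T4Space X]
    [LocallyCompactSpace X] [MeasurableSpace X] [BorelSpace X]
    (κ : Cardinal.{u}) (hκ : ℵ₀ < κ) (hκc : κ ≤ cellularity X)
    (M : Set (MeasureTheory.SignedMeasure X))
    (hreg : ∀ μ ∈ M, (MeasureTheory.SignedMeasure.totalVariation μ).Regular)
    (hM : #M < κ) :
    ∃ C : Set X, IsOpen C ∧ C.Nonempty ∧
      ∀ μ ∈ M, MeasureTheory.SignedMeasure.totalVariation μ C = 0 := by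
  -- Extract a cellular family of cardinality bigger than `#M ⊔ ℵ₀`.
  have hκsup : κ ≤ ⨆ C : {C : Set (Set X) //
      (∀ U ∈ C, IsOpen U ∧ U.Nonempty) ∧ C.PairwiseDisjoint id}, #(C.1) := by
    rcases le_sup_iff.mp hκc with h | h
    · exact h
    · exact absurd h (not_le_of_gt hκ)
  have hlt : #M ⊔ ℵ₀ < ⨆ C : {C : Set (Set X) //
      (∀ U ∈ C, IsOpen U ∧ U.Nonempty) ∧ C.PairwiseDisjoint id}, #(C.1) :=
    lt_of_lt_of_le (sup_lt_iff.mpr ⟨hM, hκ⟩) hκsup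
  haveI : Nonempty {C : Set (Set X) //
      (∀ U ∈ C, IsOpen U ∧ U.Nonempty) ∧ C.PairwiseDisjoint id} :=
    ⟨⟨∅, by simp, Set.pairwiseDisjoint_empty⟩⟩
  obtain ⟨C, hC⟩ := (lt_ciSup_iff (Cardinal.bddAbove_range _)).mp hlt
  -- For each `μ ∈ M`, only countably many members of `C` have positive measure.
  have hbad : ∀ μ : M, Set.Countable
      {U : C.1 | 0 < (MeasureTheory.SignedMeasure.totalVariation μ.1) (U : Set X)} := by
    intro μ
    haveI : MeasureTheory.IsFiniteMeasure (MeasureTheory.SignedMeasure.totalVariation μ.1) := by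
      unfold MeasureTheory.SignedMeasure.totalVariation; infer_instance
    apply MeasureTheory.Measure.countable_meas_pos_of_disjoint_iUnion
      (As := fun U : C.1 => (U : Set X))
    · intro U
      exact (C.2.1 U U.2).1.measurableSet
    · intro U V hUV
      exact C.2.2 U.2 V.2 (Subtype.coe_injective.ne hUV)
  set T : Set C.1 := ⋃ μ : M,
    {U : C.1 | 0 < (MeasureTheory.SignedMeasure.totalVariation μ.1) (U : Set X)} with hT
  have hTcard : #T < #C.1 := by
    calc #T ≤ #M * ⨆ μ : M, #({U : C.1 |
          0 < (MeasureTheory.SignedMeasure.totalVariation μ.1) (U : Set X)}) :=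
          Cardinal.mk_iUnion_le _
      _ ≤ #M * ℵ₀ := by
          gcongr
          exact ciSup_le' fun μ => (hbad μ).le_aleph0
      _ ≤ max (max #M ℵ₀) ℵ₀ := Cardinal.mul_le_max _ _
      _ = #M ⊔ ℵ₀ := by rw [max_assoc, max_self]
      _ < #C.1 := hC
  have hTne : T ≠ Set.univ := by
    intro h
    rw [h, Cardinal.mk_univ] at hTcard
    exact lt_irrefl _ hTcard
  obtain ⟨U, hU⟩ := Set.ne_univ_iff_exists_notMem T |>.mp hTne
  refine ⟨(U : Set X), (C.2.1 U U.2).1, (C.2.1 U U.2).2, fun μ hμ => ?_⟩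
  by_contra h
  exact hU (Set.mem_iUnion.mpr ⟨⟨μ, hμ⟩, pos_iff_ne_zero.mpr h⟩)
end
end

section
/- Let X be a T₂½ (Urysohn) topological space and κ an infinite cardinal. If there exists a set A ⊂ X of cardinality κ such that for every x ∈ A every non-empty intersection of at most κ many neighborhoods of x is still a neighborhood of x, then the cellularity of X is at least κ, i.e. there exists a family of κ pairwise disjoint non-empty open subsets of X. -/
open Cardinal Metric Filter Topology NormedSpace
open scoped ENNReal
universe u
noncomputable section

/-- If a T₂½ space `X` has a set `A` of `κ` points such that every non-empty intersection
of at most `κ` neighborhoods of a point of `A` is still a neighborhood, then `X` has a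
cellular family of size `κ`. -/
theorem cellular_family_of_P_points (X : Type u) [TopologicalSpace X] [T25Space X]
    (κ : Cardinal.{u}) (hκ : ℵ₀ ≤ κ) (A : Set X) (hA : #A = κ)
    (hnbhd : ∀ x ∈ A, ∀ S : Set (Set X), #S ≤ κ → (∀ U ∈ S, U ∈ 𝓝 x) → ⋂₀ S ∈ 𝓝 x) :
    ∃ C : Set (Set X), #C = κ ∧ (∀ U ∈ C, IsOpen U ∧ U.Nonempty) ∧
      C.PairwiseDisjoint id := by
  classical
  have key : ∀ x y : X, ∃ V W : Set X, x ≠ y →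
      V ∈ 𝓝 x ∧ W ∈ 𝓝 y ∧ Disjoint (closure V) (closure W) := by
    intro x y
    by_cases h : x = y
    · exact ⟨∅, ∅, fun h' => absurd h h'⟩
    · obtain ⟨V, hV, W, hW, hD⟩ := exists_nhds_disjoint_closure h
      exact ⟨V, W, fun _ => ⟨hV, hW, hD⟩⟩
  choose V W hVW using key
  set f : X → X → Set X := fun x y => closure (V x y) ∩ closure (W y x) with hf
  set N : X → Set X := fun x => ⋂ y ∈ A \ {x}, f x y with hN
  have hNmem : ∀ x ∈ A, N x ∈ 𝓝 x := by
    intro x hx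
    have hS : #((fun y => f x y) '' (A \ {x})) ≤ κ := by
      refine le_trans (Cardinal.mk_image_le) ?_
      rw [← hA]
      exact Cardinal.mk_le_mk_of_subset Set.diff_subset
    have := hnbhd x hx _ hS (by
      rintro U ⟨y, ⟨hyA, hyx⟩, rfl⟩
      have hxy : x ≠ y := fun h => hyx (h ▸ rfl)
      have h1 : closure (V x y) ∈ 𝓝 x :=
        mem_of_superset (hVW x y hxy).1 subset_closure
      have h2 : closure (W y x) ∈ 𝓝 x :=
        mem_of_superset (hVW y x hxy.symm).2.1 subset_closure
      exact Filter.inter_mem h1 h2)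
    rwa [Set.sInter_image] at this
  set U : X → Set X := fun x => interior (N x) with hU
  have hxU : ∀ x ∈ A, x ∈ U x := fun x hx => mem_interior_iff_mem_nhds.2 (hNmem x hx)
  have hdisj : ∀ x ∈ A, ∀ y ∈ A, x ≠ y → Disjoint (U x) (U y) := by
    intro x hx y hy hxy
    have h1 : U x ⊆ closure (V x y) := by
      refine (interior_subset).trans ?_
      intro z hz
      have := Set.mem_iInter₂.1 hz y ⟨hy, fun h => hxy (by simpa using h.symm)⟩
      exact this.1
    have h2 : U y ⊆ closure (W x y) := by
      refine (interior_subset).trans ?_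
      intro z hz
      have := Set.mem_iInter₂.1 hz x ⟨hx, fun h => hxy (by simpa using h)⟩
      exact this.2
    exact ((hVW x y hxy).2.2).mono h1 h2
  have hinj : Set.InjOn U A := by
    intro x hx y hy hUxy
    by_contra hne
    have := hdisj x hx y hy hne
    rw [hUxy] at this
    exact (Set.not_nonempty_empty) (by
      have : U y = ∅ := by simpa [disjoint_self] using this
      rw [← this]; exact ⟨y, hxU y hy⟩)
  refine ⟨U '' A, ?_, ?_, ?_⟩
  · rw [Cardinal.mk_image_eq_of_injOn U A hinj, hA]
  · rintro _ ⟨x, hx, rfl⟩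
    exact ⟨isOpen_interior, ⟨x, hxU x hx⟩⟩
  · rintro _ ⟨x, hx, rfl⟩ _ ⟨y, hy, rfl⟩ hne
    exact hdisj x hx y hy (fun h => hne (h ▸ rfl))
end
end

section
/- Let κ > ℵ₀ be a cardinal. The Banach space ℓ∞(κ) of bounded real functions on κ fails the κ⁺-SSD2P. Concretely, taking the set of Dirac evaluations {δ_μ : μ < κ} ⊂ S_{ℓ∞(κ)*} of cardinality κ, there do not exist {f_μ : μ < κ} and g in B_{ℓ∞(κ)} with ‖g‖ ≥ 2/3, f_μ(μ) ≥ 2/3, and ‖f_μ ± g‖ ≤ 1 for all μ < κ. -/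
open Cardinal Metric Filter Topology NormedSpace
open scoped ENNReal
universe u
noncomputable section

/-- For `κ > ℵ₀`, `ℓ∞(κ)` fails the `κ⁺`-SSD2P; concretely, there are no `{f_μ} ⊆ B` and
`g ∈ B` with `‖g‖ ≥ 2/3`, `f_μ(μ) ≥ 2/3` and `‖f_μ ± g‖ ≤ 1` for all `μ < κ`. -/
theorem linf_fails_succ_SSD2P {ι : Type u} (κ : Cardinal.{u}) (hκ : ℵ₀ < κ) (hι : #ι = κ) :
    ¬ SSD2P (Order.succ κ) (lp (fun _ : ι => ℝ) ∞) ∧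
    ¬ ∃ (f : ι → lp (fun _ : ι => ℝ) ∞) (g : lp (fun _ : ι => ℝ) ∞),
      (∀ μ : ι, f μ ∈ closedBall (0 : lp (fun _ : ι => ℝ) ∞) 1) ∧
      g ∈ closedBall (0 : lp (fun _ : ι => ℝ) ∞) 1 ∧ 2 / 3 ≤ ‖g‖ ∧
      ∀ μ : ι, 2 / 3 ≤ f μ μ ∧ ‖f μ + g‖ ≤ 1 ∧ ‖f μ - g‖ ≤ 1 := by
  have hne : Nonempty ι := by
    rw [← Cardinal.mk_ne_zero_iff, hι]
    exact (aleph0_pos.trans hκ).ne'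
  have key : ¬ ∃ (f : ι → lp (fun _ : ι => ℝ) ∞) (g : lp (fun _ : ι => ℝ) ∞),
      (∀ μ : ι, f μ ∈ closedBall (0 : lp (fun _ : ι => ℝ) ∞) 1) ∧
      g ∈ closedBall (0 : lp (fun _ : ι => ℝ) ∞) 1 ∧ 2 / 3 ≤ ‖g‖ ∧
      ∀ μ : ι, 2 / 3 ≤ f μ μ ∧ ‖f μ + g‖ ≤ 1 ∧ ‖f μ - g‖ ≤ 1 := by
    rintro ⟨f, g, hf, hg, hgn, h⟩
    obtain ⟨μ, hμ⟩ : ∃ μ, 1/3 < ‖g μ‖ := by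
      by_contra hc
      push_neg at hc
      have : ‖g‖ ≤ 1/3 := by
        rw [lp.norm_eq_ciSup]
        exact ciSup_le hc
      linarith
    obtain ⟨h1, h2, h3⟩ := h μ
    have ha := (lp.norm_apply_le_norm ENNReal.top_ne_zero (f μ + g) μ).trans h2
    have hb := (lp.norm_apply_le_norm ENNReal.top_ne_zero (f μ - g) μ).trans h3
    rw [lp.coeFn_add] at ha
    rw [lp.coeFn_sub] at hb
    simp only [Pi.add_apply, Pi.sub_apply, Real.norm_eq_abs] at ha hb hμ
    rcases abs_cases (g μ) with ⟨he, _⟩ | ⟨he, _⟩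
    · rw [abs_le] at ha; linarith
    · rw [abs_le] at hb; linarith
  refine ⟨fun hS => key ?_, key⟩
  -- Dirac functionals
  classical
  set X := lp (fun _ : ι => ℝ) ∞ with hX
  have hle : ∀ μ : ι, ∀ x : X, ‖x μ‖ ≤ 1 * ‖x‖ := fun μ x => by
    rw [one_mul]; exact lp.norm_apply_le_norm ENNReal.top_ne_zero x μ
  let δ : ι → StrongDual ℝ X := fun μ =>
    LinearMap.mkContinuous
      { toFun := fun x : X => x μ
        map_add' := fun x y => congrFun (lp.coeFn_add x y) μ
        map_smul' := fun c x => congrFun (lp.coeFn_smul c x) μ } 1 (hle _)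
  have hδ : ∀ μ x, δ μ x = x μ := fun _ _ => rfl
  have hone : ∀ μ : ι, ‖δ μ‖ = 1 := by
    intro μ
    refine le_antisymm (LinearMap.mkContinuous_norm_le _ zero_le_one _) ?_
    have hsn : ‖lp.single (E := fun _ : ι => ℝ) ∞ μ (1 : ℝ)‖ ≤ 1 := by
      rw [lp.norm_eq_ciSup]
      refine ciSup_le fun i => ?_
      rcases eq_or_ne i μ with rfl | hi
      · rw [lp.single_apply_self]; simp
      · rw [lp.single_apply_ne _ _ _ hi]; simp
    have := (δ μ).le_opNorm (lp.single (E := fun _ : ι => ℝ) ∞ μ (1 : ℝ))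
    rw [hδ, lp.single_apply_self] at this
    simp only [norm_one] at this
    nlinarith [norm_nonneg (δ μ), norm_nonneg (lp.single (E := fun _ : ι => ℝ) ∞ μ (1 : ℝ))]
  obtain ⟨B, y, hB, hy, hyn, hBy, hA⟩ :=
    hS (Set.range δ) (by rintro _ ⟨μ, rfl⟩; exact hone μ)
      (lt_of_le_of_lt Cardinal.mk_range_le (hι ▸ Order.lt_succ κ)) (1/3) (by norm_num)
  choose x hxB hx using fun μ : ι => hA (δ μ) ⟨μ, rfl⟩
  refine ⟨x, y, fun μ => hB (hxB μ), hy, by linarith, fun μ => ?_⟩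
  obtain ⟨h1, h2⟩ := hBy (x μ) (hxB μ)
  rw [mem_closedBall_zero_iff] at h1 h2
  exact ⟨by have := hx μ; rw [hδ] at this; linarith, h1, h2⟩
end
end

section
/- Let κ > ℵ₀ be a cardinal. The Banach space ℓ∞(κ) has the attaining κ-SSD2P: for every set A of norm-one functionals on ℓ∞(κ) with |A| < κ there exist B ⊂ S_{ℓ∞(κ)} which norms A and y ∈ S_{ℓ∞(κ)} with f ± y ∈ S_{ℓ∞(κ)} for all f ∈ B. -/
open Cardinal Metric Filter Topology NormedSpace
open scoped ENNReal
universe u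
noncomputable section

namespace ASSD2Paux

variable {ι : Type u}

/-- Helper: a bounded function with all coordinates ≤ 1 and one coordinate of norm 1
has sup norm 1. -/
lemma norm_eq_one_of (x : lp (fun _ : ι => ℝ) ∞) (h1 : ∀ j, ‖x j‖ ≤ 1) {j0 : ι}
    (h2 : ‖x j0‖ = 1) : ‖x‖ = 1 :=
  le_antisymm (lp.norm_le_of_forall_le zero_le_one h1)
    (h2 ▸ lp.norm_apply_le_norm ENNReal.top_ne_zero x j0)

lemma sum_abs_le [DecidableEq ι] (f : StrongDual ℝ (lp (fun _ : ι => ℝ) ∞)) (s : Finset ι) :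
    ∑ i ∈ s, |f (lp.single ∞ i (1:ℝ))| ≤ ‖f‖ := by
  classical
  set c : ι → ℝ := fun i => if 0 ≤ f (lp.single ∞ i (1:ℝ)) then 1 else -1 with hc
  set x : lp (fun _ : ι => ℝ) ∞ := ∑ i ∈ s, c i • lp.single ∞ i (1:ℝ) with hx
  have hcoord : ∀ j, (x : ∀ _ : ι, ℝ) j = if j ∈ s then c j else 0 := by
    intro j
    have : (x : ∀ _ : ι, ℝ) j = ∑ i ∈ s, c i * (lp.single ∞ i (1:ℝ) : lp (fun _ : ι => ℝ) ∞) j := by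
      rw [hx, lp.coeFn_sum, Finset.sum_apply]
      refine Finset.sum_congr rfl fun i _ => ?_
      rw [lp.coeFn_smul]; rfl
    rw [this]
    rw [show (∑ i ∈ s, c i * (lp.single ∞ i (1:ℝ) : lp (fun _ : ι => ℝ) ∞) j)
        = ∑ i ∈ s, (if j = i then c i else 0) from Finset.sum_congr rfl fun i _ => by
      by_cases h : j = i
      · subst h; simp [lp.single_apply_self]
      · simp [lp.single_apply_ne _ _ _ h, h]]
    simp [Finset.sum_ite_eq]
  have hxnorm : ‖x‖ ≤ 1 := by
    refine lp.norm_le_of_forall_le zero_le_one fun j => ?_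
    rw [hcoord j]
    by_cases h : j ∈ s
    · simp only [h, if_true, hc]
      by_cases h' : 0 ≤ f (lp.single ∞ j (1:ℝ)) <;> simp [h']
    · simp [h]
  have hfx : f x = ∑ i ∈ s, |f (lp.single ∞ i (1:ℝ))| := by
    rw [hx, map_sum]
    refine Finset.sum_congr rfl fun i _ => ?_
    rw [map_smul, smul_eq_mul, hc]
    by_cases h' : 0 ≤ f (lp.single ∞ i (1:ℝ))
    · simp [h', abs_of_nonneg h']
    · simp [h', abs_of_neg (lt_of_not_ge h')]
  calc ∑ i ∈ s, |f (lp.single ∞ i (1:ℝ))| = f x := hfx.symm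
    _ ≤ ‖f x‖ := le_abs_self _
    _ ≤ ‖f‖ * ‖x‖ := f.le_opNorm x
    _ ≤ ‖f‖ * 1 := by
      have := norm_nonneg f
      nlinarith [hxnorm, f.le_opNorm x]
    _ = ‖f‖ := mul_one _

lemma countable_support [DecidableEq ι] (f : StrongDual ℝ (lp (fun _ : ι => ℝ) ∞)) :
    {i : ι | f (lp.single ∞ i (1:ℝ)) ≠ 0}.Countable := by
  have hsum : Summable (fun i : ι => |f (lp.single ∞ i (1:ℝ))|) :=
    summable_of_sum_le (fun i => abs_nonneg _) (sum_abs_le f)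
  have := hsum.countable_support
  refine this.mono ?_
  intro i hi
  simp only [Function.mem_support, ne_eq, abs_eq_zero]
  exact hi

end ASSD2Paux

/-- For `κ > ℵ₀`, the space `ℓ∞(κ)` has the attaining `κ`-SSD2P. -/
theorem linf_ASSD2P {ι : Type u} (κ : Cardinal.{u}) (hκ : ℵ₀ < κ) (hι : #ι = κ) :
    ASSD2P κ (lp (fun _ : ι => ℝ) ∞) := by
  classical
  set X := lp (fun _ : ι => ℝ) ∞ with hX
  intro A hA hAcard
  -- the exceptional set
  set S : Set ι := ⋃ f : A, {i : ι | (f : StrongDual ℝ X) (lp.single ∞ i (1:ℝ)) ≠ 0} with hS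
  have hScard : #S < κ := by
    have h1 : #S ≤ #A * ℵ₀ := by
      refine (mk_iUnion_le _).trans ?_
      gcongr
      exact ciSup_le' fun f => mk_le_aleph0_iff.2 (ASSD2Paux.countable_support (f : StrongDual ℝ X)).to_subtype
    exact h1.trans_lt (Cardinal.mul_lt_of_lt hκ.le hAcard hκ)
  have hne : S ≠ Set.univ := by
    intro h
    rw [h, Cardinal.mk_univ, hι] at hScard
    exact lt_irrefl _ hScard
  obtain ⟨μ, hμ⟩ := Set.ne_univ_iff_exists_notMem S |>.1 hne
  have hμ0 : ∀ f ∈ A, f (lp.single ∞ μ (1:ℝ)) = 0 := by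
    intro f hf
    by_contra h
    exact hμ (Set.mem_iUnion.2 ⟨⟨f, hf⟩, h⟩)
  -- a second index
  have : Infinite ι := Cardinal.infinite_iff.2 (by rw [hι]; exact hκ.le)
  obtain ⟨ν, hν⟩ := exists_ne μ
  -- the vector y and set B
  set y : X := lp.single ∞ μ (1:ℝ) with hy
  have hy1 : ∀ j, ‖(y : ∀ _ : ι, ℝ) j‖ ≤ 1 := by
    intro j
    by_cases h : j = μ
    · subst h; rw [hy, lp.single_apply_self]; norm_num
    · rw [hy, lp.single_apply_ne _ _ _ h]; norm_num
  have hynorm : ‖y‖ = 1 := by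
    refine ASSD2Paux.norm_eq_one_of y hy1 (j0 := μ) ?_
    rw [hy, lp.single_apply_self]; norm_num
  set B : Set X := {x : X | ‖x‖ = 1 ∧ (x : ∀ _ : ι, ℝ) μ = 0} with hB
  refine ⟨B, y, ?_, ?_, ?_, ?_⟩
  · intro x hx
    rw [mem_sphere_zero_iff_norm]
    exact hx.1
  · rw [mem_sphere_zero_iff_norm]; exact hynorm
  · rintro x ⟨hx1, hx2⟩
    constructor
    · rw [mem_sphere_zero_iff_norm]
      refine ASSD2Paux.norm_eq_one_of _ (fun j => ?_) (j0 := μ) ?_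
      · rw [lp.coeFn_add, Pi.add_apply]
        by_cases h : j = μ
        · subst h; rw [hx2, hy, lp.single_apply_self]; norm_num
        · rw [hy, lp.single_apply_ne _ _ _ h, add_zero]
          exact (lp.norm_apply_le_norm ENNReal.top_ne_zero x j).trans_eq hx1
      · rw [lp.coeFn_add, Pi.add_apply, hx2, hy, lp.single_apply_self]; norm_num
    · rw [mem_sphere_zero_iff_norm]
      refine ASSD2Paux.norm_eq_one_of _ (fun j => ?_) (j0 := μ) ?_
      · rw [lp.coeFn_sub, Pi.sub_apply]
        by_cases h : j = μ
        · subst h; rw [hx2, hy, lp.single_apply_self]; norm_num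
        · rw [hy, lp.single_apply_ne _ _ _ h, sub_zero]
          exact (lp.norm_apply_le_norm ENNReal.top_ne_zero x j).trans_eq hx1
      · rw [lp.coeFn_sub, Pi.sub_apply, hx2, hy, lp.single_apply_self]; norm_num
  · -- norming part
    intro f hf r hr
    have hrf : r < ‖f‖ := by rw [hA f hf]; exact hr.2
    obtain ⟨z, hz, hrz⟩ := f.exists_lt_apply_of_lt_opNorm hrf
    -- replace z by ±z so that f z' > r
    set z' : X := if 0 ≤ f z then z else -z with hz'
    have hz'norm : ‖z'‖ < 1 := by
      rw [hz']; split
      · exact hz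
      · rw [norm_neg]; exact hz
    have hfz' : r < f z' := by
      rw [hz']
      split
      · exact lt_of_lt_of_le hrz (by rwa [Real.norm_eq_abs, abs_of_nonneg])
      · rw [map_neg]
        refine lt_of_lt_of_le hrz ?_
        rw [Real.norm_eq_abs, abs_of_neg (lt_of_not_ge (by assumption))]
    set t : ℝ := if 0 ≤ f (lp.single ∞ ν (1:ℝ)) then 1 else -1 with ht
    set x : X := z' - (z' : ∀ _ : ι, ℝ) μ • lp.single ∞ μ (1:ℝ)
        + (t - (z' : ∀ _ : ι, ℝ) ν) • lp.single ∞ ν (1:ℝ) with hxdef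
    have habs : |t| = 1 := by rw [ht]; split <;> norm_num
    have hcoord : ∀ j, (x : ∀ _ : ι, ℝ) j =
        if j = ν then t else if j = μ then 0 else (z' : ∀ _ : ι, ℝ) j := by
      intro j
      rw [hxdef, lp.coeFn_add, lp.coeFn_sub, Pi.add_apply, Pi.sub_apply,
        lp.coeFn_smul, lp.coeFn_smul, Pi.smul_apply, Pi.smul_apply, smul_eq_mul, smul_eq_mul]
      by_cases h1 : j = ν
      · subst h1
        rw [lp.single_apply_self, lp.single_apply_ne _ _ _ hν, if_pos rfl]
        ring
      · rw [lp.single_apply_ne _ _ _ h1, if_neg h1]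
        by_cases h2 : j = μ
        · subst h2
          rw [lp.single_apply_self, if_pos rfl]
          ring
        · rw [lp.single_apply_ne _ _ _ h2, if_neg h2]
          ring
    have hzj : ∀ j, ‖(z' : ∀ _ : ι, ℝ) j‖ ≤ 1 :=
      fun j => (lp.norm_apply_le_norm ENNReal.top_ne_zero z' j).trans hz'norm.le
    have hxnorm : ‖x‖ = 1 := by
      refine ASSD2Paux.norm_eq_one_of x (fun j => ?_) (j0 := ν) ?_
      · rw [hcoord j]
        by_cases h1 : j = ν
        · rw [if_pos h1, Real.norm_eq_abs, habs]
        · rw [if_neg h1]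
          by_cases h2 : j = μ
          · rw [if_pos h2]; norm_num
          · rw [if_neg h2]; exact hzj j
      · rw [hcoord ν, if_pos rfl, Real.norm_eq_abs, habs]
    have hxμ : (x : ∀ _ : ι, ℝ) μ = 0 := by
      rw [hcoord μ, if_neg (Ne.symm hν), if_pos rfl]
    refine ⟨x, ⟨hxnorm, hxμ⟩, ?_⟩
    have hfx : f x = f z' + (t - (z' : ∀ _ : ι, ℝ) ν) * f (lp.single ∞ ν (1:ℝ)) := by
      rw [hxdef, map_add, map_sub, map_smul, map_smul, smul_eq_mul, smul_eq_mul,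
        hμ0 f hf, mul_zero, sub_zero]
    have hzν : |(z' : ∀ _ : ι, ℝ) ν| ≤ 1 := by
      have := hzj ν; rwa [Real.norm_eq_abs] at this
    have hnn : 0 ≤ (t - (z' : ∀ _ : ι, ℝ) ν) * f (lp.single ∞ ν (1:ℝ)) := by
      rw [ht]
      by_cases h : 0 ≤ f (lp.single ∞ ν (1:ℝ))
      · rw [if_pos h]
        refine mul_nonneg ?_ h
        nlinarith [abs_le.1 hzν]
      · rw [if_neg h]
        have h' : f (lp.single ∞ ν (1:ℝ)) ≤ 0 := le_of_not_ge h
        nlinarith [abs_le.1 hzν]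
    rw [hfx]
    linarith
end
end
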